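/- arXiv:1203.2494 — 11 statements merged into one kernel-verified Lean document; each statement's English description precedes it below -/
import Mathlib

section
/- Let γ > 0, c > 0 and z > 0. Let ν̂ be the measure on (0,∞) with density h ↦ c·h^{-1-γ} with respect to Lebesgue measure. Then the pushforward of ν̂ under the map φ_z : h ↦ h/(h+z) is the measure on (0,1) with density r ↦ c·z^{-γ}·r^{-1-γ}(1-r)^{γ-1} with respect to Lebesgue measure. In particular, for α ∈ (0,2) the pushforward of c·h^{-1-α}dh under φ_z equals z^{-α} times the measure r^{-2}·c·Beta(2-α,α)(dr), and for α' ∈ (0,1) the pushforward of c'·h^{-1-α'}dh under φ_z equals z^{-α'} times the measure r^{-1}·c'·Beta(1-α',α')(dr). -/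
open MeasureTheory Real Set

lemma map_withDensity_comp {α β : Type*} [MeasurableSpace α] [MeasurableSpace β]
    {f : α → β} (hf : Measurable f) {g : β → ENNReal} (hg : Measurable g) (μ : Measure α) :
    Measure.map f (μ.withDensity (g ∘ f)) = (Measure.map f μ).withDensity g := by
  ext s hs
  rw [Measure.map_apply hf hs, withDensity_apply _ (hf hs), withDensity_apply _ hs,
    setLIntegral_map hs hg hf]
  rfl

lemma key (γ c z : ℝ) (hγ : 0 < γ) (hc : 0 < c) (hz : 0 < z) :
    Measure.map (fun h : ℝ => h / (h + z))
        ((volume.restrict (Ioi (0:ℝ))).withDensity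
          fun h => ENNReal.ofReal (c * h ^ (-1 - γ))) =
      (volume.restrict (Ioo (0:ℝ) 1)).withDensity
        fun r => ENNReal.ofReal (c * z ^ (-γ) * r ^ (-1 - γ) * (1 - r) ^ (γ - 1)) := by
  set φ : ℝ → ℝ := fun h => h / (h + z) with hφ
  set ψ : ℝ → ℝ := fun r => z * r / (1 - r) with hψ
  have hφm : Measurable φ := by fun_prop
  have hψm : Measurable ψ := (measurable_const.mul measurable_id).div
    (measurable_const.sub measurable_id)
  have hcomp : ∀ r ∈ Ioo (0:ℝ) 1, φ (ψ r) = r := by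
    intro r hr
    have h1 : (1:ℝ) - r ≠ 0 := by simp only [sub_ne_zero]; exact ne_of_gt hr.2
    have h2 : z * r / (1 - r) + z = z / (1 - r) := by field_simp; ring
    simp only [hφ, hψ, h2]
    rw [div_div_div_eq]
    field_simp
  have hψpos : ∀ r ∈ Ioo (0:ℝ) 1, 0 < ψ r := fun r hr =>
    div_pos (mul_pos hz hr.1) (by linarith [hr.2])
  have hinj : InjOn ψ (Ioo (0:ℝ) 1) := fun r hr r' hr' h => by
    rw [← hcomp r hr, ← hcomp r' hr', h]
  have himg : ψ '' Ioo (0:ℝ) 1 = Ioi (0:ℝ) := by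
    apply Subset.antisymm
    · rintro x ⟨r, hr, rfl⟩; exact hψpos r hr
    · intro h hh
      refine ⟨h / (h + z), ⟨div_pos hh (by linarith [mem_Ioi.mp hh]), ?_⟩, ?_⟩
      · rw [div_lt_one (by linarith [mem_Ioi.mp hh])]; linarith
      · have hhz : h + z ≠ 0 := by have := mem_Ioi.mp hh; positivity
        simp only [hψ]
        rw [show (1:ℝ) - h / (h + z) = z / (h + z) by field_simp; ring]
        field_simp
  have hderiv : ∀ r ∈ Ioo (0:ℝ) 1, HasDerivWithinAt ψ (z / (1 - r)^2) (Ioo (0:ℝ) 1) r := by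
    intro r hr
    have h1 : (1:ℝ) - r ≠ 0 := by simp only [sub_ne_zero]; exact ne_of_gt hr.2
    have : HasDerivAt ψ ((z * 1 * (1 - r) - z * r * (-1)) / (1 - r)^2) r :=
      ((hasDerivAt_id r).const_mul z).div ((hasDerivAt_id r).const_sub 1) h1
    exact this.hasDerivWithinAt.congr_deriv (by congr 1; ring)
  -- Jacobian step
  have step1 : Measure.map ψ ((volume.restrict (Ioo (0:ℝ) 1)).withDensity
      fun r => ENNReal.ofReal |z / (1 - r)^2|) = volume.restrict (Ioi (0:ℝ)) := by
    have := map_withDensity_abs_det_fderiv_eq_addHaar volume measurableSet_Ioo.nullMeasurableSet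
      (f' := fun r : ℝ => (1 : ℝ →L[ℝ] ℝ).smulRight (z / (1 - r)^2))
      (fun x hx => (hderiv x hx).hasFDerivWithinAt) hinj
    simpa [ContinuousLinearMap.smulRight_one_eq_toSpanSingleton, ContinuousLinearMap.det_toSpanSingleton, himg] using this
  have hgm : Measurable fun h : ℝ => ENNReal.ofReal (c * h ^ (-1 - γ)) := by fun_prop
  have hJm : Measurable fun r : ℝ => ENNReal.ofReal |z / (1 - r)^2| := by
    apply Measurable.ennreal_ofReal
    exact (measurable_const.div ((measurable_const.sub measurable_id).pow_const 2)).abs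
  have hdens : ∀ r ∈ Ioo (0:ℝ) 1,
      ENNReal.ofReal (c * z ^ (-γ) * r ^ (-1 - γ) * (1 - r) ^ (γ - 1)) =
      (ENNReal.ofReal |z / (1 - r)^2| * ENNReal.ofReal (c * (ψ r) ^ (-1 - γ))) := by
    intro r hr
    have hr0 : (0:ℝ) < r := hr.1
    have hu : (0:ℝ) < 1 - r := by linarith [hr.2]
    rw [abs_of_pos (by positivity), ← ENNReal.ofReal_mul (by positivity)]
    congr 1
    have hpsi : ψ r ^ (-1 - γ) = z ^ (-1 - γ) * r ^ (-1 - γ) * (1 - r) ^ (1 + γ) := by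
      simp only [hψ]
      rw [Real.div_rpow (by positivity) hu.le, Real.mul_rpow hz.le hr0.le,
        show (-1 - γ : ℝ) = -(1 + γ) by ring, Real.rpow_neg hu.le, div_eq_mul_inv, inv_inv]
    have hz1 : z * z ^ (-1 - γ) = z ^ (-γ) := by
      nth_rewrite 1 [← Real.rpow_one z]
      rw [← Real.rpow_add hz]
      congr 1
      ring
    have hu1 : (1 - r) ^ (1 + γ) / (1 - r)^2 = (1 - r) ^ (γ - 1) := by
      rw [show ((1 - r)^2 : ℝ) = (1 - r) ^ (2:ℝ) by
        rw [← Real.rpow_natCast (1 - r) 2]; norm_num, ← Real.rpow_sub hu]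
      congr 1
      ring
    rw [hpsi, show z / (1 - r)^2 * (c * (z ^ (-1 - γ) * r ^ (-1 - γ) * (1 - r) ^ (1 + γ)))
      = c * (z * z ^ (-1 - γ)) * r ^ (-1 - γ) * ((1 - r) ^ (1 + γ) / (1 - r)^2) by ring,
      hz1, hu1]
  have T_eq : (volume.restrict (Ioo (0:ℝ) 1)).withDensity
        (fun r => ENNReal.ofReal (c * z ^ (-γ) * r ^ (-1 - γ) * (1 - r) ^ (γ - 1)))
      = ((volume.restrict (Ioo (0:ℝ) 1)).withDensity
          (fun r => ENNReal.ofReal |z / (1 - r)^2|)).withDensity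
          ((fun h => ENNReal.ofReal (c * h ^ (-1 - γ))) ∘ ψ) := by
    rw [← withDensity_mul _ hJm (hgm.comp hψm)]
    exact withDensity_congr_ae (ae_restrict_of_forall_mem measurableSet_Ioo hdens)
  have hmapψ : Measure.map ψ ((volume.restrict (Ioo (0:ℝ) 1)).withDensity
        (fun r => ENNReal.ofReal (c * z ^ (-γ) * r ^ (-1 - γ) * (1 - r) ^ (γ - 1))))
      = (volume.restrict (Ioi (0:ℝ))).withDensity
          (fun h => ENNReal.ofReal (c * h ^ (-1 - γ))) := by
    rw [T_eq, map_withDensity_comp hψm hgm, step1]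
  calc Measure.map φ ((volume.restrict (Ioi (0:ℝ))).withDensity
          fun h => ENNReal.ofReal (c * h ^ (-1 - γ)))
      = Measure.map (φ ∘ ψ) ((volume.restrict (Ioo (0:ℝ) 1)).withDensity
          fun r => ENNReal.ofReal (c * z ^ (-γ) * r ^ (-1 - γ) * (1 - r) ^ (γ - 1))) := by
        rw [← hmapψ, Measure.map_map hφm hψm]
    _ = Measure.map id ((volume.restrict (Ioo (0:ℝ) 1)).withDensity
          fun r => ENNReal.ofReal (c * z ^ (-γ) * r ^ (-1 - γ) * (1 - r) ^ (γ - 1))) := by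
        apply Measure.map_congr
        exact (withDensity_absolutelyContinuous _ _).ae_eq
          (ae_restrict_of_forall_mem measurableSet_Ioo (fun r hr => hcomp r hr))
    _ = _ := Measure.map_id

/-- The pushforward of the stable Lévy measure `c·h^{-1-γ} dh` on `(0,∞)` under
`φ_z : h ↦ h/(h+z)` is `c·z^{-γ}·r^{-1-γ}(1-r)^{γ-1} dr` on `(0,1)`; in particular it is
`z^{-α}` times `r^{-2}·c·Beta(2-α,α)(dr)` for `α ∈ (0,2)`, and `z^{-α'}` times
`r^{-1}·c'·Beta(1-α',α')(dr)` for `α' ∈ (0,1)`. -/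
theorem stmt0 (γ c z : ℝ) (hγ : 0 < γ) (hc : 0 < c) (hz : 0 < z) :
    (Measure.map (fun h : ℝ => h / (h + z))
        ((volume.restrict (Ioi (0:ℝ))).withDensity
          fun h => ENNReal.ofReal (c * h ^ (-1 - γ))) =
      (volume.restrict (Ioo (0:ℝ) 1)).withDensity
        fun r => ENNReal.ofReal (c * z ^ (-γ) * r ^ (-1 - γ) * (1 - r) ^ (γ - 1)))
    ∧ (∀ α ∈ Ioo (0:ℝ) 2,
        Measure.map (fun h : ℝ => h / (h + z))
          ((volume.restrict (Ioi (0:ℝ))).withDensity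
            fun h => ENNReal.ofReal (c * h ^ (-1 - α))) =
        ENNReal.ofReal (z ^ (-α)) •
          (volume.restrict (Ioo (0:ℝ) 1)).withDensity
            fun r => ENNReal.ofReal (r ^ (-2 : ℝ) *
              (c * r ^ ((2 - α) - 1) * (1 - r) ^ (α - 1))))
    ∧ (∀ α' ∈ Ioo (0:ℝ) 1, ∀ c' : ℝ, 0 < c' →
        Measure.map (fun h : ℝ => h / (h + z))
          ((volume.restrict (Ioi (0:ℝ))).withDensity
            fun h => ENNReal.ofReal (c' * h ^ (-1 - α'))) =
        ENNReal.ofReal (z ^ (-α')) •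
          (volume.restrict (Ioo (0:ℝ) 1)).withDensity
            fun r => ENNReal.ofReal (r ^ (-1 : ℝ) *
              (c' * r ^ ((1 - α') - 1) * (1 - r) ^ (α' - 1)))) := by
  refine ⟨key γ c z hγ hc hz, ?_, ?_⟩
  · intro α hα
    rw [key α c z hα.1 hc hz, ← withDensity_smul' _ _ ENNReal.ofReal_ne_top]
    apply withDensity_congr_ae
    refine ae_restrict_of_forall_mem measurableSet_Ioo (fun r hr => ?_)
    have hr0 : (0:ℝ) < r := hr.1
    have hu : (0:ℝ) < 1 - r := by linarith [hr.2]
    have hrr : r ^ (-2:ℝ) * r ^ ((2 - α) - 1) = r ^ (-1 - α) := by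
      rw [← Real.rpow_add hr0]
      congr 1
      ring
    show ENNReal.ofReal (c * z ^ (-α) * r ^ (-1 - α) * (1 - r) ^ (α - 1))
      = ENNReal.ofReal (z ^ (-α)) * ENNReal.ofReal
          (r ^ (-2:ℝ) * (c * r ^ ((2 - α) - 1) * (1 - r) ^ (α - 1)))
    rw [← ENNReal.ofReal_mul (by positivity)]
    congr 1
    rw [show z ^ (-α) * (r ^ (-2:ℝ) * (c * r ^ ((2 - α) - 1) * (1 - r) ^ (α - 1)))
      = z ^ (-α) * c * (r ^ (-2:ℝ) * r ^ ((2 - α) - 1)) * (1 - r) ^ (α - 1) by ring, hrr]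
    ring
  · intro α' hα' c' hc'
    rw [key α' c' z hα'.1 hc' hz, ← withDensity_smul' _ _ ENNReal.ofReal_ne_top]
    apply withDensity_congr_ae
    refine ae_restrict_of_forall_mem measurableSet_Ioo (fun r hr => ?_)
    have hr0 : (0:ℝ) < r := hr.1
    have hu : (0:ℝ) < 1 - r := by linarith [hr.2]
    have hrr : r ^ (-1:ℝ) * r ^ ((1 - α') - 1) = r ^ (-1 - α') := by
      rw [← Real.rpow_add hr0]
      congr 1
      ring
    show ENNReal.ofReal (c' * z ^ (-α') * r ^ (-1 - α') * (1 - r) ^ (α' - 1))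
      = ENNReal.ofReal (z ^ (-α')) * ENNReal.ofReal
          (r ^ (-1:ℝ) * (c' * r ^ ((1 - α') - 1) * (1 - r) ^ (α' - 1)))
    rw [← ENNReal.ofReal_mul (by positivity)]
    congr 1
    rw [show z ^ (-α') * (r ^ (-1:ℝ) * (c' * r ^ ((1 - α') - 1) * (1 - r) ^ (α' - 1)))
      = z ^ (-α') * c' * (r ^ (-1:ℝ) * r ^ ((1 - α') - 1)) * (1 - r) ^ (α' - 1) by ring, hrr]
    ring
end

section
/- Let ν̂ be a nonzero σ-finite measure on (0,∞) with ∫₀^∞ (1 ∧ h²) ν̂(dh) < ∞. Suppose there exist a σ-finite measure ν on (0,1) and a function s : (0,∞) → (0,∞) such that for every z > 0 the pushforward of ν̂ under the map h ↦ h/(h+z) equals s(z)·ν. Then there exist constants c > 0 and α ∈ (0,2) such that ν̂ has density h ↦ c·h^{-1-α} with respect to Lebesgue measure on (0,∞). -/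
open MeasureTheory Real Set

private lemma aux_eq_top_of_forall_ofReal_le {x : ENNReal} (h : ∀ r : ℝ, ENNReal.ofReal r ≤ x) :
    x = ⊤ := by
  by_contra hx
  have h1 := h (x.toReal + 1)
  have h2 : x < ENNReal.ofReal (x.toReal + 1) := by
    rw [ENNReal.lt_ofReal_iff_toReal_lt hx]; linarith
  exact absurd h1 (not_le.mpr h2)

private lemma aux_linear (u : ℝ → ℝ) (hadd : ∀ a b, u (a + b) = u a + u b)
    (hanti : Antitone u) : ∀ t, u t = t * u 1 := by
  have hu0 : u 0 = 0 := by have := hadd 0 0; simp at this; linarith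
  set f : ℝ →+ ℝ := AddMonoidHom.mk' u (fun a b => hadd a b) with hf
  have hq : ∀ q : ℚ, u (q : ℝ) = (q : ℝ) * u 1 := by
    intro q
    have h := f.toRatLinearMap.map_smul q (1 : ℝ)
    simp only [AddMonoidHom.coe_toRatLinearMap, Rat.smul_def, mul_one] at h
    simpa [hf, AddMonoidHom.mk'] using h
  have hu1 : u 1 ≤ 0 := by
    have := hanti (le_of_lt one_pos : (0:ℝ) ≤ 1)
    simpa [hu0] using this
  intro t
  have hge : t * u 1 ≤ u t := by
    refine le_of_forall_pos_le_add ?_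
    intro ε hε
    set d : ℝ := ε / (1 - u 1) with hd
    have hd0 : 0 < d := div_pos hε (by linarith)
    obtain ⟨q, hq1, hq2⟩ := exists_rat_btwn (show t < t + d by linarith)
    have h1 : u (q : ℝ) ≤ u t := hanti (le_of_lt hq1)
    have h2 : u (q : ℝ) = (q : ℝ) * u 1 := hq q
    have hde : d * (1 - u 1) = ε := div_mul_cancel₀ ε (by linarith)
    nlinarith [mul_nonneg (show (0:ℝ) ≤ d - ((q:ℝ) - t) by linarith) (show (0:ℝ) ≤ -u 1 by linarith)]
  have hle : u t ≤ t * u 1 := by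
    refine le_of_forall_pos_le_add ?_
    intro ε hε
    set d : ℝ := ε / (1 - u 1) with hd
    have hd0 : 0 < d := div_pos hε (by linarith)
    obtain ⟨q, hq1, hq2⟩ := exists_rat_btwn (show t - d < t by linarith)
    have h1 : u t ≤ u (q : ℝ) := hanti (le_of_lt hq2)
    have h2 : u (q : ℝ) = (q : ℝ) * u 1 := hq q
    have hde : d * (1 - u 1) = ε := div_mul_cancel₀ ε (by linarith)
    nlinarith [mul_nonneg (show (0:ℝ) ≤ d - (t - (q:ℝ)) by linarith) (show (0:ℝ) ≤ -u 1 by linarith)]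
  linarith

private lemma aux_power (T : ℝ → ℝ) (hpos : ∀ x, 0 < x → 0 < T x)
    (hmul : ∀ x, 0 < x → ∀ z, 0 < z → T (z * x) = T z * T x)
    (hanti : ∀ x y, 0 < x → x ≤ y → T y ≤ T x) :
    ∃ β : ℝ, β ≤ 0 ∧ ∀ x, 0 < x → T x = x ^ β := by
  set u : ℝ → ℝ := fun t => Real.log (T (Real.exp t)) with hu
  have hadd : ∀ a b, u (a + b) = u a + u b := by
    intro a b
    have h1 : T (Real.exp (a + b)) = T (Real.exp a) * T (Real.exp b) := by
      rw [Real.exp_add]; exact hmul _ (Real.exp_pos b) _ (Real.exp_pos a)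
    simp only [hu]
    rw [h1, Real.log_mul (ne_of_gt (hpos _ (Real.exp_pos a)))
      (ne_of_gt (hpos _ (Real.exp_pos b)))]
  have hantiu : Antitone u := by
    intro a b hab
    exact Real.log_le_log (hpos _ (Real.exp_pos b))
      (hanti _ _ (Real.exp_pos a) (Real.exp_le_exp.mpr hab))
  have hlin := aux_linear u hadd hantiu
  refine ⟨u 1, ?_, ?_⟩
  · have h0 : u 0 = 0 := by rw [hlin 0]; ring
    have := hantiu (le_of_lt one_pos : (0:ℝ) ≤ 1)
    linarith [this, h0.symm ▸ this]
  · intro x hx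
    have h1 : Real.log (T x) = Real.log x * u 1 := by
      have := hlin (Real.log x)
      simpa [hu, Real.exp_log hx] using this
    rw [Real.rpow_def_of_pos hx, ← h1, Real.exp_log (hpos x hx)]



private lemma aux_low (μ : Measure ℝ) (f : ℝ → ENNReal)
    (hfdef : f = fun h => ENNReal.ofReal (min 1 (h ^ 2)))
    (hfm : Measurable f) (a b : ℝ) (ha : 0 < a) (hab : a ≤ b) (hb1 : b ≤ 1) :
    ENNReal.ofReal (a ^ 2) * μ (Ioc a b) ≤ ∫⁻ x in Ioc a b, f x ∂μ := by
  have hconst : ∫⁻ _x in Ioc a b, ENNReal.ofReal (a ^ 2) ∂μ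
      = ENNReal.ofReal (a ^ 2) * μ (Ioc a b) := setLIntegral_const _ _
  rw [← hconst]
  refine setLIntegral_mono hfm fun x hx => ?_
  obtain ⟨hx1, hx2⟩ := hx
  rw [hfdef]
  refine ENNReal.ofReal_le_ofReal (le_min (by nlinarith) ?_)
  nlinarith

private def auxB : ℕ → Set ℝ := fun n =>
  if Even n then Ioc (-(n:ℝ) - 1) 0 else Ioc (1 / ((n:ℝ) + 2)) ((n:ℝ) + 2)

private lemma auxB_cover : ⋃ n, auxB n = univ := by
  ext x
  simp only [mem_iUnion, mem_univ, iff_true]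
  rcases le_or_gt x 0 with hx | hx
  · obtain ⟨m, hm⟩ := exists_nat_gt (-x)
    refine ⟨2 * m, ?_⟩
    have heven : Even (2 * m) := even_two_mul m
    simp only [auxB, if_pos heven, mem_Ioc]
    constructor
    · push_cast; linarith
    · exact hx
  · obtain ⟨m, hm⟩ := exists_nat_gt (max x x⁻¹)
    have hm1 : x < (m:ℝ) := lt_of_le_of_lt (le_max_left _ _) hm
    have hm2 : x⁻¹ < (m:ℝ) := lt_of_le_of_lt (le_max_right _ _) hm
    refine ⟨2 * m + 1, ?_⟩
    have hodd : ¬Even (2 * m + 1) := by simp [Nat.even_add_one, parity_simps]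
    simp only [auxB, if_neg hodd, mem_Ioc]
    have hc : ((2 * m + 1 : ℕ) : ℝ) = 2 * (m:ℝ) + 1 := by push_cast; ring
    rw [hc]
    have hmpos : (0:ℝ) < (m:ℝ) := lt_trans (inv_pos.mpr hx) hm2
    have h1m : 1 < x * (m:ℝ) := by
      have h := mul_lt_mul_of_pos_left hm2 hx
      rwa [mul_inv_cancel₀ (ne_of_gt hx)] at h
    constructor
    · rw [div_lt_iff₀ (by linarith)]
      nlinarith [mul_le_mul_of_nonneg_left (show (m:ℝ) ≤ 2 * (m:ℝ) + 1 + 2 by linarith) hx.le]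
    · linarith

private lemma auxB_mem : ∀ n, auxB n ∈ {S : Set ℝ | ∃ l u, l < u ∧ Ioc l u = S} := by
  intro n
  by_cases he : Even n
  · refine ⟨-(n:ℝ) - 1, 0, by linarith [Nat.cast_nonneg (α := ℝ) n], ?_⟩
    simp only [auxB, if_pos he]
  · refine ⟨1 / ((n:ℝ) + 2), (n:ℝ) + 2, ?_, ?_⟩
    · have h2 : (2:ℝ) ≤ (n:ℝ) + 2 := by linarith [Nat.cast_nonneg (α := ℝ) n]
      have h3 := one_div_le_one_div_of_le two_pos h2
      norm_num at h3 ⊢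
      linarith
    · simp only [auxB, if_neg he]

/-- Necessity part of Lemma 5.4: if a Lévy measure `ν̂` on `(0,∞)` with
`∫ (1 ∧ h²) ν̂(dh) < ∞` is such that all its pushforwards under `h ↦ h/(h+z)`, `z > 0`,
factor as `s(z)·ν` for a fixed measure `ν` on `(0,1)`, then `ν̂(dh) = c·h^{-1-α} dh`
for some `c > 0` and `α ∈ (0,2)`. -/
theorem stmt1 (μ : Measure ℝ) [SigmaFinite μ] (hμ0 : μ ≠ 0)
    (hcar : μ (Ioi (0:ℝ))ᶜ = 0)
    (hint : ∫⁻ h, ENNReal.ofReal (min 1 (h ^ 2)) ∂μ < ⊤)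
    (hfac : ∃ ν : Measure ℝ, SigmaFinite ν ∧ ν (Ioo (0:ℝ) 1)ᶜ = 0 ∧
      ∃ s : ℝ → ℝ, (∀ z > (0:ℝ), 0 < s z) ∧
        ∀ z > (0:ℝ),
          Measure.map (fun h : ℝ => h / (h + z)) μ = ENNReal.ofReal (s z) • ν) :
    ∃ c > (0:ℝ), ∃ α ∈ Ioo (0:ℝ) 2,
      μ = (volume.restrict (Ioi (0:ℝ))).withDensity
        fun h => ENNReal.ofReal (c * h ^ (-1 - α)) := by
  obtain ⟨ν, hνsf, hνcar, s, hs, hmap⟩ := hfac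
  have key : ∀ x, 0 < x → ∀ z, 0 < z →
      μ (Ioi x) = ENNReal.ofReal (s z) * ν (Ioi (x / (x + z))) := by
    intro x hx z hz
    have hm : Measurable fun h : ℝ => h / (h + z) :=
      measurable_id.div (measurable_id.add_const z)
    have h1 : Measure.map (fun h : ℝ => h / (h + z)) μ (Ioi (x / (x + z)))
        = ENNReal.ofReal (s z) * ν (Ioi (x / (x + z))) := by
      rw [hmap z hz]; simp [Measure.smul_apply, smul_eq_mul]
    rw [Measure.map_apply hm measurableSet_Ioi] at h1
    have hset : Ioi x = (fun h : ℝ => h / (h + z)) ⁻¹' Ioi (x / (x + z)) ∩ Ioi 0 := by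
      ext h
      simp only [mem_inter_iff, mem_preimage, mem_Ioi]
      constructor
      · intro hh
        refine ⟨?_, lt_trans hx hh⟩
        rw [div_lt_div_iff₀ (by linarith) (by linarith)]
        nlinarith
      · rintro ⟨hh1, hh2⟩
        by_contra hle
        push_neg at hle
        have : h / (h + z) ≤ x / (x + z) := by
          rw [div_le_div_iff₀ (by linarith) (by linarith)]
          nlinarith
        linarith
    rw [← h1, hset, measure_inter_conull hcar]
  have star : ∀ a, 0 < a → ∀ z, 0 < z →
      μ (Ioi (z * a)) * ENNReal.ofReal (s 1) = μ (Ioi a) * ENNReal.ofReal (s z) := by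
    intro a ha z hz
    have h1 := key (z * a) (mul_pos hz ha) z hz
    have h2 := key a ha 1 one_pos
    have he : z * a / (z * a + z) = a / (a + 1) := by
      rw [div_eq_div_iff (by positivity) (by positivity)]; ring
    rw [h1, h2, he]; ring
  set S : ℝ → ENNReal := fun z => ENNReal.ofReal (s z) with hSdef
  have hS0 : ∀ z, 0 < z → ENNReal.ofReal (s z) ≠ 0 :=
    fun z hz => (ENNReal.ofReal_pos.mpr (hs z hz)).ne'
  have g1top : μ (Ioi 1) ≠ ⊤ := by
    refine ne_top_of_le_ne_top hint.ne ?_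
    rw [← lintegral_indicator_one measurableSet_Ioi]
    refine lintegral_mono fun h => ?_
    by_cases hh : h ∈ Ioi (1:ℝ)
    · have h1 : (1:ℝ) ≤ h := le_of_lt hh
      have h2 : min 1 (h ^ 2) = 1 := min_eq_left (by nlinarith)
      simp [indicator_of_mem hh, h2]
    · simp [indicator_of_notMem hh]
  have gz_eq : ∀ z, 0 < z → μ (Ioi z) * ENNReal.ofReal (s 1) = μ (Ioi 1) * ENNReal.ofReal (s z) := by
    intro z hz; simpa using star 1 one_pos z hz
  have gtop : ∀ z, 0 < z → μ (Ioi z) ≠ ⊤ := by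
    intro z hz htop
    have h := gz_eq z hz
    rw [htop, ENNReal.top_mul (hS0 1 one_pos)] at h
    exact (ENNReal.mul_ne_top g1top ENNReal.ofReal_ne_top) h.symm
  have g1ne : μ (Ioi 1) ≠ 0 := by
    intro h0
    have hz : ∀ z, 0 < z → μ (Ioi z) = 0 := by
      intro z hz
      have h := gz_eq z hz
      rw [h0, zero_mul] at h
      exact (mul_eq_zero.mp h).resolve_right (hS0 1 one_pos)
    have hI : μ (Ioi 0) = 0 := by
      have hU : Ioi (0:ℝ) = ⋃ n : ℕ, Ioi ((n:ℝ) + 1)⁻¹ := by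
        ext h
        simp only [mem_Ioi, mem_iUnion]
        constructor
        · intro hh
          obtain ⟨n, hn⟩ := exists_nat_gt h⁻¹
          refine ⟨n, ?_⟩
          rw [inv_lt_comm₀ (by positivity) hh]
          linarith
        · rintro ⟨n, hn⟩
          exact lt_trans (by positivity) hn
      rw [hU]
      exact measure_iUnion_null fun n => hz _ (by positivity)
    apply hμ0
    rw [← Measure.measure_univ_eq_zero]
    refine le_antisymm ?_ zero_le
    calc μ univ = μ (Ioi 0 ∪ (Ioi 0)ᶜ) := by rw [union_compl_self]
    _ ≤ μ (Ioi 0) + μ (Ioi 0)ᶜ := measure_union_le _ _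
    _ = 0 := by rw [hI, hcar, add_zero]
  set G : ℝ → ℝ := fun x => (μ (Ioi x)).toReal with hGdef
  have hG1pos : 0 < G 1 := ENNReal.toReal_pos g1ne g1top
  have hGpos : ∀ x, 0 < x → 0 < G x := by
    intro x hx
    refine ENNReal.toReal_pos ?_ (gtop x hx)
    intro h0
    have h := gz_eq x hx
    rw [h0, zero_mul] at h
    exact g1ne ((mul_eq_zero.mp h.symm).resolve_right (hS0 x hx))
  have starR : ∀ a, 0 < a → ∀ z, 0 < z → G (z * a) * s 1 = G a * s z := by
    intro a ha z hz
    have h := congrArg ENNReal.toReal (star a ha z hz)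
    rwa [ENNReal.toReal_mul, ENNReal.toReal_mul, ENNReal.toReal_ofReal (hs 1 one_pos).le,
      ENNReal.toReal_ofReal (hs z hz).le] at h
  set T : ℝ → ℝ := fun z => G z / G 1 with hTdef
  have hG1ne : G 1 ≠ 0 := ne_of_gt hG1pos
  have hTmul : ∀ x, 0 < x → ∀ z, 0 < z → T (z * x) = T z * T x := by
    intro x hx z hz
    have h1 := starR x hx z hz
    have h2 := starR 1 one_pos z hz
    rw [mul_one] at h2
    have key2 : G (z * x) * G 1 = G x * G z := by
      have hs1 : s 1 ≠ 0 := ne_of_gt (hs 1 one_pos)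
      apply mul_right_cancel₀ hs1
      linear_combination G 1 * h1 - G x * h2
    simp only [hTdef]
    rw [div_mul_div_comm, div_eq_div_iff hG1ne (by positivity)]
    linear_combination G 1 * key2
  have hTanti : ∀ x y, 0 < x → x ≤ y → T y ≤ T x := by
    intro x y hx hxy
    have : G y ≤ G x :=
      ENNReal.toReal_le_toReal (gtop y (lt_of_lt_of_le hx hxy)) (gtop x hx) |>.mpr
        (measure_mono (Ioi_subset_Ioi hxy))
    exact div_le_div_of_nonneg_right this hG1pos.le
  have hTpos : ∀ x, 0 < x → 0 < T x := fun x hx => div_pos (hGpos x hx) hG1pos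
  obtain ⟨β, hβ0, hTpow⟩ := aux_power T hTpos hTmul hTanti
  have hGx : ∀ x, 0 < x → G x = G 1 * x ^ β := by
    intro x hx
    have h := hTpow x hx
    simp only [hTdef] at h
    rw [div_eq_iff hG1ne] at h
    rw [h]; ring
  have gx : ∀ x, 0 < x → μ (Ioi x) = ENNReal.ofReal (G 1 * x ^ β) := by
    intro x hx
    rw [← hGx x hx]
    exact (ENNReal.ofReal_toReal (gtop x hx)).symm
  have gIoc : ∀ a b : ℝ, 0 < a → a ≤ b →
      μ (Ioc a b) = ENNReal.ofReal (G 1 * a ^ β - G 1 * b ^ β) := by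
    intro a b ha hab
    have hb : 0 < b := lt_of_lt_of_le ha hab
    have hsplit : μ (Ioc a b) + μ (Ioi b) = μ (Ioi a) := by
      rw [← measure_union (Ioc_disjoint_Ioi le_rfl) measurableSet_Ioi,
        Ioc_union_Ioi_eq_Ioi hab]
    have hrp : b ^ β ≤ a ^ β := Real.rpow_le_rpow_of_nonpos ha hab hβ0
    have hbp : (0:ℝ) < b ^ β := Real.rpow_pos_of_pos hb β
    rw [gx a ha, gx b hb] at hsplit
    have hcomb : ENNReal.ofReal (G 1 * a ^ β - G 1 * b ^ β) + ENNReal.ofReal (G 1 * b ^ β)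
        = ENNReal.ofReal (G 1 * a ^ β) := by
      rw [← ENNReal.ofReal_add (by nlinarith) (by nlinarith)]
      congr 1; ring
    rw [← hcomb] at hsplit
    exact WithTop.add_right_cancel ENNReal.ofReal_ne_top hsplit
  have hβne : β ≠ 0 := by
    intro h0
    apply g1ne
    have hU : Ioi (1:ℝ) = ⋃ n : ℕ, Ioc (1:ℝ) ((n:ℝ) + 2) := by
      ext h
      simp only [mem_Ioi, mem_iUnion, mem_Ioc]
      constructor
      · intro hh
        obtain ⟨n, hn⟩ := exists_nat_ge h
        exact ⟨n, hh, by linarith⟩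
      · rintro ⟨n, hn, -⟩; exact hn
    rw [hU]
    refine measure_iUnion_null fun n => ?_
    have h2 := gIoc 1 ((n:ℝ) + 2) one_pos (by linarith [Nat.cast_nonneg (α := ℝ) n])
    rw [h0] at h2
    simpa using h2
  have hβgt : -2 < β := by
    by_contra hle
    push_neg at hle
    set f : ℝ → ENNReal := fun h => ENNReal.ofReal (min 1 (h ^ 2)) with hfdef
    have hfm : Measurable f := (measurable_const.min (measurable_id.pow_const 2)).ennreal_ofReal
    set ρ' : Measure ℝ := μ.withDensity f with hρ'def
    have hρ'top : ρ' univ ≠ ⊤ := by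
      rw [hρ'def, withDensity_apply _ MeasurableSet.univ, Measure.restrict_univ]
      exact hint.ne
    set A : ℕ → Set ℝ := fun k => Ioc ((2:ℝ) ^ (-(k:ℝ) - 1)) ((2:ℝ) ^ (-(k:ℝ))) with hAdef
    have hterm : ∀ k : ℕ, ENNReal.ofReal (3 / 4 * G 1) ≤ ρ' (A k) := by
      intro k
      simp only [hAdef]
      set e : ℝ := -(k:ℝ) - 1 with hedef
      set a : ℝ := (2:ℝ) ^ e with hadef
      set b : ℝ := (2:ℝ) ^ (-(k:ℝ)) with hbdef
      have ha : 0 < a := Real.rpow_pos_of_pos two_pos _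
      have hb : 0 < b := Real.rpow_pos_of_pos two_pos _
      have hab : a ≤ b := Real.rpow_le_rpow_of_exponent_le one_le_two (by rw [hedef]; linarith)
      have hb1 : b ≤ 1 := Real.rpow_le_one_of_one_le_of_nonpos one_le_two
        (neg_nonpos.mpr (Nat.cast_nonneg (α := ℝ) k))
      -- real inequality
      have hb' : b = (2:ℝ) ^ (e + 1) := by rw [hbdef, hedef]; ring_nf
      have ha2 : a ^ 2 = (2:ℝ) ^ (e * 2) := by
        rw [hadef, ← Real.rpow_natCast ((2:ℝ) ^ e) 2, ← Real.rpow_mul two_pos.le]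
        norm_num
      have haβ : a ^ β = (2:ℝ) ^ (e * β) := by
        rw [hadef, ← Real.rpow_mul two_pos.le]
      have hbβ : b ^ β = (2:ℝ) ^ ((e + 1) * β) := by
        rw [hb', ← Real.rpow_mul two_pos.le]
      have hexp : 0 ≤ e * 2 + e * β := by
        have he0 : e ≤ 0 := by
          rw [hedef]; have := Nat.cast_nonneg (α := ℝ) k; linarith
        nlinarith [mul_nonneg (show (0:ℝ) ≤ -e by linarith) (show (0:ℝ) ≤ -(2 + β) by linarith)]
      have hX1 : 1 ≤ (2:ℝ) ^ (e * 2 + e * β) := by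
        rw [← Real.rpow_zero 2]
        exact Real.rpow_le_rpow_of_exponent_le one_le_two hexp
      have h2β : (2:ℝ) ^ β ≤ 1 / 4 := by
        have h2 : (2:ℝ) ^ (-2:ℝ) = 1 / 4 := by
          rw [show (-2:ℝ) = ((-2:ℤ):ℝ) by norm_num, Real.rpow_intCast]
          norm_num
        calc (2:ℝ) ^ β ≤ (2:ℝ) ^ (-2:ℝ) := Real.rpow_le_rpow_of_exponent_le one_le_two hle
          _ = 1 / 4 := h2
      have hXb : (2:ℝ) ^ (e * 2 + (e + 1) * β) = (2:ℝ) ^ (e * 2 + e * β) * (2:ℝ) ^ β := by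
        rw [← Real.rpow_add two_pos]; ring_nf
      have hreal : 3 / 4 * G 1 ≤ a ^ 2 * (G 1 * a ^ β - G 1 * b ^ β) := by
        rw [ha2, haβ, hbβ]
        have e1 : (2:ℝ) ^ (e * 2) * ((2:ℝ) ^ (e * β)) = (2:ℝ) ^ (e * 2 + e * β) := by
          rw [← Real.rpow_add two_pos]
        have e2 : (2:ℝ) ^ (e * 2) * ((2:ℝ) ^ ((e + 1) * β)) = (2:ℝ) ^ (e * 2 + (e + 1) * β) := by
          rw [← Real.rpow_add two_pos]
        have hpos2 : (0:ℝ) < (2:ℝ) ^ (e * 2 + e * β) := Real.rpow_pos_of_pos two_pos _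
        have hf1 : (3:ℝ) / 4 ≤ (2:ℝ) ^ (e * 2 + e * β) * (1 - (2:ℝ) ^ β) := by
          nlinarith [hX1, h2β, hpos2]
        calc 3 / 4 * G 1 ≤ G 1 * ((2:ℝ) ^ (e * 2 + e * β) * (1 - (2:ℝ) ^ β)) := by
              nlinarith [hG1pos, hf1]
          _ = (2:ℝ) ^ (e * 2) * (G 1 * (2:ℝ) ^ (e * β) - G 1 * (2:ℝ) ^ ((e + 1) * β)) := by
              linear_combination (-(G 1)) * e1 + G 1 * e2 + G 1 * hXb
      have hlow : ENNReal.ofReal (a ^ 2) * μ (Ioc a b) ≤ ρ' (Ioc a b) := by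
        rw [hρ'def, withDensity_apply _ measurableSet_Ioc]
        exact aux_low μ f hfdef hfm a b ha hab hb1
      calc ENNReal.ofReal (3 / 4 * G 1)
          ≤ ENNReal.ofReal (a ^ 2 * (G 1 * a ^ β - G 1 * b ^ β)) :=
            ENNReal.ofReal_le_ofReal hreal
        _ = ENNReal.ofReal (a ^ 2) * ENNReal.ofReal (G 1 * a ^ β - G 1 * b ^ β) :=
            ENNReal.ofReal_mul (sq_nonneg a)
        _ = ENNReal.ofReal (a ^ 2) * μ (Ioc a b) := by rw [gIoc a b ha hab]
        _ ≤ ρ' (Ioc a b) := hlow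
    have hdisj : ∀ i j : ℕ, i ≠ j → Disjoint (A i) (A j) := by
      intro i j hij
      wlog h : i < j generalizing i j
      · exact (this j i hij.symm (by omega)).symm
      simp only [hAdef]
      refine Set.Ioc_disjoint_Ioc.mpr ?_
      have hij' : -(j:ℝ) ≤ -(i:ℝ) - 1 := by
        have : (i:ℝ) + 1 ≤ (j:ℝ) := by exact_mod_cast Nat.succ_le_of_lt h
        linarith
      calc min ((2:ℝ) ^ (-(i:ℝ))) ((2:ℝ) ^ (-(j:ℝ))) ≤ (2:ℝ) ^ (-(j:ℝ)) := min_le_right _ _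
        _ ≤ (2:ℝ) ^ (-(i:ℝ) - 1) := Real.rpow_le_rpow_of_exponent_le one_le_two hij'
        _ ≤ max ((2:ℝ) ^ (-(i:ℝ) - 1)) ((2:ℝ) ^ (-(j:ℝ) - 1)) := le_max_left _ _
    obtain ⟨n, hn⟩ := exists_nat_gt ((ρ' univ).toReal / (3 / 4 * G 1))
    have hsum : (n : ENNReal) * ENNReal.ofReal (3 / 4 * G 1) ≤ ρ' univ := by
      calc (n : ENNReal) * ENNReal.ofReal (3 / 4 * G 1)
          = ∑ _k ∈ Finset.range n, ENNReal.ofReal (3 / 4 * G 1) := by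
            rw [Finset.sum_const, nsmul_eq_mul, Finset.card_range]
        _ ≤ ∑ k ∈ Finset.range n, ρ' (A k) := Finset.sum_le_sum fun k _ => hterm k
        _ = ρ' (⋃ k ∈ Finset.range n, A k) :=
            (measure_biUnion_finset (fun i _ j _ hij => hdisj i j hij)
              (fun k _ => measurableSet_Ioc)).symm
        _ ≤ ρ' univ := measure_mono (subset_univ _)
    have h34 : (0:ℝ) < 3 / 4 * G 1 := by linarith
    have htr := ENNReal.toReal_mono hρ'top hsum
    rw [ENNReal.toReal_mul, ENNReal.toReal_natCast, ENNReal.toReal_ofReal h34.le] at htr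
    have := (div_lt_iff₀ h34).mp hn
    linarith
  have hβneg : β < 0 := lt_of_le_of_ne hβ0 hβne
  refine ⟨-β * G 1, by nlinarith, -β, ⟨by linarith, by linarith⟩, ?_⟩
  set ρ : Measure ℝ := (volume.restrict (Ioi (0:ℝ))).withDensity
    (fun h => ENNReal.ofReal ((-β * G 1) * h ^ (-1 - -β))) with hρdef
  have hρIoc : ∀ a b : ℝ, 0 < a → a ≤ b →
      ρ (Ioc a b) = ENNReal.ofReal (G 1 * a ^ β - G 1 * b ^ β) := by
    intro a b ha hab
    have hss : Ioc a b ∩ Ioi 0 = Ioc a b :=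
      inter_eq_left.mpr fun x hx => lt_of_lt_of_le ha (le_of_lt hx.1)
    rw [hρdef, withDensity_apply _ measurableSet_Ioc,
      Measure.restrict_restrict measurableSet_Ioc, hss]
    have hcont : ContinuousOn (fun x : ℝ => (-β * G 1) * x ^ (-1 - -β)) (Icc a b) :=
      continuousOn_const.mul (ContinuousOn.rpow_const continuousOn_id
        fun x hx => Or.inl (ne_of_gt (lt_of_lt_of_le ha hx.1)))
    have hInt : IntegrableOn (fun x : ℝ => (-β * G 1) * x ^ (-1 - -β)) (Ioc a b) volume :=
      (hcont.integrableOn_compact isCompact_Icc).mono_set Ioc_subset_Icc_self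
    have hnn : 0 ≤ᵐ[volume.restrict (Ioc a b)]
        fun x : ℝ => (-β * G 1) * x ^ (-1 - -β) := by
      refine (ae_restrict_iff' measurableSet_Ioc).mpr (ae_of_all _ fun x hx => ?_)
      have hxpos : 0 < x := lt_of_lt_of_le ha (le_of_lt hx.1)
      have hp := Real.rpow_pos_of_pos hxpos (-1 - -β)
      exact le_of_lt (mul_pos (mul_pos (neg_pos.mpr hβneg) hG1pos) hp)
    rw [← ofReal_integral_eq_lintegral_ofReal hInt hnn]
    congr 1
    rw [← intervalIntegral.integral_of_le hab, intervalIntegral.integral_const_mul,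
      integral_rpow (Or.inr ⟨by intro h; apply hβne; linarith,
        notMem_uIcc_of_lt ha (lt_of_lt_of_le ha hab)⟩)]
    have hep : -1 - -β + 1 = β := by ring
    rw [hep]
    field_simp
    ring
  have htop : ∀ a b : ℝ, a ≤ 0 → 0 < b → ∀ m : Measure ℝ,
      (∀ t, 0 < t → t ≤ b → m (Ioc t b) = ENNReal.ofReal (G 1 * t ^ β - G 1 * b ^ β)) →
      m (Ioc a b) = ⊤ := by
    intro a b ha hb m hm
    refine aux_eq_top_of_forall_ofReal_le fun r => ?_
    rcases le_or_gt r 0 with hr | hr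
    · rw [ENNReal.ofReal_eq_zero.mpr hr]; exact zero_le
    · set R : ℝ := max (r + G 1 * b ^ β) (G 1) with hRdef
      have hRpos : 0 < R := lt_of_lt_of_le hG1pos (le_max_right _ _)
      set t0 : ℝ := (R / G 1) ^ (1 / β) with ht0def
      have hRG : 0 < R / G 1 := div_pos hRpos hG1pos
      have ht0pos : 0 < t0 := Real.rpow_pos_of_pos hRG _
      set t : ℝ := min t0 (b / 2) with htdef
      have htpos : 0 < t := lt_min ht0pos (by linarith)
      have htb : t ≤ b := le_trans (min_le_right _ _) (by linarith)
      have ht0β : t0 ^ β = R / G 1 := by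
        rw [ht0def, ← Real.rpow_mul hRG.le, one_div, inv_mul_cancel₀ hβne, Real.rpow_one]
      have htβ : R / G 1 ≤ t ^ β := by
        rw [← ht0β]
        exact Real.rpow_le_rpow_of_nonpos htpos (min_le_left _ _) hβ0
      have hRle : R ≤ G 1 * t ^ β := by
        have := (div_le_iff₀ hG1pos).mp htβ
        linarith
      have hrle : r ≤ G 1 * t ^ β - G 1 * b ^ β := by
        have := le_max_left (r + G 1 * b ^ β) (G 1)
        linarith
      calc ENNReal.ofReal r ≤ ENNReal.ofReal (G 1 * t ^ β - G 1 * b ^ β) :=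
            ENNReal.ofReal_le_ofReal hrle
        _ = m (Ioc t b) := (hm t htpos htb).symm
        _ ≤ m (Ioc a b) := measure_mono (Ioc_subset_Ioc (by linarith) le_rfl)
  refine Measure.ext_of_generateFrom_of_iUnion {S : Set ℝ | ∃ l u, l < u ∧ Ioc l u = S} auxB
    (BorelSpace.measurable_eq.trans (borel_eq_generateFrom_Ioc ℝ))
    (isPiSystem_Ioc (id : ℝ → ℝ) id) auxB_cover auxB_mem ?_ ?_
  · -- finiteness
    intro n
    by_cases he : Even n
    · simp only [auxB, if_pos he]
      have : μ (Ioc (-(n:ℝ) - 1) 0) = 0 :=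
        measure_mono_null (fun x hx => by simp only [mem_compl_iff, mem_Ioi, not_lt]; exact hx.2) hcar
      rw [this]; exact ENNReal.zero_ne_top
    · simp only [auxB, if_neg he]
      have hl : (0:ℝ) < 1 / ((n:ℝ) + 2) := by positivity
      exact ne_top_of_le_ne_top (gtop _ hl) (measure_mono Ioc_subset_Ioi_self)
  · -- equality on C
    rintro - ⟨l, u, hlt, rfl⟩
    rcases le_or_gt u 0 with hu | hu
    · have hμ0' : μ (Ioc l u) = 0 :=
        measure_mono_null (fun x hx => by
          simp only [mem_compl_iff, mem_Ioi, not_lt]; exact le_trans hx.2 hu) hcar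
      have hρ0 : ρ (Ioc l u) = 0 := by
        have hss : Ioc l u ∩ Ioi 0 = ∅ := by
          ext x
          simp only [mem_inter_iff, mem_Ioc, mem_Ioi, mem_empty_iff_false, iff_false, not_and]
          rintro ⟨-, hx2⟩
          intro hx3
          linarith
        rw [hρdef, withDensity_apply _ measurableSet_Ioc,
          Measure.restrict_restrict measurableSet_Ioc, hss, Measure.restrict_empty,
          lintegral_zero_measure]
      rw [hμ0', hρ0]
    · rcases le_or_gt l 0 with hl | hl
      · rw [htop l u hl hu μ (fun t ht htu => gIoc t u ht htu),
          htop l u hl hu ρ (fun t ht htu => hρIoc t u ht htu)]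
      · rw [gIoc l u hl hlt.le, hρIoc l u hl hlt.le]
end

section
/- Let η be a finite measure on [0,1] with total mass z := η([0,1]) > 0, let ρ := z⁻¹η, let φ : [0,1] → ℝ be bounded measurable, m ≥ 1 an integer, and let ψ : (0,∞) → ℝ be differentiable at z. Define F on finite measures by F(μ) := ψ(|μ|)·⟨φ, μ/|μ|⟩^m. Then for every a ∈ [0,1] the Gateaux derivative of F at η in direction δ_a exists and equals F'(η;a) = ψ'(z)·⟨φ,ρ⟩^m + m·(ψ(z)/z)·(φ(a)·⟨φ,ρ⟩^{m-1} − ⟨φ,ρ⟩^m). -/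
open MeasureTheory Real Set Filter
open scoped Topology

/-- First Gateaux derivative of `F(μ) = ψ(|μ|)·⟨φ, μ/|μ|⟩^m` at `η` in direction `δ_a`:
it equals `ψ'(z)⟨φ,ρ⟩^m + m(ψ(z)/z)(φ(a)⟨φ,ρ⟩^{m-1} − ⟨φ,ρ⟩^m)`. -/
theorem stmt4 (η : Measure unitInterval) [IsFiniteMeasure η] (hη : η Set.univ ≠ 0)
    (φ : unitInterval → ℝ) (hφm : Measurable φ) (C : ℝ) (hφb : ∀ x, |φ x| ≤ C)
    (m : ℕ) (hm : 1 ≤ m) (ψ : ℝ → ℝ) (ψ' : ℝ)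
    (hψ : HasDerivAt ψ ψ' (η Set.univ).toReal) (a : unitInterval) :
    Filter.Tendsto
      (fun ε : ℝ =>
        ε⁻¹ * (ψ ((η Set.univ).toReal + ε) *
            ((((η Set.univ).toReal + ε)⁻¹ *
              ∫ x, φ x ∂(η + ENNReal.ofReal ε • Measure.dirac a)) ^ m)
          - ψ ((η Set.univ).toReal) * (∫ x, φ x ∂((η Set.univ)⁻¹ • η)) ^ m))
      (𝓝[>] 0)
      (𝓝 (ψ' * (∫ x, φ x ∂((η Set.univ)⁻¹ • η)) ^ m
        + (m : ℝ) * (ψ ((η Set.univ).toReal) / (η Set.univ).toReal) *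
          (φ a * (∫ x, φ x ∂((η Set.univ)⁻¹ • η)) ^ (m - 1)
            - (∫ x, φ x ∂((η Set.univ)⁻¹ • η)) ^ m))) := by
  obtain ⟨k, rfl⟩ : ∃ k, m = k + 1 := ⟨m - 1, (Nat.succ_pred_eq_of_pos hm).symm⟩
  set z := (η Set.univ).toReal with hz
  have hz0 : 0 < z := ENNReal.toReal_pos hη (measure_ne_top η _)
  have hzne : z ≠ 0 := hz0.ne'
  have hφint : Integrable φ η :=
    (integrable_const C).mono' hφm.aestronglyMeasurable
      (Eventually.of_forall fun x => by simpa using hφb x)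
  set I := ∫ x, φ x ∂η with hI
  have hρ : (∫ x, φ x ∂((η Set.univ)⁻¹ • η)) = z⁻¹ * I := by
    rw [integral_smul_measure, ENNReal.toReal_inv, smul_eq_mul, ← hz, ← hI]
  -- the function G
  set G : ℝ → ℝ := fun t => ψ t * (t⁻¹ * (I + (t - z) * φ a)) ^ (k + 1) with hG
  have hlin : HasDerivAt (fun t : ℝ => I + (t - z) * φ a) (φ a) z := by
    simpa using (((hasDerivAt_id z).sub_const z).mul_const (φ a)).const_add I
  have hinv : HasDerivAt (fun t : ℝ => t⁻¹) (-(z ^ 2)⁻¹) z := hasDerivAt_inv hzne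
  have hprod : HasDerivAt (fun t : ℝ => t⁻¹ * (I + (t - z) * φ a))
      (-(z ^ 2)⁻¹ * I + z⁻¹ * φ a) z := by
    simpa [Pi.mul_def] using hinv.mul hlin
  have hpow : HasDerivAt (fun t : ℝ => (t⁻¹ * (I + (t - z) * φ a)) ^ (k + 1))
      ((k + 1 : ℕ) * (z⁻¹ * I) ^ k * (-(z ^ 2)⁻¹ * I + z⁻¹ * φ a)) z := by
    simpa [Pi.pow_def] using hprod.pow (k + 1)
  have hGd : HasDerivAt G
      (ψ' * (z⁻¹ * I) ^ (k + 1)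
        + ψ z * ((k + 1 : ℕ) * (z⁻¹ * I) ^ k * (-(z ^ 2)⁻¹ * I + z⁻¹ * φ a))) z := by
    simpa [Pi.mul_def] using hψ.mul hpow
  have hg : HasDerivAt (fun ε : ℝ => G (z + ε))
      (ψ' * (z⁻¹ * I) ^ (k + 1)
        + ψ z * ((k + 1 : ℕ) * (z⁻¹ * I) ^ k * (-(z ^ 2)⁻¹ * I + z⁻¹ * φ a))) 0 := by
    have hc : HasDerivAt (fun ε : ℝ => z + ε) 1 0 := by
      simpa using (hasDerivAt_id (0:ℝ)).const_add z
    simpa [Function.comp_def] using (HasDerivAt.comp 0 (by simpa using hGd) hc)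
  have hslope := hasDerivAt_iff_tendsto_slope.mp hg
  have hmono : 𝓝[>] (0:ℝ) ≤ 𝓝[≠] (0:ℝ) :=
    nhdsWithin_mono 0 (fun x hx => ne_of_gt hx)
  have hd0 : Integrable φ (Measure.dirac a) := by
    refine ⟨hφm.aestronglyMeasurable, ?_⟩
    rw [HasFiniteIntegral, lintegral_dirac' _ hφm.enorm]
    exact ENNReal.coe_lt_top
  have hint : ∀ ε : ℝ, 0 ≤ ε →
      (∫ x, φ x ∂(η + ENNReal.ofReal ε • Measure.dirac a)) = I + ε * φ a := by
    intro ε hε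
    rw [integral_add_measure hφint (hd0.smul_measure ENNReal.ofReal_ne_top),
      integral_smul_measure, integral_dirac, ENNReal.toReal_ofReal hε, smul_eq_mul, ← hI]
  have hev : (fun ε : ℝ => slope (fun ε : ℝ => G (z + ε)) 0 ε) =ᶠ[𝓝[>] (0:ℝ)]
      (fun ε : ℝ =>
        ε⁻¹ * (ψ (z + ε) *
            (((z + ε)⁻¹ * ∫ x, φ x ∂(η + ENNReal.ofReal ε • Measure.dirac a)) ^ (k + 1))
          - ψ z * (∫ x, φ x ∂((η Set.univ)⁻¹ • η)) ^ (k + 1))) := by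
    filter_upwards [self_mem_nhdsWithin] with ε (hε : 0 < ε)
    rw [slope_def_field, hint ε hε.le, hρ, hG]
    simp only [add_zero, add_sub_cancel_left, sub_zero]
    ring
  have hfinal := (hslope.mono_left hmono).congr' hev
  convert hfinal using 2
  rw [hρ]
  simp only [Nat.add_sub_cancel]
  push_cast
  field_simp
  have h1 : z * z⁻¹ = 1 := mul_inv_cancel₀ hzne
  linear_combination (-((k : ℝ) + 1) * I * I ^ k * z⁻¹ ^ k * ψ z) * h1
end

section
/- Let η be a finite measure on [0,1] with total mass z := η([0,1]) > 0, let ρ := z⁻¹η, let φ : [0,1] → ℝ be bounded measurable, m ≥ 1 an integer, ψ : (0,∞) → ℝ twice differentiable at z, and a, b ∈ [0,1]. Define G_a on finite measures μ (with |μ| > 0, normalized measure μ̄ := μ/|μ|) by G_a(μ) := ψ'(|μ|)·⟨φ,μ̄⟩^m + m·(ψ(|μ|)/|μ|)·(φ(a)·⟨φ,μ̄⟩^{m-1} − ⟨φ,μ̄⟩^m), i.e. G_a(μ) is the first Gateaux derivative of μ ↦ ψ(|μ|)⟨φ,μ̄⟩^m in direction δ_a. Then the Gateaux derivative of G_a at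 η in direction δ_b exists and equals F''(η;a,b) = ψ''(z)·⟨φ,ρ⟩^m + m·(ψ'(z)/z)·[(φ(a)+φ(b))·⟨φ,ρ⟩^{m-1} − 2⟨φ,ρ⟩^m] + m·(ψ(z)/z²)·[(m−1)·φ(a)φ(b)·⟨φ,ρ⟩^{m-2} − m·(φ(a)+φ(b))·⟨φ,ρ⟩^{m-1} + (m+1)·⟨φ,ρ⟩^m], where for m = 1 the term with coefficient (m−1) is absent. -/
open MeasureTheory Real Set Filter
open scoped Topology

set_option maxHeartbeats 1000000 in
/-- Second Gateaux derivative formula: the Gateaux derivative at `η` in direction `δ_b` of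
`G_a(μ) = ψ'(|μ|)⟨φ,μ̄⟩^m + m(ψ(|μ|)/|μ|)(φ(a)⟨φ,μ̄⟩^{m-1} − ⟨φ,μ̄⟩^m)` equals
`ψ''(z)⟨φ,ρ⟩^m + m(ψ'(z)/z)[(φ(a)+φ(b))⟨φ,ρ⟩^{m-1} − 2⟨φ,ρ⟩^m]`
`+ m(ψ(z)/z²)[(m−1)φ(a)φ(b)⟨φ,ρ⟩^{m-2} − m(φ(a)+φ(b))⟨φ,ρ⟩^{m-1} + (m+1)⟨φ,ρ⟩^m]`. -/
theorem stmt5 (η : Measure unitInterval) [IsFiniteMeasure η] (hη : η Set.univ ≠ 0)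
    (φ : unitInterval → ℝ) (hφm : Measurable φ) (C : ℝ) (hφb : ∀ x, |φ x| ≤ C)
    (m : ℕ) (hm : 1 ≤ m) (ψ ψ' : ℝ → ℝ) (ψ'' : ℝ)
    (hψ : HasDerivAt ψ (ψ' (η Set.univ).toReal) (η Set.univ).toReal)
    (hψ' : HasDerivAt ψ' ψ'' (η Set.univ).toReal)
    (a b : unitInterval) :
    Filter.Tendsto
      (fun ε : ℝ =>
        ε⁻¹ *
          ((ψ' ((η Set.univ).toReal + ε) *
              ((((η Set.univ).toReal + ε)⁻¹ *
                ∫ x, φ x ∂(η + ENNReal.ofReal ε • Measure.dirac b)) ^ m)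
            + (m : ℝ) * (ψ ((η Set.univ).toReal + ε) / ((η Set.univ).toReal + ε)) *
              (φ a * ((((η Set.univ).toReal + ε)⁻¹ *
                  ∫ x, φ x ∂(η + ENNReal.ofReal ε • Measure.dirac b)) ^ (m - 1))
                - ((((η Set.univ).toReal + ε)⁻¹ *
                  ∫ x, φ x ∂(η + ENNReal.ofReal ε • Measure.dirac b)) ^ m)))
          - (ψ' ((η Set.univ).toReal) * (∫ x, φ x ∂((η Set.univ)⁻¹ • η)) ^ m
            + (m : ℝ) * (ψ ((η Set.univ).toReal) / (η Set.univ).toReal) *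
              (φ a * (∫ x, φ x ∂((η Set.univ)⁻¹ • η)) ^ (m - 1)
                - (∫ x, φ x ∂((η Set.univ)⁻¹ • η)) ^ m))))
      (𝓝[>] 0)
      (𝓝 (ψ'' * (∫ x, φ x ∂((η Set.univ)⁻¹ • η)) ^ m
        + (m : ℝ) * (ψ' ((η Set.univ).toReal) / (η Set.univ).toReal) *
          ((φ a + φ b) * (∫ x, φ x ∂((η Set.univ)⁻¹ • η)) ^ (m - 1)
            - 2 * (∫ x, φ x ∂((η Set.univ)⁻¹ • η)) ^ m)
        + (m : ℝ) * (ψ ((η Set.univ).toReal) / (η Set.univ).toReal ^ 2) *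
          (((m : ℝ) - 1) * (φ a * φ b) * (∫ x, φ x ∂((η Set.univ)⁻¹ • η)) ^ (m - 2)
            - (m : ℝ) * (φ a + φ b) * (∫ x, φ x ∂((η Set.univ)⁻¹ • η)) ^ (m - 1)
            + ((m : ℝ) + 1) * (∫ x, φ x ∂((η Set.univ)⁻¹ • η)) ^ m))) := by
  have hznt : η Set.univ ≠ ⊤ := measure_ne_top η _
  set z : ℝ := (η Set.univ).toReal with hzdef
  have hz : 0 < z := ENNReal.toReal_pos hη hznt
  have hz' : z ≠ 0 := ne_of_gt hz
  set I : ℝ := ∫ x, φ x ∂η with hIdef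
  have hφnorm : ∀ x, ‖φ x‖ ≤ C := by simpa [Real.norm_eq_abs] using hφb
  have hInt : Integrable φ η :=
    (integrable_const C).mono' hφm.aestronglyMeasurable (ae_of_all _ hφnorm)
  have hdint : Integrable φ (Measure.dirac (b : unitInterval)) :=
    (integrable_const C).mono' hφm.aestronglyMeasurable (ae_of_all _ hφnorm)
  have hρ : (∫ x, φ x ∂((η Set.univ)⁻¹ • η)) = z⁻¹ * I := by
    rw [integral_smul_measure, ENNReal.toReal_inv, smul_eq_mul]
  have hεint : ∀ ε : ℝ, 0 < ε →
      (∫ x, φ x ∂(η + ENNReal.ofReal ε • Measure.dirac b)) = I + ε * φ b := by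
    intro ε hε
    rw [integral_add_measure hInt (hdint.smul_measure ENNReal.ofReal_ne_top),
      integral_smul_measure, integral_dirac, ENNReal.toReal_ofReal hε.le, smul_eq_mul]
  -- the smooth surrogate function
  set u' : ℝ := (φ b * z - I) / z ^ 2 with hu'
  clear_value z I
  set g : ℝ → ℝ := fun ε =>
    ψ' (z + ε) * ((z + ε)⁻¹ * (I + ε * φ b)) ^ m
      + (m : ℝ) * (ψ (z + ε) / (z + ε)) *
        (φ a * ((z + ε)⁻¹ * (I + ε * φ b)) ^ (m - 1)
          - ((z + ε)⁻¹ * (I + ε * φ b)) ^ m) with hg_def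
  have h1 : HasDerivAt (fun ε : ℝ => z + ε) 1 0 := by
    simpa using (hasDerivAt_id (0 : ℝ)).const_add z
  have hz0 : z + (0 : ℝ) = z := add_zero z
  have hψz : HasDerivAt ψ (ψ' z) ((fun ε : ℝ => z + ε) 0) := by simpa using hψ
  have hψ'z : HasDerivAt ψ' ψ'' ((fun ε : ℝ => z + ε) 0) := by simpa using hψ'
  have hψc : HasDerivAt (fun ε : ℝ => ψ (z + ε)) (ψ' z) 0 := by
    simpa [Function.comp_def] using hψz.comp 0 h1
  have hψ'c : HasDerivAt (fun ε : ℝ => ψ' (z + ε)) ψ'' 0 := by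
    simpa [Function.comp_def] using hψ'z.comp 0 h1
  have hne : (fun ε : ℝ => z + ε) 0 ≠ 0 := by simpa using hz'
  have hU : HasDerivAt (fun ε : ℝ => (z + ε)⁻¹ * (I + ε * φ b)) u' 0 := by
    have hinv : HasDerivAt (fun ε : ℝ => (z + ε)⁻¹) (-1 / (z + 0) ^ 2) 0 := h1.inv hne
    have hV : HasDerivAt (fun ε : ℝ => I + ε * φ b) (φ b) 0 := by
      simpa using ((hasDerivAt_id (0 : ℝ)).mul_const (φ b)).const_add I
    have h2 : HasDerivAt (fun ε : ℝ => (z + ε)⁻¹ * (I + ε * φ b))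
        (-1 / z ^ 2 * I + z⁻¹ * φ b) 0 := by simpa using hinv.fun_mul hV
    have heq : -1 / z ^ 2 * I + z⁻¹ * φ b = u' := by
      rw [hu']; field_simp; ring
    exact heq ▸ h2
  have hpow : HasDerivAt (fun ε : ℝ => ((z + ε)⁻¹ * (I + ε * φ b)) ^ m)
      ((m : ℝ) * (z⁻¹ * I) ^ (m - 1) * u') 0 := by
    simpa using hU.fun_pow m
  have hpow' : HasDerivAt (fun ε : ℝ => ((z + ε)⁻¹ * (I + ε * φ b)) ^ (m - 1))
      (((m - 1 : ℕ) : ℝ) * (z⁻¹ * I) ^ (m - 1 - 1) * u') 0 := by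
    simpa using hU.fun_pow (m - 1)
  have hB : HasDerivAt (fun ε : ℝ => ψ (z + ε) / (z + ε))
      ((ψ' z * (z + 0) - ψ (z + 0) * 1) / (z + 0) ^ 2) 0 := hψc.div h1 hne
  have term1 := hψ'c.fun_mul hpow
  have inner2 := (hpow'.const_mul (φ a)).fun_sub hpow
  have term2 := (hB.const_mul (m : ℝ)).fun_mul inner2
  have hd := term1.fun_add term2
  simp only [add_zero, zero_mul, mul_one] at hd
  -- identify the derivative value with the claimed formula
  have hDval :
      (ψ'' * (z⁻¹ * I) ^ m + ψ' z * ((m : ℝ) * (z⁻¹ * I) ^ (m - 1) * u'))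
        + ((m : ℝ) * ((ψ' z * z - ψ z) / z ^ 2) *
            (φ a * (z⁻¹ * I) ^ (m - 1) - (z⁻¹ * I) ^ m)
          + (m : ℝ) * (ψ z / z) *
            (φ a * (((m - 1 : ℕ) : ℝ) * (z⁻¹ * I) ^ (m - 1 - 1) * u')
              - (m : ℝ) * (z⁻¹ * I) ^ (m - 1) * u'))
      = ψ'' * (z⁻¹ * I) ^ m
        + (m : ℝ) * (ψ' z / z) * ((φ a + φ b) * (z⁻¹ * I) ^ (m - 1) - 2 * (z⁻¹ * I) ^ m)
        + (m : ℝ) * (ψ z / z ^ 2) *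
          (((m : ℝ) - 1) * (φ a * φ b) * (z⁻¹ * I) ^ (m - 2)
            - (m : ℝ) * (φ a + φ b) * (z⁻¹ * I) ^ (m - 1)
            + ((m : ℝ) + 1) * (z⁻¹ * I) ^ m) := by
    obtain ⟨k, rfl⟩ : ∃ k, m = k + 1 := ⟨m - 1, by omega⟩
    cases k with
    | zero =>
      simp only [hu']
      norm_num
      field_simp
      ring
    | succ k =>
      have e1 : k + 1 + 1 - 1 = k + 1 := by omega
      have e2 : k + 1 + 1 - 2 = k := by omega
      have e3 : k + 1 + 1 - 1 - 1 = k := by omega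
      rw [e3, e2, e1]
      simp only [hu', pow_succ]
      push_cast
      field_simp
      ring
  rw [hDval] at hd
  have hg : HasDerivAt g
      (ψ'' * (z⁻¹ * I) ^ m
        + (m : ℝ) * (ψ' z / z) * ((φ a + φ b) * (z⁻¹ * I) ^ (m - 1) - 2 * (z⁻¹ * I) ^ m)
        + (m : ℝ) * (ψ z / z ^ 2) *
          (((m : ℝ) - 1) * (φ a * φ b) * (z⁻¹ * I) ^ (m - 2)
            - (m : ℝ) * (φ a + φ b) * (z⁻¹ * I) ^ (m - 1)
            + ((m : ℝ) + 1) * (z⁻¹ * I) ^ m)) 0 := hd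
  -- pass from the derivative to the one-sided slope limit
  have hslope := hasDerivAt_iff_tendsto_slope.mp hg
  have h2 := hslope.mono_left (nhdsWithin_mono _ (fun x hx => ne_of_gt hx))
  rw [hρ]
  refine Filter.Tendsto.congr' ?_ h2
  filter_upwards [self_mem_nhdsWithin] with ε hε
  have hεpos : (0 : ℝ) < ε := hε
  rw [slope_def_field, hεint ε hεpos]
  simp only [hg_def]
  rw [sub_zero, div_eq_inv_mul]
  norm_num
end

section
/- Let η be a finite measure on [0,1] with total mass z := η([0,1]) > 0, let ρ := z⁻¹η, let φ : [0,1] → ℝ be bounded measurable, m ≥ 2 an integer, and σ², β ≥ 0. With F'(η;a) := (m/z)·(φ(a)⟨φ,ρ⟩^{m-1} − ⟨φ,ρ⟩^m) and F''(η;a,b) := (m/z²)·[(m−1)·φ(a)φ(b)·⟨φ,ρ⟩^{m-2} − m·(φ(a)+φ(b))·⟨φ,ρ⟩^{m-1} + (m+1)·⟨φ,ρ⟩^m] (the first and second Gateaux derivatives of μ ↦ ⟨φ,μ/|μ|⟩^m), one has (σ²/2)·∫₀¹ F''(η;a,a) η(da) + β·F'(η;0) = z⁻¹·[ σ²·(m(m−1)/2)·(⟨φ²,ρ⟩·⟨φ,ρ⟩^{m-2}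 − ⟨φ,ρ⟩^m) + β·m·(φ(0)·⟨φ,ρ⟩^{m-1} − ⟨φ,ρ⟩^m) ]. -/
open MeasureTheory Real Set

/-- Lemma 5.2 of the paper for product test functions: with
`F'(η;a) = (m/z)(φ(a)⟨φ,ρ⟩^{m-1} − ⟨φ,ρ⟩^m)` and
`F''(η;a,b) = (m/z²)[(m−1)φ(a)φ(b)⟨φ,ρ⟩^{m-2} − m(φ(a)+φ(b))⟨φ,ρ⟩^{m-1} + (m+1)⟨φ,ρ⟩^m]`,
the continuous part of the measure-valued branching generator factorizes as `z⁻¹` times the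
Fleming-Viot-with-immigration generator. -/
theorem stmt6 (η : Measure unitInterval) [IsFiniteMeasure η] (hη : η Set.univ ≠ 0)
    (φ : unitInterval → ℝ) (hφm : Measurable φ) (C : ℝ) (hφb : ∀ x, |φ x| ≤ C)
    (m : ℕ) (hm : 2 ≤ m) (σ2 β : ℝ) (hσ : 0 ≤ σ2) (hβ : 0 ≤ β) :
    (σ2 / 2) *
        ∫ a, ((m : ℝ) / (η Set.univ).toReal ^ 2) *
          (((m : ℝ) - 1) * (φ a * φ a) * (∫ x, φ x ∂((η Set.univ)⁻¹ • η)) ^ (m - 2)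
            - (m : ℝ) * (φ a + φ a) * (∫ x, φ x ∂((η Set.univ)⁻¹ • η)) ^ (m - 1)
            + ((m : ℝ) + 1) * (∫ x, φ x ∂((η Set.univ)⁻¹ • η)) ^ m) ∂η
      + β * (((m : ℝ) / (η Set.univ).toReal) *
          (φ 0 * (∫ x, φ x ∂((η Set.univ)⁻¹ • η)) ^ (m - 1)
            - (∫ x, φ x ∂((η Set.univ)⁻¹ • η)) ^ m)) =
    ((η Set.univ).toReal)⁻¹ *
      (σ2 * ((m : ℝ) * ((m : ℝ) - 1) / 2) *
          ((∫ x, φ x ^ 2 ∂((η Set.univ)⁻¹ • η)) *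
              (∫ x, φ x ∂((η Set.univ)⁻¹ • η)) ^ (m - 2)
            - (∫ x, φ x ∂((η Set.univ)⁻¹ • η)) ^ m)
        + β * (m : ℝ) *
          (φ 0 * (∫ x, φ x ∂((η Set.univ)⁻¹ • η)) ^ (m - 1)
            - (∫ x, φ x ∂((η Set.univ)⁻¹ • η)) ^ m)) := by
  have hfin : η Set.univ ≠ ⊤ := measure_ne_top η _
  set z : ℝ := (η Set.univ).toReal with hzdef
  have hz : 0 < z := ENNReal.toReal_pos hη hfin
  have hφi : Integrable φ η :=
    ⟨hφm.aestronglyMeasurable,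
      HasFiniteIntegral.of_bounded (C := C) (ae_of_all _ fun x => by
        simpa using hφb x)⟩
  have hφφi : Integrable (fun a => φ a * φ a) η :=
    ⟨(hφm.mul hφm).aestronglyMeasurable,
      HasFiniteIntegral.of_bounded (C := C * C) (ae_of_all _ fun x => by
        have := hφb x
        have h0 : (0:ℝ) ≤ C := le_trans (abs_nonneg _) this
        calc ‖φ x * φ x‖ = |φ x| * |φ x| := by rw [norm_mul]; rfl
        _ ≤ C * C := mul_le_mul this this (abs_nonneg _) h0)⟩
  set I : ℝ := ∫ x, φ x ∂((η Set.univ)⁻¹ • η) with hIdef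
  set J : ℝ := ∫ x, φ x ^ 2 ∂((η Set.univ)⁻¹ • η) with hJdef
  have hI : I = z⁻¹ * ∫ x, φ x ∂η := by
    rw [hIdef, integral_smul_measure, ENNReal.toReal_inv, smul_eq_mul]
  have hJ : J = z⁻¹ * ∫ x, φ x * φ x ∂η := by
    rw [hJdef, integral_smul_measure, ENNReal.toReal_inv, smul_eq_mul]
    simp [pow_two]
    exact Or.inl hzdef.symm
  have h1 : ∫ x, φ x ∂η = z * I := by
    rw [hI]; field_simp
  have h2 : ∫ x, φ x * φ x ∂η = z * J := by
    rw [hJ]; field_simp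
  have e : ∀ a, ((m : ℝ) / z ^ 2) *
      (((m : ℝ) - 1) * (φ a * φ a) * I ^ (m - 2)
        - (m : ℝ) * (φ a + φ a) * I ^ (m - 1)
        + ((m : ℝ) + 1) * I ^ m)
      = (((m : ℝ) / z ^ 2) * ((m : ℝ) - 1) * I ^ (m - 2)) * (φ a * φ a)
        + ((-(2 * ((m : ℝ) / z ^ 2) * (m : ℝ) * I ^ (m - 1))) * φ a
        + ((m : ℝ) / z ^ 2) * ((m : ℝ) + 1) * I ^ m) := by
    intro a; ring
  rw [show (∫ a, ((m : ℝ) / z ^ 2) *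
      (((m : ℝ) - 1) * (φ a * φ a) * I ^ (m - 2)
        - (m : ℝ) * (φ a + φ a) * I ^ (m - 1)
        + ((m : ℝ) + 1) * I ^ m) ∂η) =
      ∫ a, ((((m : ℝ) / z ^ 2) * ((m : ℝ) - 1) * I ^ (m - 2)) * (φ a * φ a)
        + ((-(2 * ((m : ℝ) / z ^ 2) * (m : ℝ) * I ^ (m - 1))) * φ a
        + ((m : ℝ) / z ^ 2) * ((m : ℝ) + 1) * I ^ m)) ∂η from
      integral_congr_ae (ae_of_all _ e)]
  have hi1 : Integrable (fun a => (-(2 * ((m : ℝ) / z ^ 2) * (m : ℝ) * I ^ (m - 1))) * φ a) η :=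
    hφi.const_mul _
  have hi0 : Integrable (fun _ : unitInterval => ((m : ℝ) / z ^ 2) * ((m : ℝ) + 1) * I ^ m) η :=
    integrable_const _
  have hi10 : Integrable (fun a => (-(2 * ((m : ℝ) / z ^ 2) * (m : ℝ) * I ^ (m - 1))) * φ a
      + ((m : ℝ) / z ^ 2) * ((m : ℝ) + 1) * I ^ m) η := hi1.add hi0
  have hi2 : Integrable (fun a => (((m : ℝ) / z ^ 2) * ((m : ℝ) - 1) * I ^ (m - 2)) * (φ a * φ a)) η :=
    hφφi.const_mul _
  rw [integral_add hi2 hi10, integral_add hi1 hi0,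
    integral_const_mul, integral_const_mul, integral_const, h1, h2]
  simp only [smul_eq_mul, measureReal_def, ← hzdef]
  obtain ⟨k, rfl⟩ : ∃ k, m = k + 2 := ⟨m - 2, by omega⟩
  have hk2 : k + 2 - 2 = k := by omega
  have hk1 : k + 2 - 1 = k + 1 := by omega
  rw [hk2, hk1]
  have hzne : z ≠ 0 := ne_of_gt hz
  field_simp
  ring
end

section
/- Let η be a finite measure on [0,1] with total mass z := η([0,1]) > 0, let ρ := z⁻¹η, let φ : [0,1] → ℝ be bounded measurable, m ≥ 2 an integer, ψ : (0,∞) → ℝ twice differentiable at z, and σ², β ≥ 0. With F'(η;a) := ψ'(z)·⟨φ,ρ⟩^m + m·(ψ(z)/z)·(φ(a)⟨φ,ρ⟩^{m-1} − ⟨φ,ρ⟩^m) and F''(η;a,b) := ψ''(z)·⟨φ,ρ⟩^m + m·(ψ'(z)/z)·[(φ(a)+φ(b))⟨φ,ρ⟩^{m-1} − 2⟨φ,ρ⟩^m] + m·(ψ(z)/z²)·[(m−1)φ(a)φ(b)⟨φ,ρ⟩^{m-2} − m(φ(a)+φ(b))⟨φ,ρ⟩^{m-1} + (m+1)⟨φ,ρ⟩^m],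 one has (σ²/2)·∫₀¹ F''(η;a,a) η(da) + β·F'(η;0) = [ z·(σ²/2)·ψ''(z) + β·ψ'(z) ]·⟨φ,ρ⟩^m + (ψ(z)/z)·[ σ²·(m(m−1)/2)·(⟨φ²,ρ⟩·⟨φ,ρ⟩^{m-2} − ⟨φ,ρ⟩^m) + β·m·(φ(0)·⟨φ,ρ⟩^{m-1} − ⟨φ,ρ⟩^m) ]. -/
open MeasureTheory Real Set

/-- Generator decomposition from the proof of Proposition 3.4: for test functions
`F(η) = ψ(|η|)⟨φ,η/|η|⟩^m`, the continuous part of the measure-valued branching generator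
splits into the total-mass CBI generator acting on `ψ` plus `z⁻¹` times the
Fleming-Viot-with-immigration generator acting on `ρ`. -/
theorem stmt7 (η : Measure unitInterval) [IsFiniteMeasure η] (hη : η Set.univ ≠ 0)
    (φ : unitInterval → ℝ) (hφm : Measurable φ) (C : ℝ) (hφb : ∀ x, |φ x| ≤ C)
    (m : ℕ) (hm : 2 ≤ m) (ψ ψ' : ℝ → ℝ) (ψ'' : ℝ)
    (hψ : HasDerivAt ψ (ψ' (η Set.univ).toReal) (η Set.univ).toReal)
    (hψ' : HasDerivAt ψ' ψ'' (η Set.univ).toReal)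
    (σ2 β : ℝ) (hσ : 0 ≤ σ2) (hβ : 0 ≤ β) :
    (σ2 / 2) *
        ∫ a, (ψ'' * (∫ x, φ x ∂((η Set.univ)⁻¹ • η)) ^ m
          + (m : ℝ) * (ψ' ((η Set.univ).toReal) / (η Set.univ).toReal) *
            ((φ a + φ a) * (∫ x, φ x ∂((η Set.univ)⁻¹ • η)) ^ (m - 1)
              - 2 * (∫ x, φ x ∂((η Set.univ)⁻¹ • η)) ^ m)
          + (m : ℝ) * (ψ ((η Set.univ).toReal) / (η Set.univ).toReal ^ 2) *
            (((m : ℝ) - 1) * (φ a * φ a) * (∫ x, φ x ∂((η Set.univ)⁻¹ • η)) ^ (m - 2)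
              - (m : ℝ) * (φ a + φ a) * (∫ x, φ x ∂((η Set.univ)⁻¹ • η)) ^ (m - 1)
              + ((m : ℝ) + 1) * (∫ x, φ x ∂((η Set.univ)⁻¹ • η)) ^ m)) ∂η
      + β * (ψ' ((η Set.univ).toReal) * (∫ x, φ x ∂((η Set.univ)⁻¹ • η)) ^ m
          + (m : ℝ) * (ψ ((η Set.univ).toReal) / (η Set.univ).toReal) *
            (φ 0 * (∫ x, φ x ∂((η Set.univ)⁻¹ • η)) ^ (m - 1)
              - (∫ x, φ x ∂((η Set.univ)⁻¹ • η)) ^ m)) =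
    ((η Set.univ).toReal * (σ2 / 2) * ψ'' + β * ψ' ((η Set.univ).toReal)) *
        (∫ x, φ x ∂((η Set.univ)⁻¹ • η)) ^ m
      + (ψ ((η Set.univ).toReal) / (η Set.univ).toReal) *
        (σ2 * ((m : ℝ) * ((m : ℝ) - 1) / 2) *
            ((∫ x, φ x ^ 2 ∂((η Set.univ)⁻¹ • η)) *
                (∫ x, φ x ∂((η Set.univ)⁻¹ • η)) ^ (m - 2)
              - (∫ x, φ x ∂((η Set.univ)⁻¹ • η)) ^ m)
          + β * (m : ℝ) *
            (φ 0 * (∫ x, φ x ∂((η Set.univ)⁻¹ • η)) ^ (m - 1)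
              - (∫ x, φ x ∂((η Set.univ)⁻¹ • η)) ^ m)) := by
  obtain ⟨k, rfl⟩ : ∃ k, m = k + 2 := ⟨m - 2, by omega⟩
  set z : ℝ := (η Set.univ).toReal with hzdef
  have hzpos : 0 < z := ENNReal.toReal_pos hη (measure_ne_top η _)
  have hz : z ≠ 0 := hzpos.ne'
  -- integrals w.r.t. ρ in terms of integrals w.r.t. η
  have hsmul : ∀ g : unitInterval → ℝ,
      (∫ x, g x ∂((η Set.univ)⁻¹ • η)) = z⁻¹ * ∫ x, g x ∂η := by
    intro g
    rw [integral_smul_measure, ENNReal.toReal_inv, smul_eq_mul]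
  -- integrability
  have hint1 : Integrable φ η :=
    ⟨hφm.aestronglyMeasurable, HasFiniteIntegral.of_bounded (C := C)
      (Filter.Eventually.of_forall fun x => hφb x)⟩
  have hint2 : Integrable (fun a => φ a ^ 2) η :=
    ⟨(hφm.pow_const 2).aestronglyMeasurable, HasFiniteIntegral.of_bounded (C := C ^ 2)
      (Filter.Eventually.of_forall fun x => by
        rw [Real.norm_eq_abs, abs_pow, sq_abs, ← sq_abs]
        exact pow_le_pow_left₀ (abs_nonneg _) (hφb x) 2)⟩
  set I : ℝ := ∫ x, φ x ∂η with hIdef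
  set J : ℝ := ∫ x, φ x ^ 2 ∂η with hJdef
  set P : ℝ := ∫ x, φ x ∂((η Set.univ)⁻¹ • η) with hPdef
  have hP : P = z⁻¹ * I := hsmul φ
  have hQ : (∫ x, φ x ^ 2 ∂((η Set.univ)⁻¹ • η)) = z⁻¹ * J := hsmul (fun x => φ x ^ 2)
  -- abbreviate constants
  set c0 : ℝ := ψ'' * P ^ (k + 2)
      + ((k : ℝ) + 2) * (ψ' z / z) * (-2 * P ^ (k + 2))
      + ((k : ℝ) + 2) * (ψ z / z ^ 2) * (((k : ℝ) + 2 + 1) * P ^ (k + 2)) with hc0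
  set c1 : ℝ := ((k : ℝ) + 2) * (ψ' z / z) * (2 * P ^ (k + 1))
      + ((k : ℝ) + 2) * (ψ z / z ^ 2) * (-(((k : ℝ) + 2) * 2) * P ^ (k + 1)) with hc1
  set c2 : ℝ := ((k : ℝ) + 2) * (ψ z / z ^ 2) * (((k : ℝ) + 2 - 1) * P ^ k) with hc2
  have hkey : (∫ a, (ψ'' * P ^ (k + 2)
          + ((k : ℝ) + 2) * (ψ' z / z) *
            ((φ a + φ a) * P ^ (k + 2 - 1) - 2 * P ^ (k + 2))
          + ((k : ℝ) + 2) * (ψ z / z ^ 2) *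
            ((((k : ℝ) + 2) - 1) * (φ a * φ a) * P ^ (k + 2 - 2)
              - ((k : ℝ) + 2) * (φ a + φ a) * P ^ (k + 2 - 1)
              + (((k : ℝ) + 2) + 1) * P ^ (k + 2))) ∂η)
      = c0 * z + c1 * I + c2 * J := by
    have heq : (fun a => ψ'' * P ^ (k + 2)
          + ((k : ℝ) + 2) * (ψ' z / z) *
            ((φ a + φ a) * P ^ (k + 2 - 1) - 2 * P ^ (k + 2))
          + ((k : ℝ) + 2) * (ψ z / z ^ 2) *
            ((((k : ℝ) + 2) - 1) * (φ a * φ a) * P ^ (k + 2 - 2)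
              - ((k : ℝ) + 2) * (φ a + φ a) * P ^ (k + 2 - 1)
              + (((k : ℝ) + 2) + 1) * P ^ (k + 2)))
        = fun a => c0 + c1 * φ a + c2 * φ a ^ 2 := by
      funext a
      simp only [hc0, hc1, hc2, show k + 2 - 1 = k + 1 from rfl, show k + 2 - 2 = k from rfl]
      ring
    rw [heq, integral_add (by exact (integrable_const c0).add (hint1.const_mul c1))
        (hint2.const_mul c2),
      integral_add (integrable_const c0) (hint1.const_mul c1),
      integral_const, integral_const_mul, integral_const_mul, smul_eq_mul]
    rw [← hIdef, ← hJdef, measureReal_def, ← hzdef]; ring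
  simp only [show k + 2 - 1 = k + 1 from rfl, show k + 2 - 2 = k from rfl] at hkey
  push_cast
  rw [hkey, hc0, hc1, hc2, hP, hQ]
  have h1 : z⁻¹ * z = 1 := inv_mul_cancel₀ hz
  field_simp
  ring_nf
  field_simp
  ring
end

section
/- Let η be a finite measure on [0,1] with total mass z := η([0,1]) > 0, let ρ := z⁻¹η, let φ : [0,1] → ℝ be bounded measurable, m ≥ 1 an integer, and let ν̂₁ be a measure on (0,∞) with ∫₀^∞ (h ∧ h²) ν̂₁(dh) < ∞. For h > 0 set r_h := h/(z+h). Then the function (a,h) ↦ ⟨φ,(η+h·δ_a)/(z+h)⟩^m − ⟨φ,ρ⟩^m − h·(m/z)·(φ(a)·⟨φ,ρ⟩^{m-1} − ⟨φ,ρ⟩^m) is absolutely integrable with respect to η(da)⊗ν̂₁(dh), and ∫₀¹ η(da) ∫₀^∞ [ ⟨φ,(η+h·δ_a)/(z+h)⟩^m − ⟨φ,ρ⟩^m − h·(m/z)·(φ(a)·⟨φ,ρ⟩^{m-1} − ⟨φ,ρ⟩^m) ] ν̂₁(dh) = z·∫₀^∞ ν̂₁(dh) ∫₀¹ [ ⟨φ,(1−r_h)·ρ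 + r_h·δ_a⟩^m − ⟨φ,ρ⟩^m ] ρ(da). -/
open MeasureTheory Real Set


lemma aux_pow_diff {C : ℝ} (hC : 1 ≤ C) {x y : ℝ} (hx : |x| ≤ C) (hy : |y| ≤ C)
    {n m : ℕ} (hnm : n ≤ m + 1) : |x ^ n - y ^ n| ≤ n * C ^ m * |x - y| := by
  rw [← geom_sum₂_mul x y n, abs_mul]
  have hsum : |∑ i ∈ Finset.range n, x ^ i * y ^ (n - 1 - i)| ≤ n * C ^ m := by
    calc |∑ i ∈ Finset.range n, x ^ i * y ^ (n - 1 - i)|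
        ≤ ∑ i ∈ Finset.range n, |x ^ i * y ^ (n - 1 - i)| := Finset.abs_sum_le_sum_abs _ _
      _ ≤ ∑ _i ∈ Finset.range n, C ^ m := by
          refine Finset.sum_le_sum fun i hi => ?_
          rw [Finset.mem_range] at hi
          rw [abs_mul, abs_pow, abs_pow]
          calc |x| ^ i * |y| ^ (n - 1 - i) ≤ C ^ i * C ^ (n - 1 - i) := by
                have h0 : (0:ℝ) ≤ |x| := abs_nonneg x
                have h1 : (0:ℝ) ≤ |y| := abs_nonneg y
                exact mul_le_mul (pow_le_pow_left₀ h0 hx i) (pow_le_pow_left₀ h1 hy _)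
                  (pow_nonneg h1 _) (pow_nonneg (le_trans h0 hx) i)
            _ = C ^ (i + (n - 1 - i)) := (pow_add C i _).symm
            _ ≤ C ^ m := pow_le_pow_right₀ hC (by omega)
      _ = n * C ^ m := by rw [Finset.sum_const, Finset.card_range, nsmul_eq_mul]
  have h2 : (0:ℝ) ≤ |x - y| := abs_nonneg _
  exact mul_le_mul_of_nonneg_right hsum h2

lemma aux_second_order {C : ℝ} (hC : 1 ≤ C) {x y : ℝ} (hx : |x| ≤ C) (hy : |y| ≤ C)
    (m : ℕ) :
    |x ^ m - y ^ m - m * y ^ (m - 1) * (x - y)| ≤ m ^ 2 * C ^ (2 * m) * (x - y) ^ 2 := by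
  have key : x ^ m - y ^ m - (m : ℝ) * y ^ (m - 1) * (x - y)
      = (∑ i ∈ Finset.range m, (x ^ i * y ^ (m - 1 - i) - y ^ (m - 1))) * (x - y) := by
    rw [Finset.sum_sub_distrib, Finset.sum_const, Finset.card_range, nsmul_eq_mul,
      sub_mul, geom_sum₂_mul]
  rw [key, abs_mul]
  have hterm : ∀ i ∈ Finset.range m,
      |x ^ i * y ^ (m - 1 - i) - y ^ (m - 1)| ≤ m * C ^ (2 * m - 1) * |x - y| := by
    intro i hi
    rw [Finset.mem_range] at hi
    have hsplit : y ^ (m - 1) = y ^ (m - 1 - i) * y ^ i := by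
      rw [← pow_add]; congr 1; omega
    rw [hsplit, show x ^ i * y ^ (m - 1 - i) - y ^ (m - 1 - i) * y ^ i
      = y ^ (m - 1 - i) * (x ^ i - y ^ i) by ring, abs_mul]
    have h1 : |y ^ (m - 1 - i)| ≤ C ^ (m - 1 - i) := by
      rw [abs_pow]; exact pow_le_pow_left₀ (abs_nonneg y) hy _
    have h2 : |x ^ i - y ^ i| ≤ i * C ^ m * |x - y| :=
      aux_pow_diff hC hx hy (by omega)
    calc |y ^ (m - 1 - i)| * |x ^ i - y ^ i|
        ≤ C ^ (m - 1 - i) * (i * C ^ m * |x - y|) := by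
          exact mul_le_mul h1 h2 (abs_nonneg _) (by positivity)
      _ = (i : ℝ) * (C ^ (m - 1 - i) * C ^ m) * |x - y| := by ring
      _ ≤ m * C ^ (2 * m - 1) * |x - y| := by
          have hc : C ^ (m - 1 - i) * C ^ m ≤ C ^ (2 * m - 1) := by
            rw [← pow_add]; exact pow_le_pow_right₀ hC (by omega)
          have him : (i : ℝ) ≤ m := by exact_mod_cast hi.le
          gcongr
  have hsum : |∑ i ∈ Finset.range m, (x ^ i * y ^ (m - 1 - i) - y ^ (m - 1))|
      ≤ m * (m * C ^ (2 * m - 1) * |x - y|) := by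
    calc |∑ i ∈ Finset.range m, (x ^ i * y ^ (m - 1 - i) - y ^ (m - 1))|
        ≤ ∑ i ∈ Finset.range m, |x ^ i * y ^ (m - 1 - i) - y ^ (m - 1)| :=
          Finset.abs_sum_le_sum_abs _ _
      _ ≤ ∑ _i ∈ Finset.range m, m * C ^ (2 * m - 1) * |x - y| :=
          Finset.sum_le_sum hterm
      _ = m * (m * C ^ (2 * m - 1) * |x - y|) := by
          rw [Finset.sum_const, Finset.card_range, nsmul_eq_mul]
  calc |∑ i ∈ Finset.range m, (x ^ i * y ^ (m - 1 - i) - y ^ (m - 1))| * |x - y|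
      ≤ (m * (m * C ^ (2 * m - 1) * |x - y|)) * |x - y| :=
        mul_le_mul_of_nonneg_right hsum (abs_nonneg _)
    _ = m ^ 2 * C ^ (2 * m - 1) * |x - y| ^ 2 := by ring
    _ ≤ m ^ 2 * C ^ (2 * m) * (x - y) ^ 2 := by
        rw [sq_abs]
        have hcc : C ^ (2 * m - 1) ≤ C ^ (2 * m) := pow_le_pow_right₀ hC (by omega)
        gcongr
lemma aux_convex_abs {C z h u v : ℝ} (hz : 0 < z) (hh : 0 ≤ h)
    (hu : |u| ≤ C) (hv : |v| ≤ C) : |(z + h)⁻¹ * (z * v + h * u)| ≤ C := by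
  have hzh : 0 < z + h := by linarith
  rw [abs_mul, abs_of_pos (inv_pos.2 hzh), inv_mul_le_iff₀ hzh]
  calc |z * v + h * u| ≤ |z * v| + |h * u| := abs_add_le _ _
    _ = z * |v| + h * |u| := by rw [abs_mul, abs_mul, abs_of_pos hz, abs_of_nonneg hh]
    _ ≤ z * C + h * C := add_le_add (mul_le_mul_of_nonneg_left hv hz.le)
          (mul_le_mul_of_nonneg_left hu hh)
    _ = C * (z + h) := by ring
    _ = (z + h) * C := by ring

lemma aux_q_le {z h : ℝ} (hz : 0 < z) (hh : 0 < h) :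
    h ^ 2 / (z * (z + h)) ≤ (1 + z⁻¹) ^ 2 * min h (h ^ 2) := by
  have hzh : 0 < z + h := by linarith
  have hzi : 0 ≤ z⁻¹ := (inv_pos.2 hz).le
  rcases le_total h 1 with h1 | h1
  · rw [min_eq_right (by nlinarith : h ^ 2 ≤ h)]
    calc h ^ 2 / (z * (z + h)) ≤ h ^ 2 / (z * z) :=
          div_le_div_of_nonneg_left (sq_nonneg h) (by positivity) (by nlinarith)
      _ = z⁻¹ * z⁻¹ * h ^ 2 := by rw [div_eq_mul_inv, mul_inv]; ring
      _ ≤ (1 + z⁻¹) ^ 2 * h ^ 2 := by nlinarith [sq_nonneg h]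
  · rw [min_eq_left (by nlinarith : h ≤ h ^ 2)]
    calc h ^ 2 / (z * (z + h)) ≤ h ^ 2 / (z * h) :=
          div_le_div_of_nonneg_left (sq_nonneg h) (by positivity) (by nlinarith)
      _ = z⁻¹ * h := by field_simp [hz.ne', hh.ne']
      _ ≤ (1 + z⁻¹) ^ 2 * h := by
          nlinarith [mul_nonneg (by nlinarith : (0:ℝ) ≤ 1 + z⁻¹ + z⁻¹ ^ 2)
            (by linarith : (0:ℝ) ≤ h)]

set_option maxHeartbeats 1000000 in
lemma key_bound {C z : ℝ} (hC : 1 ≤ C) (hz : 0 < z) {m : ℕ} (hm : 1 ≤ m)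
    {u v : ℝ} (hu : |u| ≤ C) (hv : |v| ≤ C) {h : ℝ} (hh : 0 < h) :
    |((z + h)⁻¹ * (z * v + h * u)) ^ m - v ^ m -
      h * ((m / z) * (u * v ^ (m - 1) - v ^ m))| ≤
    ((4 * m ^ 2 * C ^ (2 * m + 2) + 2 * m * C ^ (m + 1)) * (1 + z⁻¹) ^ 2)
      * min h (h ^ 2) := by
  have hzh : 0 < z + h := by linarith
  have hC0 : (0:ℝ) < C := lt_of_lt_of_le one_pos hC
  set r : ℝ := h / (z + h) with hr_def
  set x : ℝ := (z + h)⁻¹ * (z * v + h * u) with hx_def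
  have hxC : |x| ≤ C := aux_convex_abs hz hh.le hu hv
  have hxv : x - v = r * (u - v) := by rw [hx_def, hr_def]; field_simp; ring
  have hvm : v ^ m = v ^ (m - 1) * v := by
    conv_lhs => rw [show m = (m - 1) + 1 by omega]
    rw [pow_succ]
  have hA : x ^ m - v ^ m - h * ((m / z) * (u * v ^ (m - 1) - v ^ m))
      = (x ^ m - v ^ m - m * v ^ (m - 1) * (x - v))
        + (m : ℝ) * v ^ (m - 1) * (u - v) * (r - h / z) := by
    rw [hxv]
    simp only [hvm]
    rw [hr_def]
    field_simp
    ring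
  rw [hA]
  have hq_eq : r - h / z = -(h ^ 2 / (z * (z + h))) := by
    rw [hr_def]; field_simp; ring
  set q : ℝ := h ^ 2 / (z * (z + h)) with hq_def
  have hq0 : 0 ≤ q := by positivity
  have huv : |u - v| ≤ 2 * C := by
    calc |u - v| ≤ |u| + |v| := abs_sub _ _
      _ ≤ 2 * C := by linarith
  have hT : |x ^ m - v ^ m - m * v ^ (m - 1) * (x - v)|
      ≤ 4 * m ^ 2 * C ^ (2 * m + 2) * q := by
    calc |x ^ m - v ^ m - m * v ^ (m - 1) * (x - v)|
        ≤ m ^ 2 * C ^ (2 * m) * (x - v) ^ 2 := aux_second_order hC hxC hv m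
      _ ≤ m ^ 2 * C ^ (2 * m) * (4 * C ^ 2 * q) := by
          have h1 : (x - v) ^ 2 = r ^ 2 * (u - v) ^ 2 := by rw [hxv]; ring
          have h2 : (u - v) ^ 2 ≤ 4 * C ^ 2 := by
            calc (u - v) ^ 2 = |u - v| ^ 2 := (sq_abs _).symm
              _ ≤ (2 * C) ^ 2 := by nlinarith [abs_nonneg (u - v)]
              _ = 4 * C ^ 2 := by ring
          have hr2q : r ^ 2 ≤ q := by
            rw [hr_def, hq_def, div_pow]
            exact div_le_div_of_nonneg_left (sq_nonneg h) (by positivity)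
              (by nlinarith)
          have h6 : (x - v) ^ 2 ≤ 4 * C ^ 2 * q := by
            rw [h1]
            nlinarith [mul_le_mul h2 hr2q (sq_nonneg r)
              (by positivity : (0:ℝ) ≤ 4 * C ^ 2)]
          exact mul_le_mul_of_nonneg_left h6 (by positivity)
      _ = 4 * m ^ 2 * C ^ (2 * m + 2) * q := by rw [pow_add]; ring
  have hS : |(m : ℝ) * v ^ (m - 1) * (u - v) * (r - h / z)|
      ≤ 2 * m * C ^ (m + 1) * q := by
    rw [hq_eq, abs_mul, abs_neg, abs_of_nonneg hq0]
    have h3 : |(m : ℝ) * v ^ (m - 1) * (u - v)| ≤ 2 * m * C ^ (m + 1) := by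
      rw [abs_mul, abs_mul, abs_pow, Nat.abs_cast]
      have h4 : |v| ^ (m - 1) ≤ C ^ m := by
        calc |v| ^ (m - 1) ≤ C ^ (m - 1) := pow_le_pow_left₀ (abs_nonneg v) hv _
          _ ≤ C ^ m := pow_le_pow_right₀ hC (by omega)
      calc (m : ℝ) * |v| ^ (m - 1) * |u - v| ≤ (m : ℝ) * C ^ m * (2 * C) := by
            gcongr
        _ = 2 * m * C ^ (m + 1) := by rw [pow_succ]; ring
    exact mul_le_mul_of_nonneg_right h3 hq0
  calc |(x ^ m - v ^ m - m * v ^ (m - 1) * (x - v))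
          + (m : ℝ) * v ^ (m - 1) * (u - v) * (r - h / z)|
      ≤ |x ^ m - v ^ m - m * v ^ (m - 1) * (x - v)|
          + |(m : ℝ) * v ^ (m - 1) * (u - v) * (r - h / z)| := abs_add_le _ _
    _ ≤ (4 * m ^ 2 * C ^ (2 * m + 2) + 2 * m * C ^ (m + 1)) * q := by linarith
    _ ≤ (4 * m ^ 2 * C ^ (2 * m + 2) + 2 * m * C ^ (m + 1))
          * ((1 + z⁻¹) ^ 2 * min h (h ^ 2)) :=
        mul_le_mul_of_nonneg_left (aux_q_le hz hh) (by positivity)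
    _ = ((4 * m ^ 2 * C ^ (2 * m + 2) + 2 * m * C ^ (m + 1)) * (1 + z⁻¹) ^ 2)
          * min h (h ^ 2) := by ring
set_option maxHeartbeats 1000000 in
/-- Lemma 5.3 of the paper for the reproduction part of the generator: the function
`(a,h) ↦ ⟨φ,(η+hδ_a)/(z+h)⟩^m − ⟨φ,ρ⟩^m − h F'(η;a)` is `η ⊗ ν̂₁`-integrable and the
double integral can be rewritten in terms of resampling events `(1−r)ρ + rδ_a`
with `r = h/(z+h)`. -/
theorem stmt8 (η : Measure unitInterval) [IsFiniteMeasure η] (hη : η Set.univ ≠ 0)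
    (φ : unitInterval → ℝ) (hφm : Measurable φ) (C : ℝ) (hφb : ∀ x, |φ x| ≤ C)
    (m : ℕ) (hm : 1 ≤ m)
    (ν₁ : Measure ℝ) [SigmaFinite ν₁] (hν₁car : ν₁ (Ioi (0:ℝ))ᶜ = 0)
    (hν₁int : ∫⁻ h, ENNReal.ofReal (min h (h ^ 2)) ∂ν₁ < ⊤) :
    MeasureTheory.Integrable
      (fun p : unitInterval × ℝ =>
        (((η Set.univ).toReal + p.2)⁻¹ *
            ∫ x, φ x ∂(η + ENNReal.ofReal p.2 • Measure.dirac p.1)) ^ m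
          - (∫ x, φ x ∂((η Set.univ)⁻¹ • η)) ^ m
          - p.2 * (((m : ℝ) / (η Set.univ).toReal) *
              (φ p.1 * (∫ x, φ x ∂((η Set.univ)⁻¹ • η)) ^ (m - 1)
                - (∫ x, φ x ∂((η Set.univ)⁻¹ • η)) ^ m)))
      (η.prod ν₁)
    ∧ ∫ a, (∫ h,
          ((((η Set.univ).toReal + h)⁻¹ *
              ∫ x, φ x ∂(η + ENNReal.ofReal h • Measure.dirac a)) ^ m
            - (∫ x, φ x ∂((η Set.univ)⁻¹ • η)) ^ m
            - h * (((m : ℝ) / (η Set.univ).toReal) *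
                (φ a * (∫ x, φ x ∂((η Set.univ)⁻¹ • η)) ^ (m - 1)
                  - (∫ x, φ x ∂((η Set.univ)⁻¹ • η)) ^ m))) ∂ν₁) ∂η =
      (η Set.univ).toReal *
        ∫ h, (∫ a,
            ((∫ x, φ x ∂(ENNReal.ofReal (1 - h / ((η Set.univ).toReal + h)) •
                  ((η Set.univ)⁻¹ • η)
                + ENNReal.ofReal (h / ((η Set.univ).toReal + h)) •
                  Measure.dirac a)) ^ m
              - (∫ x, φ x ∂((η Set.univ)⁻¹ • η)) ^ m) ∂((η Set.univ)⁻¹ • η)) ∂ν₁ := by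
  have hzpos : 0 < (η Set.univ).toReal := ENNReal.toReal_pos hη (measure_ne_top η _)
  set z : ℝ := (η Set.univ).toReal with hz_def
  have hz0 : z ≠ 0 := hzpos.ne'
  have hinv_ne_top : (η Set.univ)⁻¹ ≠ ⊤ := ENNReal.inv_ne_top.mpr hη
  set B : ℝ := max C 1 with hB_def
  have hB1 : (1:ℝ) ≤ B := le_max_right _ _
  have hB0 : (0:ℝ) < B := lt_of_lt_of_le one_pos hB1
  have hφB : ∀ x, |φ x| ≤ B := fun x => (hφb x).trans (le_max_left _ _)
  -- integrability of φ with respect to the relevant measures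
  have hφint : Integrable φ η :=
    (integrable_const B).mono' hφm.aestronglyMeasurable
      (ae_of_all _ fun x => by simpa [Real.norm_eq_abs] using hφB x)
  have hφdirac : ∀ a : unitInterval, Integrable φ (Measure.dirac a) := fun a =>
    (integrable_const B).mono' hφm.aestronglyMeasurable
      (ae_of_all _ fun x => by simpa [Real.norm_eq_abs] using hφB x)
  have hφρ : Integrable φ ((η Set.univ)⁻¹ • η) := hφint.smul_measure hinv_ne_top
  -- basic integral computations
  have hμeq : (∫ x, φ x ∂((η Set.univ)⁻¹ • η)) = z⁻¹ * ∫ x, φ x ∂η := by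
    rw [integral_smul_measure, ENNReal.toReal_inv, smul_eq_mul, hz_def]
  set I : ℝ := ∫ x, φ x ∂η with hI_def
  have hdirac : ∀ (a : unitInterval) (h : ℝ),
      (∫ x, φ x ∂(η + ENNReal.ofReal h • Measure.dirac a)) = I + max h 0 * φ a := by
    intro a h
    rw [integral_add_measure hφint ((hφdirac a).smul_measure ENNReal.ofReal_ne_top),
      integral_smul_measure, integral_dirac, ENNReal.toReal_ofReal', smul_eq_mul]
  have hμB : |z⁻¹ * I| ≤ B := by
    have hIb : |I| ≤ B * z := by
      have h1 := norm_integral_le_of_norm_le_const (μ := η) (f := φ) (C := B)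
        (ae_of_all _ fun x => by simpa [Real.norm_eq_abs] using hφB x)
      rw [Real.norm_eq_abs] at h1
      exact h1
    rw [abs_mul, abs_inv, abs_of_pos hzpos]
    calc z⁻¹ * |I| ≤ z⁻¹ * (B * z) := by
          exact mul_le_mul_of_nonneg_left hIb (inv_nonneg.2 hzpos.le)
      _ = B := by field_simp
  have hIz : I = z * (z⁻¹ * I) := by field_simp
  -- the everywhere-defined version of the integrand
  set g : unitInterval × ℝ → ℝ := fun p =>
    ((z + p.2)⁻¹ * (I + max p.2 0 * φ p.1)) ^ m - (z⁻¹ * I) ^ m -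
      p.2 * ((m / z) * (φ p.1 * (z⁻¹ * I) ^ (m - 1) - (z⁻¹ * I) ^ m)) with hg_def
  have hgp : ∀ (a : unitInterval) (h : ℝ), g (a, h) =
      ((z + h)⁻¹ * (I + max h 0 * φ a)) ^ m - (z⁻¹ * I) ^ m -
        h * ((m / z) * (φ a * (z⁻¹ * I) ^ (m - 1) - (z⁻¹ * I) ^ m)) := by
    intro a h; rw [hg_def]
  have hg_meas : Measurable g := by
    rw [hg_def]
    fun_prop
  -- the original integrand equals g
  have hFeq : (fun p : unitInterval × ℝ =>
      ((z + p.2)⁻¹ *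
          ∫ x, φ x ∂(η + ENNReal.ofReal p.2 • Measure.dirac p.1)) ^ m
        - (∫ x, φ x ∂((η Set.univ)⁻¹ • η)) ^ m
        - p.2 * (((m : ℝ) / z) *
            (φ p.1 * (∫ x, φ x ∂((η Set.univ)⁻¹ • η)) ^ (m - 1)
              - (∫ x, φ x ∂((η Set.univ)⁻¹ • η)) ^ m))) = g := by
    funext p
    rw [hgp p.1 p.2, hdirac, hμeq]
  -- a.e. positivity
  have hae_pos : ∀ᵐ h ∂ν₁, 0 < h := by
    rw [ae_iff]
    have hset : {h : ℝ | ¬ 0 < h} = (Ioi (0:ℝ))ᶜ := by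
      ext h; simp [Set.mem_Ioi]
    rw [hset]; exact hν₁car
  have hae_prod : ∀ᵐ p ∂(η.prod ν₁), 0 < p.2 := by
    rw [ae_iff]
    have hsub : {p : unitInterval × ℝ | ¬ 0 < p.2} ⊆ Set.univ ×ˢ (Ioi (0:ℝ))ᶜ := by
      intro p hp; exact ⟨trivial, by simpa [Set.mem_Ioi] using hp⟩
    refine measure_mono_null hsub ?_
    rw [Measure.prod_prod, hν₁car, mul_zero]
  -- integrability of the dominating function
  have hmin_meas : Measurable fun h : ℝ => min h (h ^ 2) := by fun_prop
  have hmin_int : Integrable (fun h : ℝ => min h (h ^ 2)) ν₁ := by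
    refine ⟨hmin_meas.aestronglyMeasurable, ?_⟩
    rw [hasFiniteIntegral_iff_ofReal
      (hae_pos.mono fun h hh => le_min hh.le (sq_nonneg h))]
    exact hν₁int
  have hD_int : Integrable (fun p : unitInterval × ℝ => min p.2 (p.2 ^ 2))
      (η.prod ν₁) := by
    have hmap : Integrable (fun h : ℝ => min h (h ^ 2))
        (Measure.map Prod.snd (η.prod ν₁)) := by
      rw [Measure.map_snd_prod]
      exact hmin_int.smul_measure (measure_ne_top η _)
    have := (integrable_map_measure hmin_meas.aestronglyMeasurable
      measurable_snd.aemeasurable).mp hmap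
    exact this
  -- the dominating bound
  set K : ℝ := (4 * m ^ 2 * B ^ (2 * m + 2) + 2 * m * B ^ (m + 1)) * (1 + z⁻¹) ^ 2
    with hK_def
  have hg_bound : ∀ᵐ p ∂(η.prod ν₁), ‖g p‖ ≤ K * min p.2 (p.2 ^ 2) := by
    filter_upwards [hae_prod] with p hp
    rw [hgp p.1 p.2, Real.norm_eq_abs, max_eq_left hp.le, hK_def]
    have hb := key_bound (C := B) (z := z) hB1 hzpos hm (hφB p.1) hμB hp
    rw [← hIz] at hb
    exact hb
  have hg_int : Integrable g (η.prod ν₁) :=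
    (hD_int.const_mul K).mono' hg_meas.aestronglyMeasurable hg_bound
  constructor
  · rw [hFeq]; exact hg_int
  -- the equality
  -- per-h computation
  have hres_int : ∀ (h : ℝ), 0 < h → ∀ a : unitInterval,
      (∫ x, φ x ∂(ENNReal.ofReal (1 - h / (z + h)) • ((η Set.univ)⁻¹ • η)
        + ENNReal.ofReal (h / (z + h)) • Measure.dirac a))
      = (z + h)⁻¹ * (I + h * φ a) := by
    intro h hh a
    have hzh : 0 < z + h := by linarith
    have hr0 : 0 ≤ h / (z + h) := by positivity
    have hr1 : h / (z + h) ≤ 1 := by rw [div_le_one hzh]; linarith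
    rw [integral_add_measure (hφρ.smul_measure ENNReal.ofReal_ne_top)
        ((hφdirac a).smul_measure ENNReal.ofReal_ne_top)]
    simp only [integral_smul_measure]
    rw [integral_dirac, ENNReal.toReal_ofReal (by linarith), ENNReal.toReal_ofReal hr0,
      ENNReal.toReal_inv, ← hz_def, ← hI_def]
    simp only [smul_eq_mul]
    field_simp
    ring
  -- integrability over η for fixed h
  have hψ_int : ∀ (h : ℝ), 0 < h → Integrable
      (fun a : unitInterval => ((z + h)⁻¹ * (I + h * φ a)) ^ m - (z⁻¹ * I) ^ m) η := by
    intro h hh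
    refine (integrable_const (B ^ m + B ^ m)).mono'
      (by fun_prop : Measurable fun a : unitInterval =>
        ((z + h)⁻¹ * (I + h * φ a)) ^ m - (z⁻¹ * I) ^ m).aestronglyMeasurable
      (ae_of_all _ fun a => ?_)
    have h1 : |(z + h)⁻¹ * (I + h * φ a)| ≤ B := by
      have := aux_convex_abs (u := φ a) (v := z⁻¹ * I) hzpos hh.le (hφB a) hμB
      rwa [← hIz] at this
    rw [Real.norm_eq_abs]
    calc |((z + h)⁻¹ * (I + h * φ a)) ^ m - (z⁻¹ * I) ^ m|
        ≤ |((z + h)⁻¹ * (I + h * φ a)) ^ m| + |(z⁻¹ * I) ^ m| := abs_sub _ _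
      _ ≤ B ^ m + B ^ m := by
          rw [abs_pow, abs_pow]
          exact add_le_add (pow_le_pow_left₀ (abs_nonneg _) h1 m)
            (pow_le_pow_left₀ (abs_nonneg _) hμB m)
  have hL_int : Integrable
      (fun a : unitInterval =>
        (m / z) * (φ a * (z⁻¹ * I) ^ (m - 1) - (z⁻¹ * I) ^ m)) η :=
    (((hφint.mul_const _).sub (integrable_const _)).const_mul _)
  have hL_zero : (∫ a, (m / z) * (φ a * (z⁻¹ * I) ^ (m - 1) - (z⁻¹ * I) ^ m) ∂η)
      = 0 := by
    rw [integral_const_mul, integral_sub (hφint.mul_const _) (integrable_const _),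
      integral_mul_const, integral_const, smul_eq_mul, measureReal_def, ← hz_def, ← hI_def]
    have hpow : (z⁻¹ * I) ^ m = (z⁻¹ * I) ^ (m - 1) * (z⁻¹ * I) := by
      rw [← pow_succ]; congr 1; omega
    rw [hpow]
    field_simp
    ring
  -- the per-h identity
  have hperh : ∀ h : ℝ, 0 < h →
      (∫ a, ((∫ x, φ x ∂(ENNReal.ofReal (1 - h / (z + h)) • ((η Set.univ)⁻¹ • η)
          + ENNReal.ofReal (h / (z + h)) • Measure.dirac a)) ^ m
          - (z⁻¹ * I) ^ m) ∂((η Set.univ)⁻¹ • η))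
      = z⁻¹ * ∫ a, g (a, h) ∂η := by
    intro h hh
    have step1 : (∫ a, ((∫ x, φ x ∂(ENNReal.ofReal (1 - h / (z + h)) •
          ((η Set.univ)⁻¹ • η)
          + ENNReal.ofReal (h / (z + h)) • Measure.dirac a)) ^ m
          - (z⁻¹ * I) ^ m) ∂((η Set.univ)⁻¹ • η))
        = ∫ a, (((z + h)⁻¹ * (I + h * φ a)) ^ m - (z⁻¹ * I) ^ m)
            ∂((η Set.univ)⁻¹ • η) := by
      refine integral_congr_ae (ae_of_all _ fun a => ?_)
      dsimp only
      rw [hres_int h hh a]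
    rw [step1, integral_smul_measure, ENNReal.toReal_inv, ← hz_def, smul_eq_mul]
    congr 1
    have step2 : (∫ a, g (a, h) ∂η)
        = ∫ a, ((((z + h)⁻¹ * (I + h * φ a)) ^ m - (z⁻¹ * I) ^ m)
            - h * ((m / z) * (φ a * (z⁻¹ * I) ^ (m - 1) - (z⁻¹ * I) ^ m))) ∂η := by
      refine integral_congr_ae (ae_of_all _ fun a => ?_)
      dsimp only
      rw [hgp a h, max_eq_left hh.le]
    rw [step2, integral_sub (hψ_int h hh) (hL_int.const_mul h),
      integral_const_mul, hL_zero, mul_zero, sub_zero]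
  -- final assembly
  simp only [hdirac, hμeq]
  simp only [← hgp]
  rw [show (∫ a, ∫ h, g (a, h) ∂ν₁ ∂η) = ∫ h, ∫ a, g (a, h) ∂η ∂ν₁ from
    integral_integral_swap hg_int]
  have stepR : (∫ h, (∫ a, ((∫ x, φ x ∂(ENNReal.ofReal (1 - h / (z + h)) •
        ((η Set.univ)⁻¹ • η)
        + ENNReal.ofReal (h / (z + h)) • Measure.dirac a)) ^ m
        - (z⁻¹ * I) ^ m) ∂((η Set.univ)⁻¹ • η)) ∂ν₁)
      = ∫ h, (z⁻¹ * ∫ a, g (a, h) ∂η) ∂ν₁ :=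
    integral_congr_ae (hae_pos.mono fun h hh => hperh h hh)
  rw [stepR, integral_const_mul, ← mul_assoc, mul_inv_cancel₀ hz0, one_mul]
end

section
/- Let α ∈ (1,2), c, c' > 0, let η be a finite measure on [0,1] with total mass z := η([0,1]) > 0, let ρ := z⁻¹η, let φ : [0,1] → ℝ be bounded measurable and m ≥ 1 an integer. For h > 0 set r_h := h/(z+h). Then all integrals below converge absolutely, and z^{α−1}·{ ∫₀^∞ c'·h^{−α}·[ ⟨φ,(1−r_h)·ρ + r_h·δ₀⟩^m − ⟨φ,ρ⟩^m ] dh + ∫₀¹ η(da) ∫₀^∞ c·h^{−1−α}·[ ⟨φ,(η+h·δ_a)/(z+h)⟩^m − ⟨φ,ρ⟩^m − h·(m/z)·(φ(a)·⟨φ,ρ⟩^{m-1} − ⟨φ,ρ⟩^m) ] dh } = c'·∫₀¹ r^{−α}(1−r)^{α−2}·[ ⟨φ,(1−r)·ρ + r·δ₀⟩^m − ⟨φ,ρ⟩^m ] dr + c·∫₀¹ r^{−1−α}(1−r)^{α−1}·( ∫₀¹ [ ⟨φ,(1−r)·ρ + r·δ_a⟩^m − ⟨φ,ρ⟩^m ]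 ρ(da) ) dr. -/
open MeasureTheory Real Set

lemma beta_integrableOn (p q : ℝ) (hp : -1 < p) (hq : -1 < q) :
    IntegrableOn (fun r : ℝ => r ^ p * (1-r) ^ q) (Ioo (0:ℝ) 1) := by
  have hc : IntervalIntegrable (fun x =>
      (x : ℂ) ^ ((p+1 : ℂ) - 1) * (1 - (x : ℂ)) ^ ((q+1:ℂ) - 1) : ℝ → ℂ) volume 0 1 := by
    apply Complex.betaIntegral_convergent <;> simp <;> linarith
  have hio : IntegrableOn (fun x =>
      (x : ℂ) ^ ((p+1 : ℂ) - 1) * (1 - (x : ℂ)) ^ ((q+1:ℂ) - 1) : ℝ → ℂ) (Ioo (0:ℝ) 1) := by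
    have := (intervalIntegrable_iff_integrableOn_Ioo_of_le (by norm_num : (0:ℝ) ≤ 1)).mp hc
    exact this
  have hre : IntegrableOn (fun x : ℝ =>
      ((x : ℂ) ^ ((p+1 : ℂ) - 1) * (1 - (x : ℂ)) ^ ((q+1:ℂ) - 1)).re) (Ioo (0:ℝ) 1) := hio.re
  apply hre.congr_fun ?_ measurableSet_Ioo
  intro x hx
  have hx0 : (0:ℝ) ≤ x := le_of_lt hx.1
  have hx1 : (0:ℝ) ≤ 1 - x := by linarith [hx.2]
  have h1 : ((p+1 : ℂ) - 1) = (p : ℂ) := by ring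
  have h2 : ((q+1 : ℂ) - 1) = (q : ℂ) := by ring
  rw [h1, h2]
  have e1 : (x : ℂ) ^ (p : ℂ) = ((x ^ p : ℝ) : ℂ) := (Complex.ofReal_cpow hx0 p).symm
  have e2 : (1 - (x : ℂ)) ^ (q : ℂ) = (((1 - x) ^ q : ℝ) : ℂ) := by
    rw [show (1 - (x:ℂ)) = ((1 - x : ℝ) : ℂ) by push_cast; ring]
    exact (Complex.ofReal_cpow hx1 q).symm
  simp only [e1, e2, ← Complex.ofReal_mul, Complex.ofReal_re]

lemma taylor2_bound (n : ℕ) (x u r A U : ℝ) (hx : |x| ≤ A) (hu : |u| ≤ U)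
    (hr : 0 ≤ r) (hr1 : r ≤ 1) :
    |(x + r*u)^(n+1) - x^(n+1) - r*((n+1)*(x^n*u))| ≤ r^2 * (A+U)^(n+1) := by
  have hA : 0 ≤ A := le_trans (abs_nonneg x) hx
  have hU : 0 ≤ U := le_trans (abs_nonneg u) hu
  have hexp := add_pow x (r*u) (n+1)
  rw [Finset.sum_range_succ, Finset.sum_range_succ] at hexp
  simp only [Nat.sub_self, pow_zero, Nat.choose_self, Nat.cast_one, mul_one,
    Nat.add_sub_cancel_left, Nat.choose_succ_self_right] at hexp
  have key : (x + r*u)^(n+1) - x^(n+1) - r*((n+1)*(x^n*u))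
      = ∑ k ∈ Finset.range n, x ^ k * (r * u) ^ (n + 1 - k) * ((n+1).choose k) := by
    rw [hexp]; push_cast; ring
  rw [key]
  calc |∑ k ∈ Finset.range n, x ^ k * (r * u) ^ (n + 1 - k) * ((n+1).choose k)|
      ≤ ∑ k ∈ Finset.range n, |x ^ k * (r * u) ^ (n + 1 - k) * ((n+1).choose k)| :=
        Finset.abs_sum_le_sum_abs _ _
    _ ≤ ∑ k ∈ Finset.range n, r^2 * (A ^ k * U ^ (n + 1 - k) * ((n+1).choose k)) := by
        apply Finset.sum_le_sum
        intro k hk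
        rw [abs_mul, abs_mul, abs_pow, abs_pow, abs_mul, mul_pow, Nat.abs_cast]
        have h1 : |x|^k ≤ A^k := pow_le_pow_left₀ (abs_nonneg x) hx k
        have h2 : |u|^(n+1-k) ≤ U^(n+1-k) := pow_le_pow_left₀ (abs_nonneg u) hu _
        have h3 : |r|^(n+1-k) ≤ r^2 := by
          rw [abs_of_nonneg hr]
          exact pow_le_pow_of_le_one hr hr1 (by simp at hk; omega)
        calc |x|^k * (|r|^(n+1-k) * |u|^(n+1-k)) * ((n+1).choose k : ℝ)
            ≤ A^k * (r^2 * U^(n+1-k)) * ((n+1).choose k : ℝ) := by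
              apply mul_le_mul_of_nonneg_right _ (Nat.cast_nonneg _)
              exact mul_le_mul h1 (mul_le_mul h3 h2 (by positivity) (by positivity))
                (by positivity) (by positivity)
          _ = r^2 * (A ^ k * U ^ (n + 1 - k) * ((n+1).choose k)) := by ring
    _ = r^2 * ∑ k ∈ Finset.range n, A ^ k * U ^ (n + 1 - k) * ((n+1).choose k) := by
        rw [Finset.mul_sum]
    _ ≤ r^2 * (A+U)^(n+1) := by
        apply mul_le_mul_of_nonneg_left _ (sq_nonneg r)
        rw [add_pow A U (n+1)]
        apply Finset.sum_le_sum_of_subset_of_nonneg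
        · exact Finset.range_subset_range.mpr (by omega)
        · intro k _ _; positivity

lemma taylor1_bound (n : ℕ) (x u r A U : ℝ) (hx : |x| ≤ A) (hu : |u| ≤ U)
    (hr : 0 ≤ r) (hr1 : r ≤ 1) :
    |(x + r*u)^(n+1) - x^(n+1)| ≤ r * (A+U)^(n+1) := by
  have hA : 0 ≤ A := le_trans (abs_nonneg x) hx
  have hU : 0 ≤ U := le_trans (abs_nonneg u) hu
  have hexp := add_pow x (r*u) (n+1)
  rw [Finset.sum_range_succ] at hexp
  simp only [Nat.sub_self, pow_zero, Nat.choose_self, Nat.cast_one, mul_one] at hexp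
  have key : (x + r*u)^(n+1) - x^(n+1)
      = ∑ k ∈ Finset.range (n+1), x ^ k * (r * u) ^ (n + 1 - k) * ((n+1).choose k) := by
    rw [hexp]; ring
  rw [key]
  calc |∑ k ∈ Finset.range (n+1), x ^ k * (r * u) ^ (n + 1 - k) * ((n+1).choose k)|
      ≤ ∑ k ∈ Finset.range (n+1), |x ^ k * (r * u) ^ (n + 1 - k) * ((n+1).choose k)| :=
        Finset.abs_sum_le_sum_abs _ _
    _ ≤ ∑ k ∈ Finset.range (n+1), r * (A ^ k * U ^ (n + 1 - k) * ((n+1).choose k)) := by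
        apply Finset.sum_le_sum
        intro k hk
        rw [abs_mul, abs_mul, abs_pow, abs_pow, abs_mul, mul_pow, Nat.abs_cast]
        have h1 : |x|^k ≤ A^k := pow_le_pow_left₀ (abs_nonneg x) hx k
        have h2 : |u|^(n+1-k) ≤ U^(n+1-k) := pow_le_pow_left₀ (abs_nonneg u) hu _
        have h3 : |r|^(n+1-k) ≤ r := by
          rw [abs_of_nonneg hr]
          calc r^(n+1-k) ≤ r^1 := pow_le_pow_of_le_one hr hr1 (by simp at hk; omega)
            _ = r := pow_one r
        calc |x|^k * (|r|^(n+1-k) * |u|^(n+1-k)) * ((n+1).choose k : ℝ)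
            ≤ A^k * (r * U^(n+1-k)) * ((n+1).choose k : ℝ) := by
              apply mul_le_mul_of_nonneg_right _ (Nat.cast_nonneg _)
              exact mul_le_mul h1 (mul_le_mul h3 h2 (by positivity) (by positivity))
                (by positivity) (by positivity)
          _ = r * (A ^ k * U ^ (n + 1 - k) * ((n+1).choose k)) := by ring
    _ = r * ∑ k ∈ Finset.range (n+1), A ^ k * U ^ (n + 1 - k) * ((n+1).choose k) := by
        rw [Finset.mul_sum]
    _ ≤ r * (A+U)^(n+1) := by
        apply mul_le_mul_of_nonneg_left _ hr
        rw [add_pow A U (n+1)]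
        apply Finset.sum_le_sum_of_subset_of_nonneg
        · exact Finset.range_subset_range.mpr (by omega)
        · intro k _ _; positivity

variable {X : Type*} [MeasurableSpace X] [MeasurableSingletonClass X]

lemma integrable_dirac' (φ : X → ℝ) (a : X) : Integrable φ (Measure.dirac a) :=
  (integrable_const (φ a)).congr (MeasureTheory.ae_eq_dirac φ).symm

lemma integral_mix (μ : Measure X) (φ : X → ℝ) (hφ : Integrable φ μ)
    (r : ℝ) (hr0 : 0 ≤ r) (hr1 : r ≤ 1) (a : X) :
    ∫ x, φ x ∂(ENNReal.ofReal (1-r) • μ + ENNReal.ofReal r • Measure.dirac a)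
      = (1-r) * ∫ x, φ x ∂μ + r * φ a := by
  rw [integral_add_measure (hφ.smul_measure ENNReal.ofReal_ne_top)
    ((integrable_dirac' φ a).smul_measure ENNReal.ofReal_ne_top),
    integral_smul_measure, integral_smul_measure, integral_dirac,
    ENNReal.toReal_ofReal hr0, ENNReal.toReal_ofReal (by linarith), smul_eq_mul, smul_eq_mul]

lemma integral_add_smul_dirac (μ : Measure X) (φ : X → ℝ) (hφ : Integrable φ μ)
    (h : ℝ) (hh : 0 ≤ h) (a : X) :
    ∫ x, φ x ∂(μ + ENNReal.ofReal h • Measure.dirac a) = (∫ x, φ x ∂μ) + h * φ a := by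
  rw [integral_add_measure hφ ((integrable_dirac' φ a).smul_measure ENNReal.ofReal_ne_top),
    integral_smul_measure, integral_dirac, ENNReal.toReal_ofReal hh, smul_eq_mul]

lemma cov_image (z : ℝ) (hz : 0 < z) :
    (fun r : ℝ => z*r/(1-r)) '' Ioo (0:ℝ) 1 = Ioi (0:ℝ) := by
  ext h
  simp only [mem_image, mem_Ioi, mem_Ioo]
  constructor
  · rintro ⟨r, ⟨hr0, hr1⟩, rfl⟩
    have : 0 < 1 - r := by linarith
    positivity
  · intro hh
    refine ⟨h/(z+h), ⟨by positivity, ?_⟩, ?_⟩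
    · rw [div_lt_one (by positivity)]; linarith
    · have hzh : z + h ≠ 0 := by positivity
      field_simp
      simp [hz.ne']

lemma cov_deriv (z : ℝ) (r : ℝ) (hr : r ∈ Ioo (0:ℝ) 1) :
    HasDerivWithinAt (fun r : ℝ => z*r/(1-r)) (z/(1-r)^2) (Ioo (0:ℝ) 1) r := by
  have h1 : (1:ℝ) - r ≠ 0 := by have := hr.2; intro h; simp only [sub_eq_zero] at h; linarith
  have hd := ((hasDerivAt_id r).const_mul z).div ((hasDerivAt_id r).const_sub 1) h1
  have : HasDerivAt (fun r : ℝ => z*r/(1-r)) (z/(1-r)^2) r := by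
    refine HasDerivAt.congr_deriv (f := fun r : ℝ => z*r/(1-r)) hd ?_
    simp only [id_eq]
    ring
  exact this.hasDerivWithinAt

lemma cov_inj (z : ℝ) (hz : 0 < z) : InjOn (fun r : ℝ => z*r/(1-r)) (Ioo (0:ℝ) 1) := by
  intro r1 h1 r2 h2 h
  have e1 : (1:ℝ) - r1 ≠ 0 := by have := h1.2; intro h; simp only [sub_eq_zero] at h; linarith
  have e2 : (1:ℝ) - r2 ≠ 0 := by have := h2.2; intro h; simp only [sub_eq_zero] at h; linarith
  field_simp at h
  nlinarith [h]

lemma cov_integrableOn (z : ℝ) (hz : 0 < z) (F : ℝ → ℝ) :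
    IntegrableOn F (Ioi (0:ℝ)) ↔
    IntegrableOn (fun r : ℝ => (z/(1-r)^2) * F (z*r/(1-r))) (Ioo (0:ℝ) 1) := by
  rw [← cov_image z hz,
    MeasureTheory.integrableOn_image_iff_integrableOn_abs_deriv_smul measurableSet_Ioo
      (cov_deriv z) (cov_inj z hz) F]
  apply integrableOn_congr_fun _ measurableSet_Ioo
  intro r hr
  have h1 : (0:ℝ) < 1 - r := by linarith [hr.2]
  simp only [smul_eq_mul]
  rw [abs_of_pos (by positivity : (0:ℝ) < z/(1-r)^2)]

lemma cov_integral (z : ℝ) (hz : 0 < z) (F : ℝ → ℝ) :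
    ∫ h in Ioi (0:ℝ), F h = ∫ r in Ioo (0:ℝ) 1, (z/(1-r)^2) * F (z*r/(1-r)) := by
  rw [← cov_image z hz,
    MeasureTheory.integral_image_eq_integral_abs_deriv_smul measurableSet_Ioo
      (cov_deriv z) (cov_inj z hz) F]
  apply setIntegral_congr_fun measurableSet_Ioo
  intro r hr
  have h1 : (0:ℝ) < 1 - r := by linarith [hr.2]
  simp only [smul_eq_mul]
  rw [abs_of_pos (by positivity : (0:ℝ) < z/(1-r)^2)]

lemma rpow_split_one (x : ℝ) (hx : 0 < x) (p : ℝ) : x ^ (p + 1) = x ^ p * x := by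
  rw [Real.rpow_add hx, Real.rpow_one]

lemma rpow_split_two (x : ℝ) (hx : 0 < x) (p : ℝ) : x ^ (p + 2) = x ^ p * x ^ 2 := by
  rw [Real.rpow_add hx, show ((2:ℝ)) = ((2:ℕ):ℝ) by norm_num, Real.rpow_natCast]

lemma cov_rpow_alg (z r β : ℝ) (hz : 0 < z) (h0 : 0 < r) (h1 : r < 1) :
    z/(1-r)^2 * (z*r/(1-r))^(-β) = z^(1-β) * (r^(-β) * (1-r)^(β-2)) := by
  have h1r : 0 < 1 - r := by linarith
  have e1 : (z*r/(1-r))^(-β) = (z^(-β) * r^(-β)) / (1-r)^(-β) := by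
    rw [Real.div_rpow (by positivity) h1r.le, Real.mul_rpow hz.le h0.le]
  have e2 : (1-r)^(-β) = ((1-r)^β)⁻¹ := Real.rpow_neg h1r.le β
  have e3 : z^(1-β) = z * z^(-β) := by
    rw [show (1-β) = 1 + (-β) by ring, Real.rpow_add hz, Real.rpow_one]
  have e4 : (1-r)^(β-2) = (1-r)^β / (1-r)^2 := by
    rw [show (β-2) = β + (-2:ℝ) by ring, Real.rpow_add h1r,
      show ((-2:ℝ)) = -((2:ℕ):ℝ) by norm_num, Real.rpow_neg h1r.le, Real.rpow_natCast,
      div_eq_mul_inv]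
  have p1 : (0:ℝ) < z^(-β) := Real.rpow_pos_of_pos hz _
  have p2 : (0:ℝ) < r^(-β) := Real.rpow_pos_of_pos h0 _
  have p3 : (0:ℝ) < (1-r)^β := Real.rpow_pos_of_pos h1r _
  rw [e1, e2, e3, e4]
  field_simp
set_option maxHeartbeats 1000000 in
/-- Lemma 5.5 of the paper: the generator of the measure-valued α-stable branching process
with immigration (Lévy measures `c'h^{−α}dh` and `ch^{−1−α}dh`), applied to
`F(η) = ⟨φ,η/|η|⟩^m`, equals `|η|^{1−α}` times the generator of the M-generalized
Fleming-Viot process with immigration, `M = (c'Beta(2−α,α−1), cBeta(2−α,α))`;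
all integrals converge absolutely. -/
theorem stmt9 (α : ℝ) (hα : α ∈ Ioo (1:ℝ) 2) (c c' : ℝ) (hc : 0 < c) (hc' : 0 < c')
    (η : Measure unitInterval) [IsFiniteMeasure η] (hη : η Set.univ ≠ 0)
    (φ : unitInterval → ℝ) (hφm : Measurable φ) (Cb : ℝ) (hφb : ∀ x, |φ x| ≤ Cb)
    (m : ℕ) (hm : 1 ≤ m) :
    MeasureTheory.IntegrableOn
      (fun h : ℝ => c' * h ^ (-α) *
        ((∫ x, φ x ∂(ENNReal.ofReal (1 - h / ((η Set.univ).toReal + h)) •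
              ((η Set.univ)⁻¹ • η)
            + ENNReal.ofReal (h / ((η Set.univ).toReal + h)) •
              Measure.dirac (0 : unitInterval))) ^ m
          - (∫ x, φ x ∂((η Set.univ)⁻¹ • η)) ^ m))
      (Ioi (0:ℝ))
    ∧ MeasureTheory.Integrable
        (fun p : unitInterval × ℝ => c * p.2 ^ (-1 - α) *
          ((((η Set.univ).toReal + p.2)⁻¹ *
              ∫ x, φ x ∂(η + ENNReal.ofReal p.2 • Measure.dirac p.1)) ^ m
            - (∫ x, φ x ∂((η Set.univ)⁻¹ • η)) ^ m
            - p.2 * (((m : ℝ) / (η Set.univ).toReal) *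
                (φ p.1 * (∫ x, φ x ∂((η Set.univ)⁻¹ • η)) ^ (m - 1)
                  - (∫ x, φ x ∂((η Set.univ)⁻¹ • η)) ^ m))))
        (η.prod (volume.restrict (Ioi (0:ℝ))))
    ∧ MeasureTheory.IntegrableOn
        (fun r : ℝ => r ^ (-α) * (1 - r) ^ (α - 2) *
          ((∫ x, φ x ∂(ENNReal.ofReal (1 - r) • ((η Set.univ)⁻¹ • η)
              + ENNReal.ofReal r • Measure.dirac (0 : unitInterval))) ^ m
            - (∫ x, φ x ∂((η Set.univ)⁻¹ • η)) ^ m))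
        (Ioo (0:ℝ) 1)
    ∧ MeasureTheory.IntegrableOn
        (fun r : ℝ => r ^ (-1 - α) * (1 - r) ^ (α - 1) *
          ∫ a, ((∫ x, φ x ∂(ENNReal.ofReal (1 - r) • ((η Set.univ)⁻¹ • η)
                + ENNReal.ofReal r • Measure.dirac a)) ^ m
              - (∫ x, φ x ∂((η Set.univ)⁻¹ • η)) ^ m) ∂((η Set.univ)⁻¹ • η))
        (Ioo (0:ℝ) 1)
    ∧ (η Set.univ).toReal ^ (α - 1) *
        ((∫ h in Ioi (0:ℝ), c' * h ^ (-α) *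
            ((∫ x, φ x ∂(ENNReal.ofReal (1 - h / ((η Set.univ).toReal + h)) •
                  ((η Set.univ)⁻¹ • η)
                + ENNReal.ofReal (h / ((η Set.univ).toReal + h)) •
                  Measure.dirac (0 : unitInterval))) ^ m
              - (∫ x, φ x ∂((η Set.univ)⁻¹ • η)) ^ m))
          + ∫ a, (∫ h in Ioi (0:ℝ), c * h ^ (-1 - α) *
              ((((η Set.univ).toReal + h)⁻¹ *
                  ∫ x, φ x ∂(η + ENNReal.ofReal h • Measure.dirac a)) ^ m
                - (∫ x, φ x ∂((η Set.univ)⁻¹ • η)) ^ m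
                - h * (((m : ℝ) / (η Set.univ).toReal) *
                    (φ a * (∫ x, φ x ∂((η Set.univ)⁻¹ • η)) ^ (m - 1)
                      - (∫ x, φ x ∂((η Set.univ)⁻¹ • η)) ^ m)))) ∂η) =
      c' * (∫ r in Ioo (0:ℝ) 1, r ^ (-α) * (1 - r) ^ (α - 2) *
          ((∫ x, φ x ∂(ENNReal.ofReal (1 - r) • ((η Set.univ)⁻¹ • η)
              + ENNReal.ofReal r • Measure.dirac (0 : unitInterval))) ^ m
            - (∫ x, φ x ∂((η Set.univ)⁻¹ • η)) ^ m))
        + c * (∫ r in Ioo (0:ℝ) 1, r ^ (-1 - α) * (1 - r) ^ (α - 1) *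
            ∫ a, ((∫ x, φ x ∂(ENNReal.ofReal (1 - r) • ((η Set.univ)⁻¹ • η)
                  + ENNReal.ofReal r • Measure.dirac a)) ^ m
                - (∫ x, φ x ∂((η Set.univ)⁻¹ • η)) ^ m) ∂((η Set.univ)⁻¹ • η)) := by
  obtain ⟨hα1, hα2⟩ := hα
  obtain ⟨n, rfl⟩ : ∃ n, m = n + 1 := ⟨m - 1, by omega⟩
  have hzpos : (0:ℝ) < (η Set.univ).toReal := ENNReal.toReal_pos hη (measure_ne_top η _)
  set z : ℝ := (η Set.univ).toReal with hzdef
  set ρ : Measure unitInterval := (η Set.univ)⁻¹ • η with hρdef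
  have hρprob : IsProbabilityMeasure ρ := by
    constructor
    rw [hρdef, Measure.smul_apply, smul_eq_mul, ENNReal.inv_mul_cancel hη (measure_ne_top η _)]
  set I : ℝ := ∫ x, φ x ∂ρ with hIdef
  simp only [Nat.add_sub_cancel]
  have hCb0 : (0:ℝ) ≤ Cb := le_trans (abs_nonneg _) (hφb 0)
  have hφint : ∀ (μ : Measure unitInterval) [IsFiniteMeasure μ], Integrable φ μ := by
    intro μ _
    exact (integrable_const Cb).mono' hφm.aestronglyMeasurable
      (Filter.Eventually.of_forall fun x => by simpa [Real.norm_eq_abs] using hφb x)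
  have hφρ : Integrable φ ρ := hφint ρ
  have hφη : Integrable φ η := hφint η
  have hIabs : |I| ≤ Cb := by
    have := norm_integral_le_of_norm_le_const (μ := ρ) (f := φ) (C := Cb)
      (Filter.Eventually.of_forall fun x => by simpa [Real.norm_eq_abs] using hφb x)
    simpa [Real.norm_eq_abs] using this
  have hIη : ∫ x, φ x ∂η = z * I := by
    rw [hIdef, hρdef, integral_smul_measure, smul_eq_mul, ENNReal.toReal_inv, ← hzdef]
    field_simp
  set T : ℝ → unitInterval → ℝ := fun r a => ((1-r)*I + r*φ a)^(n+1) - I^(n+1) with hTdef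
  set C0 : ℝ := (Cb + 2*Cb)^(n+1) with hC0def
  have hC00 : 0 ≤ C0 := by rw [hC0def]; positivity
  have hu2 : ∀ a, |φ a - I| ≤ 2*Cb := fun a => by
    calc |φ a - I| ≤ |φ a| + |I| := abs_sub _ _
      _ ≤ Cb + Cb := add_le_add (hφb a) hIabs
      _ = 2*Cb := by ring
  -- pointwise integral formulas
  have P2 : ∀ (r:ℝ), 0 ≤ r → r ≤ 1 → ∀ a : unitInterval,
      (∫ x, φ x ∂(ENNReal.ofReal (1-r) • ρ + ENNReal.ofReal r • Measure.dirac a))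
        = (1-r)*I + r*φ a := fun r h0 h1 a => integral_mix ρ φ hφρ r h0 h1 a
  have P3 : ∀ (h:ℝ), 0 ≤ h → ∀ a : unitInterval,
      (∫ x, φ x ∂(η + ENNReal.ofReal h • Measure.dirac a)) = z*I + h*φ a := by
    intro h hh a
    rw [integral_add_smul_dirac η φ hφη h hh a, hIη]
  -- Taylor bounds for T
  have hTb : ∀ (r:ℝ), 0 ≤ r → r ≤ 1 → ∀ a, |T r a| ≤ r * C0 := by
    intro r h0 h1 a
    have key := taylor1_bound n I (φ a - I) r Cb (2*Cb) hIabs (hu2 a) h0 h1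
    have e : (1-r)*I + r*φ a = I + r*(φ a - I) := by ring
    rw [hTdef]
    simpa [e, hC0def] using key
  have hT2b : ∀ (r:ℝ), 0 ≤ r → r ≤ 1 → ∀ a,
      |T r a - r*(((n:ℝ)+1)*(I^n*(φ a - I)))| ≤ r^2 * C0 := by
    intro r h0 h1 a
    have key := taylor2_bound n I (φ a - I) r Cb (2*Cb) hIabs (hu2 a) h0 h1
    have e : (1-r)*I + r*φ a = I + r*(φ a - I) := by ring
    rw [hTdef]
    simpa [e, hC0def] using key
  -- measurability of T
  have hTmeas : Measurable (fun p : ℝ × unitInterval => T p.1 p.2) := by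
    rw [hTdef]
    fun_prop
  have hTint : ∀ (r:ℝ), 0 ≤ r → r ≤ 1 → ∀ (μ : Measure unitInterval) [IsFiniteMeasure μ],
      Integrable (fun a => T r a) μ := by
    intro r h0 h1 μ _
    refine (integrable_const C0).mono' ?_ (Filter.Eventually.of_forall fun a => ?_)
    · exact (hTmeas.comp (measurable_const.prodMk measurable_id)).aestronglyMeasurable
    · rw [Real.norm_eq_abs]
      calc |T r a| ≤ r * C0 := hTb r h0 h1 a
        _ ≤ 1 * C0 := by apply mul_le_mul_of_nonneg_right h1 hC00
        _ = C0 := one_mul C0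
  set S : ℝ → ℝ := fun r => ∫ a, T r a ∂ρ with hSdef
  have hSmeas : StronglyMeasurable S := by
    rw [hSdef]
    exact MeasureTheory.StronglyMeasurable.integral_prod_right
      (f := fun r a => T r a) hTmeas.stronglyMeasurable
  have hsubint : ∀ (μ : Measure unitInterval) [IsFiniteMeasure μ],
      Integrable (fun a => φ a - I) μ := fun μ _ => (hφint μ).sub (integrable_const I)
  have hzero : ∫ a, (φ a - I) ∂ρ = 0 := by
    rw [integral_sub hφρ (integrable_const I), integral_const]
    simp [hIdef]
  have hSb : ∀ (r:ℝ), 0 ≤ r → r ≤ 1 → |S r| ≤ r^2 * C0 := by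
    intro r h0 h1
    have hint2 : Integrable (fun a => r*(((n:ℝ)+1)*(I^n*(φ a - I)))) ρ :=
      (((hsubint ρ).const_mul (I^n)).const_mul ((n:ℝ)+1)).const_mul r
    have hS2 : S r = ∫ a, (T r a - r*(((n:ℝ)+1)*(I^n*(φ a - I)))) ∂ρ := by
      rw [integral_sub (hTint r h0 h1 ρ) hint2, integral_const_mul, integral_const_mul,
        integral_const_mul, hzero]
      simp [hSdef]
    rw [hS2]
    have := norm_integral_le_of_norm_le_const (μ := ρ) (C := r^2*C0)
      (f := fun a => T r a - r*(((n:ℝ)+1)*(I^n*(φ a - I))))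
      (Filter.Eventually.of_forall fun a => by
        simpa [Real.norm_eq_abs] using hT2b r h0 h1 a)
    simpa [Real.norm_eq_abs] using this
  have hbeta1 : IntegrableOn (fun r : ℝ => r^(1-α) * (1-r)^(α-2)) (Ioo (0:ℝ) 1) :=
    beta_integrableOn (1-α) (α-2) (by linarith) (by linarith)
  have hbeta2 : IntegrableOn (fun r : ℝ => r^(1-α) * (1-r)^(α-1)) (Ioo (0:ℝ) 1) :=
    beta_integrableOn (1-α) (α-1) (by linarith) (by linarith)
  have hT0meas : Measurable (fun r : ℝ => T r 0) :=
    hTmeas.comp (measurable_id.prodMk measurable_const)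
  have hC3exp : IntegrableOn (fun r : ℝ => r^(-α)*(1-r)^(α-2)*T r 0) (Ioo (0:ℝ) 1) := by
    refine (hbeta1.const_mul C0).mono' ?_ ?_
    · apply Measurable.aestronglyMeasurable
      apply Measurable.mul _ hT0meas
      fun_prop
    · rw [ae_restrict_iff' measurableSet_Ioo]
      refine Filter.Eventually.of_forall fun r hr => ?_
      obtain ⟨h0, h1⟩ := hr
      have h1r : (0:ℝ) < 1 - r := by linarith
      have hsplit : r^(1-α) = r^(-α) * r := by
        rw [show (1-α) = -α + 1 by ring, rpow_split_one r h0]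
      rw [Real.norm_eq_abs, abs_mul, abs_mul,
        abs_of_pos (Real.rpow_pos_of_pos h0 (-α)), abs_of_pos (Real.rpow_pos_of_pos h1r (α-2))]
      calc r^(-α) * (1-r)^(α-2) * |T r 0| ≤ r^(-α) * (1-r)^(α-2) * (r * C0) := by
            apply mul_le_mul_of_nonneg_left (hTb r h0.le h1.le 0) (by positivity)
        _ = C0 * (r^(1-α) * (1-r)^(α-2)) := by rw [hsplit]; ring
  have hC4exp : IntegrableOn (fun r : ℝ => r^(-1-α)*(1-r)^(α-1)*S r) (Ioo (0:ℝ) 1) := by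
    refine (hbeta2.const_mul C0).mono' ?_ ?_
    · apply Measurable.aestronglyMeasurable
      apply Measurable.mul _ hSmeas.measurable
      fun_prop
    · rw [ae_restrict_iff' measurableSet_Ioo]
      refine Filter.Eventually.of_forall fun r hr => ?_
      obtain ⟨h0, h1⟩ := hr
      have h1r : (0:ℝ) < 1 - r := by linarith
      have hsplit : r^(1-α) = r^(-1-α) * r^2 := by
        rw [show (1-α) = (-1-α) + 2 by ring, rpow_split_two r h0]
      rw [Real.norm_eq_abs, abs_mul, abs_mul,
        abs_of_pos (Real.rpow_pos_of_pos h0 (-1-α)), abs_of_pos (Real.rpow_pos_of_pos h1r (α-1))]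
      calc r^(-1-α) * (1-r)^(α-1) * |S r| ≤ r^(-1-α) * (1-r)^(α-1) * (r^2 * C0) := by
            apply mul_le_mul_of_nonneg_left (hSb r h0.le h1.le) (by positivity)
        _ = C0 * (r^(1-α) * (1-r)^(α-1)) := by rw [hsplit]; ring
  -- change of variables for the first integrand
  have hC1exp : IntegrableOn (fun h : ℝ => c' * h^(-α) * T (h/(z+h)) 0) (Ioi (0:ℝ)) := by
    rw [cov_integrableOn z hzpos]
    refine IntegrableOn.congr_fun (hC3exp.const_mul (c'*z^(1-α))) ?_ measurableSet_Ioo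
    intro r hr
    obtain ⟨h0, h1⟩ := hr
    have h1r : (0:ℝ) < 1 - r := by linarith
    simp only []
    have hsum : z + z*r/(1-r) = z/(1-r) := by field_simp; ring
    have hfrac : z*r/(1-r)/(z + z*r/(1-r)) = r := by
      rw [hsum]
      field_simp
    rw [hfrac, show z/(1-r)^2 * (c' * (z*r/(1-r))^(-α) * T r 0)
        = (z/(1-r)^2 * (z*r/(1-r))^(-α)) * (c' * T r 0) by ring,
      cov_rpow_alg z r α hzpos h0 h1]
    ring
  -- dominating function for the second integrand
  set D0 : ℝ := C0 + ((n:ℝ)+1)*(Cb^n*(2*Cb)) with hD0def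
  have hD00 : 0 ≤ D0 := by rw [hD0def]; positivity
  have hψint : IntegrableOn (fun h : ℝ => h^(1-α)/(z+h)) (Ioi (0:ℝ)) := by
    have hIoc : IntegrableOn (fun h : ℝ => h^(1-α)/(z+h)) (Ioc (0:ℝ) 1) := by
      rw [integrableOn_Ioc_iff_integrableOn_Ioo]
      refine (((intervalIntegral.integrableOn_Ioo_rpow_iff zero_lt_one).mpr
        (by linarith : (-1:ℝ) < 1-α)).const_mul z⁻¹).mono' ?_ ?_
      · apply Measurable.aestronglyMeasurable; fun_prop
      · rw [ae_restrict_iff' measurableSet_Ioo]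
        refine Filter.Eventually.of_forall fun h hh => ?_
        obtain ⟨hh0, hh1⟩ := hh
        have hzh : 0 < z + h := by linarith
        rw [Real.norm_eq_abs, abs_of_nonneg (by positivity)]
        calc h^(1-α)/(z+h) ≤ h^(1-α)/z :=
              div_le_div_of_nonneg_left (by positivity) hzpos (by linarith)
          _ = z⁻¹ * h^(1-α) := by ring
    have hIoi1 : IntegrableOn (fun h : ℝ => h^(1-α)/(z+h)) (Ioi (1:ℝ)) := by
      refine (integrableOn_Ioi_rpow_of_lt (by linarith : -α < -1) zero_lt_one).mono' ?_ ?_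
      · apply Measurable.aestronglyMeasurable; fun_prop
      · rw [ae_restrict_iff' measurableSet_Ioi]
        refine Filter.Eventually.of_forall fun h hh => ?_
        have hh1 : (1:ℝ) < h := hh
        have hh0 : (0:ℝ) < h := by linarith
        have hzh : 0 < z + h := by linarith
        rw [Real.norm_eq_abs, abs_of_nonneg (by positivity)]
        calc h^(1-α)/(z+h) ≤ h^(1-α)/h :=
              div_le_div_of_nonneg_left (by positivity) hh0 (by linarith)
          _ = h^(-α) := by
              rw [show (1-α) = -α + 1 by ring, rpow_split_one h hh0]
              field_simp
    have := hIoc.union hIoi1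
    rwa [Set.Ioc_union_Ioi_eq_Ioi (le_of_lt zero_lt_one)] at this
  have haeIoi : ∀ᵐ p ∂(η.prod (volume.restrict (Ioi (0:ℝ)))), 0 < p.2 := by
    rw [ae_iff]
    have hset : {p : unitInterval × ℝ | ¬ 0 < p.2}
        = (univ : Set unitInterval) ×ˢ {h : ℝ | h ≤ 0} := by
      ext p; simp [not_lt]
    rw [hset, Measure.prod_prod]
    have h0 : (volume.restrict (Ioi (0:ℝ))) {h : ℝ | h ≤ 0} = 0 := by
      rw [Measure.restrict_apply' measurableSet_Ioi]
      have : {h : ℝ | h ≤ 0} ∩ Ioi 0 = (∅ : Set ℝ) := by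
        rw [eq_empty_iff_forall_notMem]
        intro x hx
        exact absurd (mem_Ioi.mp hx.2) (not_lt.mpr hx.1)
      rw [this, measure_empty]
    rw [h0, mul_zero]
  -- bracket bound for the second integrand
  have hXb : ∀ a : unitInterval, |((n:ℝ)+1)*(I^n*(φ a - I))| ≤ ((n:ℝ)+1)*(Cb^n*(2*Cb)) := by
    intro a
    rw [abs_mul, abs_mul, abs_pow]
    have h1 : |((n:ℝ)+1)| = ((n:ℝ)+1) := abs_of_nonneg (by positivity)
    rw [h1]
    apply mul_le_mul_of_nonneg_left _ (by positivity)
    exact mul_le_mul (pow_le_pow_left₀ (abs_nonneg I) hIabs n) (hu2 a) (abs_nonneg _)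
      (by positivity)
  have hbr : ∀ (a : unitInterval) (h : ℝ), 0 < h →
      |((z+h)⁻¹*(z*I + h*φ a))^(n+1) - I^(n+1) - h*((((n:ℝ)+1))/z * (φ a * I^n - I^(n+1)))|
        ≤ h^2/(z*(z+h)) * D0 := by
    intro a h hh
    have hzh : 0 < z + h := by linarith
    have h0 : 0 ≤ h/(z+h) := by positivity
    have h1 : h/(z+h) ≤ 1 := by rw [div_le_one hzh]; linarith
    have emix : (z+h)⁻¹*(z*I + h*φ a) = (1-h/(z+h))*I + (h/(z+h))*φ a := by
      field_simp
      ring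
    have hI1 : φ a * I^n - I^(n+1) = I^n*(φ a - I) := by rw [pow_succ]; ring
    have hdiff : h/(z+h) - h/z = -(h^2/(z*(z+h))) := by field_simp; ring
    have hsq : (h/(z+h))^2 ≤ h^2/(z*(z+h)) := by
      rw [div_pow]
      exact div_le_div_of_nonneg_left (sq_nonneg h) (by positivity) (by nlinarith)
    have key : ((z+h)⁻¹*(z*I + h*φ a))^(n+1) - I^(n+1)
          - h*((((n:ℝ)+1))/z * (φ a * I^n - I^(n+1)))
        = (T (h/(z+h)) a - (h/(z+h))*(((n:ℝ)+1)*(I^n*(φ a - I))))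
          + (h/(z+h) - h/z)*(((n:ℝ)+1)*(I^n*(φ a - I))) := by
      rw [emix, hI1]
      simp only [hTdef]
      have hz' : z ≠ 0 := ne_of_gt hzpos
      field_simp
      ring
    rw [key]
    calc |_ + _| ≤ |T (h/(z+h)) a - (h/(z+h))*(((n:ℝ)+1)*(I^n*(φ a - I)))|
          + |(h/(z+h) - h/z)*(((n:ℝ)+1)*(I^n*(φ a - I)))| := abs_add_le _ _
      _ ≤ (h/(z+h))^2 * C0 + (h^2/(z*(z+h))) * (((n:ℝ)+1)*(Cb^n*(2*Cb))) := by
          apply add_le_add (hT2b (h/(z+h)) h0 h1 a)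
          rw [abs_mul, hdiff, abs_neg, abs_of_nonneg (by positivity)]
          exact mul_le_mul_of_nonneg_left (hXb a) (by positivity)
      _ ≤ (h^2/(z*(z+h))) * C0 + (h^2/(z*(z+h))) * (((n:ℝ)+1)*(Cb^n*(2*Cb))) := by
          apply add_le_add_left (mul_le_mul_of_nonneg_right hsq hC00)
      _ = h^2/(z*(z+h)) * D0 := by rw [hD0def]; ring
  have hψprod : Integrable (fun p : unitInterval × ℝ => (c*D0/z) * (p.2^(1-α)/(z+p.2)))
      (η.prod (volume.restrict (Ioi (0:ℝ)))) := by
    have h1 : Integrable (fun _ : unitInterval => (c*D0/z)) η := integrable_const _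
    simpa using h1.mul_prod hψint
  have hC2exp : Integrable (fun p : unitInterval × ℝ => c * p.2^(-1-α) *
      (((z+p.2)⁻¹*(z*I + p.2*φ p.1))^(n+1) - I^(n+1)
        - p.2*((((n:ℝ)+1))/z * (φ p.1 * I^n - I^(n+1)))))
      (η.prod (volume.restrict (Ioi (0:ℝ)))) := by
    refine hψprod.mono' ?_ ?_
    · apply Measurable.aestronglyMeasurable
      apply Measurable.mul
      · fun_prop
      · apply Measurable.sub
        apply Measurable.sub
        · apply Measurable.pow _ measurable_const
          apply Measurable.mul (by fun_prop)
          apply Measurable.add measurable_const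
          exact measurable_snd.mul (hφm.comp measurable_fst)
        · exact measurable_const
        · apply Measurable.mul measurable_snd
          apply Measurable.mul measurable_const
          exact ((hφm.comp measurable_fst).mul measurable_const).sub measurable_const
    · filter_upwards [haeIoi] with p hp
      have hzh : 0 < z + p.2 := by linarith
      have hpow : p.2^(-1-α) * p.2^2 = p.2^(1-α) := by
        rw [show (1-α) = (-1-α) + 2 by ring, rpow_split_two p.2 hp]
      rw [Real.norm_eq_abs, abs_mul, abs_mul, abs_of_pos hc,
        abs_of_pos (Real.rpow_pos_of_pos hp (-1-α))]
      refine le_trans (mul_le_mul_of_nonneg_left (hbr p.1 p.2 hp) (by positivity))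
        (le_of_eq ?_)
      rw [← hpow]
      field_simp
  -- machinery for Fubini on (0,1)
  have haeIoo : ∀ᵐ p ∂(η.prod (volume.restrict (Ioo (0:ℝ) 1))), p.2 ∈ Ioo (0:ℝ) 1 := by
    rw [ae_iff]
    have hset : {p : unitInterval × ℝ | ¬ p.2 ∈ Ioo (0:ℝ) 1}
        = (univ : Set unitInterval) ×ˢ ((Ioo (0:ℝ) 1)ᶜ) := by
      ext p; simp
    rw [hset, Measure.prod_prod]
    have h0 : (volume.restrict (Ioo (0:ℝ) 1)) ((Ioo (0:ℝ) 1)ᶜ) = 0 := by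
      rw [Measure.restrict_apply' measurableSet_Ioo, compl_inter_self, measure_empty]
    rw [h0, mul_zero]
  have hWb : ∀ (r:ℝ), 0 < r → r < 1 → ∀ a : unitInterval,
      |T r a - (r/(1-r))*(((n:ℝ)+1)*(φ a * I^n - I^(n+1)))| ≤ r^2/(1-r) * D0 := by
    intro r h0 h1 a
    have h1r : (0:ℝ) < 1 - r := by linarith
    have hI1 : φ a * I^n - I^(n+1) = I^n*(φ a - I) := by rw [pow_succ]; ring
    have hdiff : r - r/(1-r) = -(r^2/(1-r)) := by field_simp; ring
    have hsq : r^2 ≤ r^2/(1-r) := by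
      calc r^2 = r^2/1 := by ring
        _ ≤ r^2/(1-r) := div_le_div_of_nonneg_left (sq_nonneg r) h1r (by linarith)
    have key : T r a - (r/(1-r))*(((n:ℝ)+1)*(φ a * I^n - I^(n+1)))
        = (T r a - r*(((n:ℝ)+1)*(I^n*(φ a - I))))
          + (r - r/(1-r))*(((n:ℝ)+1)*(I^n*(φ a - I))) := by
      rw [hI1]; ring
    rw [key]
    calc |_ + _| ≤ |T r a - r*(((n:ℝ)+1)*(I^n*(φ a - I)))|
          + |(r - r/(1-r))*(((n:ℝ)+1)*(I^n*(φ a - I)))| := abs_add_le _ _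
      _ ≤ r^2 * C0 + (r^2/(1-r)) * (((n:ℝ)+1)*(Cb^n*(2*Cb))) := by
          apply add_le_add (hT2b r h0.le h1.le a)
          rw [abs_mul, hdiff, abs_neg, abs_of_nonneg (by positivity)]
          exact mul_le_mul_of_nonneg_left (hXb a) (by positivity)
      _ ≤ (r^2/(1-r)) * C0 + (r^2/(1-r)) * (((n:ℝ)+1)*(Cb^n*(2*Cb))) := by
          apply add_le_add_left (mul_le_mul_of_nonneg_right hsq hC00)
      _ = r^2/(1-r) * D0 := by rw [hD0def]; ring
  have hbetaprod : Integrable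
      (fun p : unitInterval × ℝ => (c*z^(-α)*D0) * (p.2^(1-α)*(1-p.2)^(α-2)))
      (η.prod (volume.restrict (Ioo (0:ℝ) 1))) := by
    have h1 : Integrable (fun _ : unitInterval => (c*z^(-α)*D0)) η := integrable_const _
    simpa using h1.mul_prod hbeta1
  have hg5int : Integrable (fun p : unitInterval × ℝ => c*z^(-α) *
      (p.2^(-1-α)*(1-p.2)^(α-1)) *
      (T p.2 p.1 - (p.2/(1-p.2))*(((n:ℝ)+1)*(φ p.1 * I^n - I^(n+1)))))
      (η.prod (volume.restrict (Ioo (0:ℝ) 1))) := by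
    refine hbetaprod.mono' ?_ ?_
    · apply Measurable.aestronglyMeasurable
      apply Measurable.mul
      · fun_prop
      · apply Measurable.sub
        · exact hTmeas.comp (measurable_snd.prodMk measurable_fst)
        · apply Measurable.mul (by fun_prop)
          apply Measurable.mul measurable_const
          exact ((hφm.comp measurable_fst).mul measurable_const).sub measurable_const
    · filter_upwards [haeIoo] with p hp
      obtain ⟨h0, h1⟩ := hp
      have h1r : (0:ℝ) < 1 - p.2 := by linarith
      have hpow : p.2^(-1-α) * p.2^2 = p.2^(1-α) := by
        rw [show (1-α) = (-1-α) + 2 by ring, rpow_split_two p.2 h0]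
      have hpow2 : (1-p.2)^(α-2) * (1-p.2) = (1-p.2)^(α-1) := by
        rw [show (α-1) = (α-2) + 1 by ring, rpow_split_one _ h1r]
      rw [Real.norm_eq_abs, abs_mul, abs_of_pos
        (show (0:ℝ) < c*z^(-α)*(p.2^(-1-α)*(1-p.2)^(α-1)) by positivity)]
      refine le_trans (mul_le_mul_of_nonneg_left (hWb p.2 h0 h1 p.1) (by positivity))
        (le_of_eq ?_)
      rw [← hpow, ← hpow2]
      field_simp
  have hηρ : ∀ f : unitInterval → ℝ, z * (∫ x, f x ∂ρ) = ∫ x, f x ∂η := by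
    intro f
    rw [hρdef, integral_smul_measure, smul_eq_mul, ENNReal.toReal_inv, ← hzdef]
    field_simp
  have hzz : z^(α-1) * z^(1-α) = 1 := by
    rw [← Real.rpow_add hzpos, show (α-1)+(1-α) = 0 by ring, Real.rpow_zero]
  have hInner : ∀ (r:ℝ), 0 < r → r < 1 →
      ∫ a, (T r a - (r/(1-r))*(((n:ℝ)+1)*(φ a * I^n - I^(n+1)))) ∂η = z * S r := by
    intro r h0 h1
    have hint2 : Integrable (fun a => (r/(1-r))*(((n:ℝ)+1)*(φ a * I^n - I^(n+1)))) η := by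
      apply Integrable.const_mul
      apply Integrable.const_mul
      exact (hφη.mul_const (I^n)).sub (integrable_const (I^(n+1)))
    rw [integral_sub (hTint r h0.le h1.le η) hint2, integral_const_mul, integral_const_mul,
      integral_sub (hφη.mul_const (I^n)) (integrable_const (I^(n+1))),
      integral_mul_const, hIη, integral_const, smul_eq_mul, measureReal_def, ← hzdef]
    rw [show z * I * I^n - z * I^(n+1) = 0 by rw [pow_succ]; ring]
    rw [hSdef]
    simp [hηρ (fun a => T r a)]
  have hz0 : z ≠ 0 := ne_of_gt hzpos
  refine ⟨?_, ?_, ?_, ?_, ?_⟩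
  · -- first integrability
    refine IntegrableOn.congr_fun hC1exp ?_ measurableSet_Ioi
    intro h hh
    have hh0 : (0:ℝ) < h := hh
    have hzh : 0 < z + h := by linarith
    have h0 : (0:ℝ) ≤ h/(z+h) := by positivity
    have h1 : h/(z+h) ≤ 1 := by rw [div_le_one hzh]; linarith
    simp only [hTdef]
    rw [P2 (h/(z+h)) h0 h1 0]
  · -- second integrability
    refine hC2exp.congr ?_
    filter_upwards [haeIoi] with p hp
    rw [P3 p.2 hp.le p.1]
    push_cast
    ring
  · -- third integrability
    refine IntegrableOn.congr_fun hC3exp ?_ measurableSet_Ioo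
    intro r hr
    simp only [hTdef]
    rw [P2 r hr.1.le hr.2.le 0]
  · -- fourth integrability
    refine IntegrableOn.congr_fun hC4exp ?_ measurableSet_Ioo
    intro r hr
    simp only [hSdef]
    congr 1
    apply integral_congr_ae
    refine Filter.Eventually.of_forall fun a => ?_
    simp only [hTdef]
    rw [P2 r hr.1.le hr.2.le a]
  · -- the equality
    have E1 : (∫ h in Ioi (0:ℝ), c' * h ^ (-α) *
          ((∫ x, φ x ∂(ENNReal.ofReal (1 - h / (z + h)) • ρ
            + ENNReal.ofReal (h / (z + h)) • Measure.dirac (0 : unitInterval))) ^ (n+1)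
            - I ^ (n+1)))
        = c'*z^(1-α) * ∫ r in Ioo (0:ℝ) 1, r^(-α)*(1-r)^(α-2)*T r 0 := by
      have e : EqOn (fun h : ℝ => c' * h ^ (-α) *
          ((∫ x, φ x ∂(ENNReal.ofReal (1 - h / (z + h)) • ρ
            + ENNReal.ofReal (h / (z + h)) • Measure.dirac (0 : unitInterval))) ^ (n+1)
            - I ^ (n+1)))
          (fun h : ℝ => c' * h^(-α) * T (h/(z+h)) 0) (Ioi (0:ℝ)) := by
        intro h hh
        have hh0 : (0:ℝ) < h := hh
        have hzh : 0 < z + h := by linarith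
        simp only [hTdef]
        rw [P2 (h/(z+h)) (by positivity) (by rw [div_le_one hzh]; linarith) 0]
      rw [setIntegral_congr_fun measurableSet_Ioi e, cov_integral z hzpos]
      rw [← integral_const_mul]
      apply setIntegral_congr_fun measurableSet_Ioo
      intro r hr
      obtain ⟨h0, h1⟩ := hr
      have h1r : (0:ℝ) < 1 - r := by linarith
      simp only []
      have hsum : z + z*r/(1-r) = z/(1-r) := by field_simp; ring
      have hfrac : z*r/(1-r)/(z + z*r/(1-r)) = r := by rw [hsum]; field_simp
      rw [hfrac, show z/(1-r)^2 * (c' * (z*r/(1-r))^(-α) * T r 0)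
          = (z/(1-r)^2 * (z*r/(1-r))^(-α)) * (c' * T r 0) by ring,
        cov_rpow_alg z r α hzpos h0 h1]
      ring
    have e2a : ∀ a : unitInterval, (∫ h in Ioi (0:ℝ), c * h ^ (-1 - α) *
          (((z + h)⁻¹ * ∫ x, φ x ∂(η + ENNReal.ofReal h • Measure.dirac a)) ^ (n+1)
            - I ^ (n+1)
            - h * (((↑(n+1) : ℝ) / z) * (φ a * I ^ n - I ^ (n+1)))))
        = ∫ r in Ioo (0:ℝ) 1, c*z^(-α) * (r^(-1-α)*(1-r)^(α-1)) *
            (T r a - (r/(1-r))*(((n:ℝ)+1)*(φ a * I^n - I^(n+1)))) := by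
      intro a
      have e : EqOn (fun h : ℝ => c * h ^ (-1 - α) *
            (((z + h)⁻¹ * ∫ x, φ x ∂(η + ENNReal.ofReal h • Measure.dirac a)) ^ (n+1)
              - I ^ (n+1)
              - h * (((↑(n+1) : ℝ) / z) * (φ a * I ^ n - I ^ (n+1)))))
          (fun h : ℝ => c * h^(-1-α) * (((z+h)⁻¹*(z*I + h*φ a))^(n+1) - I^(n+1)
              - h*((((n:ℝ)+1))/z * (φ a * I^n - I^(n+1))))) (Ioi (0:ℝ)) := by
        intro h hh
        simp only []
        rw [P3 h (le_of_lt hh) a]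
        push_cast
        ring
      rw [setIntegral_congr_fun measurableSet_Ioi e, cov_integral z hzpos]
      apply setIntegral_congr_fun measurableSet_Ioo
      intro r hr
      obtain ⟨h0, h1⟩ := hr
      have h1r : (0:ℝ) < 1 - r := by linarith
      simp only []
      have hsum : z + z*r/(1-r) = z/(1-r) := by field_simp; ring
      have hmix : (z/(1-r))⁻¹ * (z*I + (z*r/(1-r))*φ a) = (1-r)*I + r*φ a := by
        field_simp
      rw [hsum, hmix, show z/(1-r)^2 * (c * (z*r/(1-r))^(-1-α) *
            (((1-r)*I + r*φ a)^(n+1) - I^(n+1)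
              - (z*r/(1-r))*((((n:ℝ)+1))/z * (φ a * I^n - I^(n+1)))))
          = (z/(1-r)^2 * (z*r/(1-r))^(-(1+α))) * (c *
            (((1-r)*I + r*φ a)^(n+1) - I^(n+1)
              - (z*r/(1-r))*((((n:ℝ)+1))/z * (φ a * I^n - I^(n+1)))))
          from by rw [show (-(1+α)) = -1-α by ring]; ring,
        cov_rpow_alg z r (1+α) hzpos h0 h1,
        show (1-(1+α)) = -α by ring, show (-(1+α)) = -1-α by ring,
        show ((1+α)-2) = α-1 by ring]
      simp only [hTdef]
      field_simp
    have E2 : (∫ a, (∫ h in Ioi (0:ℝ), c * h ^ (-1 - α) *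
          (((z + h)⁻¹ * ∫ x, φ x ∂(η + ENNReal.ofReal h • Measure.dirac a)) ^ (n+1)
            - I ^ (n+1)
            - h * (((↑(n+1) : ℝ) / z) * (φ a * I ^ n - I ^ (n+1))))) ∂η)
        = c*z^(1-α) * ∫ r in Ioo (0:ℝ) 1, r^(-1-α)*(1-r)^(α-1) * S r := by
      rw [integral_congr_ae (Filter.Eventually.of_forall e2a)]
      rw [MeasureTheory.integral_integral_swap (f := fun (a : unitInterval) (r : ℝ) =>
        c*z^(-α) * (r^(-1-α)*(1-r)^(α-1)) *
          (T r a - (r/(1-r))*(((n:ℝ)+1)*(φ a * I^n - I^(n+1))))) hg5int]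
      rw [← integral_const_mul]
      apply setIntegral_congr_fun measurableSet_Ioo
      intro r hr
      obtain ⟨h0, h1⟩ := hr
      simp only []
      rw [integral_const_mul, hInner r h0 h1]
      have hzs : z^(-α) * z = z^(1-α) := by
        rw [show (1-α) = -α+1 by ring, rpow_split_one z hzpos]
      rw [← hzs]
      ring
    have E3 : (∫ r in Ioo (0:ℝ) 1, r ^ (-α) * (1 - r) ^ (α - 2) *
          ((∫ x, φ x ∂(ENNReal.ofReal (1 - r) • ρ
            + ENNReal.ofReal r • Measure.dirac (0 : unitInterval))) ^ (n+1) - I ^ (n+1)))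
        = ∫ r in Ioo (0:ℝ) 1, r^(-α)*(1-r)^(α-2)*T r 0 := by
      apply setIntegral_congr_fun measurableSet_Ioo
      intro r hr
      simp only [hTdef]
      rw [P2 r hr.1.le hr.2.le 0]
    have E4 : (∫ r in Ioo (0:ℝ) 1, r ^ (-1 - α) * (1 - r) ^ (α - 1) *
          ∫ a, ((∫ x, φ x ∂(ENNReal.ofReal (1 - r) • ρ
            + ENNReal.ofReal r • Measure.dirac a)) ^ (n+1) - I ^ (n+1)) ∂ρ)
        = ∫ r in Ioo (0:ℝ) 1, r^(-1-α)*(1-r)^(α-1) * S r := by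
      apply setIntegral_congr_fun measurableSet_Ioo
      intro r hr
      simp only [hSdef]
      congr 1
      apply integral_congr_ae
      refine Filter.Eventually.of_forall fun a => ?_
      simp only [hTdef]
      rw [P2 r hr.1.le hr.2.le a]
    rw [E1, E2, E3, E4]
    rw [show z^(α-1) * (c'*z^(1-α) * (∫ r in Ioo (0:ℝ) 1, r^(-α)*(1-r)^(α-2)*T r 0)
          + c*z^(1-α) * (∫ r in Ioo (0:ℝ) 1, r^(-1-α)*(1-r)^(α-1) * S r))
        = (z^(α-1)*z^(1-α)) * (c' * (∫ r in Ioo (0:ℝ) 1, r^(-α)*(1-r)^(α-2)*T r 0)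
          + c * (∫ r in Ioo (0:ℝ) 1, r^(-1-α)*(1-r)^(α-1) * S r)) by ring, hzz, one_mul]
end

section
/- Let ρ be a probability measure on [0,1], let p ≥ 1 be an integer, let g : [0,1]^p → ℝ be bounded measurable and symmetric, and let r ∈ [0,1]. Then | ∫₀¹ ( ∫ g d((1−r)·ρ + r·δ_a)^{⊗p} − ∫ g dρ^{⊗p} ) ρ(da) | ≤ 2^{p+1}·‖g‖_∞·r², where ‖g‖_∞ is the supremum norm of g. -/
open MeasureTheory Real Set ENNReal

namespace Stmt11Aux

variable {α : Type*} [MeasurableSpace α] {p : ℕ}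

/-- Replace the coordinates selected by `s` with `a`. -/
def blend (s : Fin p → Bool) (a : α) (x : Fin p → α) : Fin p → α :=
  fun i => if s i then a else x i

lemma measurable_blend (s : Fin p → Bool) :
    Measurable (fun q : α × (Fin p → α) => blend s q.1 q.2) := by
  apply measurable_pi_lambda
  intro i
  cases h : s i
  · simpa [blend, h, Function.comp_def] using (measurable_pi_apply i).comp measurable_snd
  · simpa [blend, h] using measurable_fst

lemma measurable_blend' (s : Fin p → Bool) (a : α) :
    Measurable (blend s a) :=
  (measurable_blend s).comp (measurable_const.prodMk measurable_id)

lemma pi_mix (ρ : Measure α) [IsProbabilityMeasure ρ] (a : α) (s : Fin p → Bool)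
    (u v : ℝ≥0∞) (hu : u ≠ ∞) (hv : v ≠ ∞) :
    Measure.pi (fun i => if s i then u • Measure.dirac a else v • ρ)
      = (∏ i, if s i then u else v) • Measure.map (blend s a) (Measure.pi fun _ : Fin p => ρ) := by
  classical
  haveI : ∀ i : Fin p, SigmaFinite (if s i then u • Measure.dirac a else v • ρ) := by
    intro i
    cases h : s i <;> simp only [h, if_true, if_false, Bool.false_eq_true] <;>
      exact @IsFiniteMeasure.toSigmaFinite _ _ _ (Measure.smul_finite _ (by assumption))
  refine Measure.pi_eq (fun A hA => ?_)
  rw [Measure.smul_apply, Measure.map_apply (measurable_blend' s a) (MeasurableSet.univ_pi hA)]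
  have hpre : blend s a ⁻¹' (Set.pi univ A) =
      Set.pi univ (fun i => if s i then (if a ∈ A i then univ else (∅ : Set α)) else A i) := by
    ext x
    simp only [Set.mem_preimage, Set.mem_pi, Set.mem_univ, forall_true_left, blend]
    refine forall_congr' fun i => ?_
    cases h : s i <;> by_cases ha : a ∈ A i <;> simp [h, ha]
  rw [hpre, Measure.pi_pi, smul_eq_mul, ← Finset.prod_mul_distrib]
  refine Finset.prod_congr rfl fun i _ => ?_
  cases h : s i
  · simp [h]
  · by_cases ha : a ∈ A i <;>
      simp [h, ha, Measure.smul_apply, Measure.dirac_apply' a (hA i), Set.indicator]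

lemma pi_add (κ lam : Measure α) [IsFiniteMeasure κ] [IsFiniteMeasure lam] :
    Measure.pi (fun _ : Fin p => κ + lam)
      = ∑ s : Fin p → Bool, Measure.pi (fun i => if s i then lam else κ) := by
  classical
  refine Measure.pi_eq (fun A hA => ?_)
  rw [Measure.finset_sum_apply]
  have h1 : ∀ s : Fin p → Bool,
      Measure.pi (fun i => if s i then lam else κ) (Set.pi univ A)
        = ∏ i, (fun i (b : Bool) => if b then lam (A i) else κ (A i)) i (s i) := by
    intro s
    haveI : ∀ i : Fin p, SigmaFinite (if s i then lam else κ) := by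
      intro i; cases h : s i <;> simp only [h, if_true, if_false, Bool.false_eq_true] <;>
        infer_instance
    rw [Measure.pi_pi]
    exact Finset.prod_congr rfl fun i _ => by cases h : s i <;> simp [h]
  simp only [h1]
  rw [← Fintype.prod_sum (fun i (b : Bool) => if b then lam (A i) else κ (A i))]
  exact Finset.prod_congr rfl fun i _ => by rw [Fintype.sum_bool]; simp [add_comm]

lemma integrable_of_bound {β : Type*} [MeasurableSpace β] (μ : Measure β) [IsFiniteMeasure μ]
    (f : β → ℝ) (hf : Measurable f) (C : ℝ) (hfb : ∀ x, |f x| ≤ C) : Integrable f μ :=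
  (integrable_const C).mono' hf.aestronglyMeasurable
    (ae_of_all _ fun x => by simpa [Real.norm_eq_abs] using hfb x)

lemma integral_mix (ρ : Measure α) [IsProbabilityMeasure ρ] (a : α)
    (g : (Fin p → α) → ℝ) (hgm : Measurable g) (C : ℝ) (hgb : ∀ x, |g x| ≤ C)
    (r : ℝ) (hr0 : 0 ≤ r) (hr1 : r ≤ 1) :
    ∫ x, g x ∂(Measure.pi fun _ : Fin p =>
        ENNReal.ofReal (1 - r) • ρ + ENNReal.ofReal r • Measure.dirac a)
      = ∑ s : Fin p → Bool, (∏ i, if s i then r else 1 - r)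
          * ∫ x, g (blend s a x) ∂(Measure.pi fun _ : Fin p => ρ) := by
  classical
  haveI h1 : IsFiniteMeasure (ENNReal.ofReal (1 - r) • ρ) :=
    Measure.smul_finite _ ENNReal.ofReal_ne_top
  haveI h2 : IsFiniteMeasure (ENNReal.ofReal r • Measure.dirac a) :=
    Measure.smul_finite _ ENNReal.ofReal_ne_top
  have hW : ∀ s : Fin p → Bool,
      (∏ i, if s i then ENNReal.ofReal r else ENNReal.ofReal (1 - r))
        = ENNReal.ofReal (∏ i, if s i then r else 1 - r) := by
    intro s
    calc (∏ i, if s i then ENNReal.ofReal r else ENNReal.ofReal (1 - r))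
        = ∏ i, ENNReal.ofReal (if s i then r else 1 - r) :=
          Finset.prod_congr rfl fun i _ => by cases h : s i <;> simp [h]
      _ = ENNReal.ofReal (∏ i, if s i then r else 1 - r) :=
          (ENNReal.ofReal_prod_of_nonneg fun i _ => by
            cases h : s i <;> simp [h, hr0, sub_nonneg.2 hr1]).symm
  have hmix : ∀ s : Fin p → Bool,
      Measure.pi (fun i => if s i then ENNReal.ofReal r • Measure.dirac a
          else ENNReal.ofReal (1 - r) • ρ)
        = ENNReal.ofReal (∏ i, if s i then r else 1 - r)
            • Measure.map (blend s a) (Measure.pi fun _ : Fin p => ρ) := by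
    intro s
    rw [← hW s]
    exact pi_mix ρ a s _ _ ENNReal.ofReal_ne_top ENNReal.ofReal_ne_top
  have hint : ∀ s : Fin p → Bool,
      Integrable g (Measure.map (blend s a) (Measure.pi fun _ : Fin p => ρ)) := by
    intro s
    refine (integrable_map_measure hgm.aestronglyMeasurable
      (measurable_blend' s a).aemeasurable).2 ?_
    exact integrable_of_bound _ _ (hgm.comp (measurable_blend' s a)) C (fun x => hgb _)
  rw [pi_add (ENNReal.ofReal (1 - r) • ρ) (ENNReal.ofReal r • Measure.dirac a)]
  rw [show (fun s : Fin p → Bool => Measure.pi fun i =>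
        if s i then ENNReal.ofReal r • Measure.dirac a else ENNReal.ofReal (1 - r) • ρ)
      = fun s : Fin p → Bool => ENNReal.ofReal (∏ i, if s i then r else 1 - r)
          • Measure.map (blend s a) (Measure.pi fun _ : Fin p => ρ) from funext hmix]
  rw [integral_finset_sum_measure (fun s _ =>
    ((hint s).smul_measure ENNReal.ofReal_ne_top))]
  refine Finset.sum_congr rfl fun s _ => ?_
  rw [integral_smul_measure, integral_map (measurable_blend' s a).aemeasurable
    hgm.aestronglyMeasurable, smul_eq_mul,
    ENNReal.toReal_ofReal (Finset.prod_nonneg fun i _ => by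
      cases h : s i <;> simp [h, hr0, sub_nonneg.2 hr1])]

lemma measurable_updatePair (i₀ : Fin p) :
    Measurable (fun q : α × (Fin p → α) => Function.update q.2 i₀ q.1) := by
  apply measurable_pi_lambda
  intro i
  by_cases h : i = i₀
  · subst h; simpa only [Function.update_self] using measurable_fst
  · simp only [Function.update_apply, h, if_false]
    exact (measurable_pi_apply i).comp measurable_snd

lemma map_update_prod (ρ : Measure α) [IsProbabilityMeasure ρ] (i₀ : Fin p) :
    Measure.map (fun q : α × (Fin p → α) => Function.update q.2 i₀ q.1)
      (ρ.prod (Measure.pi fun _ : Fin p => ρ)) = Measure.pi (fun _ : Fin p => ρ) := by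
  classical
  refine (Measure.pi_eq fun A hA => ?_).symm
  rw [Measure.map_apply (measurable_updatePair i₀) (MeasurableSet.univ_pi hA)]
  have hpre : (fun q : α × (Fin p → α) => Function.update q.2 i₀ q.1) ⁻¹' (Set.pi univ A)
      = A i₀ ×ˢ Set.pi univ (fun i => if i = i₀ then univ else A i) := by
    ext q
    simp only [Set.mem_preimage, Set.mem_pi, Set.mem_univ, forall_true_left, Set.mem_prod,
      Function.update_apply]
    constructor
    · intro h
      refine ⟨by simpa using h i₀, fun i => ?_⟩
      by_cases hi : i = i₀
      · simp [hi]
      · simpa [hi] using h i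
    · rintro ⟨h0, h⟩ i
      by_cases hi : i = i₀
      · subst hi; simpa using h0
      · simpa [hi] using h i
  rw [hpre, Measure.prod_prod, Measure.pi_pi,
    ← Finset.mul_prod_erase Finset.univ (fun i => ρ (A i)) (Finset.mem_univ i₀),
    ← Finset.mul_prod_erase Finset.univ
      (fun i => ρ (if i = i₀ then univ else A i)) (Finset.mem_univ i₀)]
  have h0 : ρ (if i₀ = i₀ then univ else A i₀) = 1 := by simp
  rw [h0, one_mul]
  exact congrArg (fun z => ρ (A i₀) * z) (Finset.prod_congr rfl fun i hi => by
    rw [if_neg (Finset.ne_of_mem_erase hi)])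

lemma integral_update (ρ : Measure α) [IsProbabilityMeasure ρ] (i₀ : Fin p)
    (g : (Fin p → α) → ℝ) (hgm : Measurable g) (C : ℝ) (hgb : ∀ x, |g x| ≤ C) :
    ∫ a, ∫ x, g (Function.update x i₀ a) ∂(Measure.pi fun _ : Fin p => ρ) ∂ρ
      = ∫ x, g x ∂(Measure.pi fun _ : Fin p => ρ) := by
  conv_rhs => rw [← map_update_prod ρ i₀]
  rw [integral_map (measurable_updatePair i₀).aemeasurable hgm.aestronglyMeasurable]
  exact (integral_prod _ (integrable_of_bound _ _
    (hgm.comp (measurable_updatePair i₀)) C (fun q => hgb _))).symm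

end Stmt11Aux

open Stmt11Aux

/-- Bound from the proof of Lemma 5.1 (reproduction part): after integrating the sampled
individual `a` with respect to `ρ`, the first-order term of the mixture expansion vanishes and
`|∫ (∫ g d((1−r)ρ + rδ_a)^{⊗p} − ∫ g dρ^{⊗p}) ρ(da)| ≤ 2^{p+1} ‖g‖_∞ r²`. -/
theorem stmt11 (ρ : Measure unitInterval) [IsProbabilityMeasure ρ]
    (p : ℕ) (hp : 1 ≤ p)
    (g : (Fin p → unitInterval) → ℝ) (hgm : Measurable g)
    (C : ℝ) (hgb : ∀ x, |g x| ≤ C)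
    (hsym : ∀ σ : Equiv.Perm (Fin p), ∀ x : Fin p → unitInterval, g (x ∘ σ) = g x)
    (r : ℝ) (hr : r ∈ Icc (0:ℝ) 1) :
    |∫ a, ((∫ x, g x ∂(Measure.pi fun _ : Fin p =>
          ENNReal.ofReal (1 - r) • ρ + ENNReal.ofReal r • Measure.dirac a))
        - ∫ x, g x ∂(Measure.pi fun _ : Fin p => ρ)) ∂ρ|
      ≤ 2 ^ (p + 1) * C * r ^ 2 := by
  classical
  obtain ⟨hr0, hr1⟩ := hr
  have hr1' : 0 ≤ 1 - r := sub_nonneg.2 hr1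
  have hC0 : 0 ≤ C := le_trans (abs_nonneg _) (hgb fun _ => 0)
  have hrsq : 0 ≤ r ^ 2 := sq_nonneg r
  set W : (Fin p → Bool) → ℝ := fun s => ∏ i, if s i then r else 1 - r with hWdef
  have hW0 : ∀ s, 0 ≤ W s := fun s => Finset.prod_nonneg fun i _ => by
    cases h : s i <;> simp [h, hr0, hr1']
  have hsumW : (∑ s : Fin p → Bool, W s) = 1 := by
    calc (∑ s : Fin p → Bool, W s)
        = ∏ i : Fin p, ∑ b : Bool, (if b then r else 1 - r) :=
          (Fintype.prod_sum (fun (i : Fin p) (b : Bool) => if b then r else 1 - r)).symm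
      _ = 1 := Finset.prod_eq_one fun i _ => by rw [Fintype.sum_bool]; norm_num
  -- abbreviations
  have hHms : ∀ s : Fin p → Bool, StronglyMeasurable
      (fun a : unitInterval => ∫ x, g (blend s a x) ∂(Measure.pi fun _ : Fin p => ρ)) := by
    intro s
    exact (hgm.comp (measurable_blend s)).stronglyMeasurable.integral_prod_right'
  have hHb : ∀ (s : Fin p → Bool) (a : unitInterval),
      |∫ x, g (blend s a x) ∂(Measure.pi fun _ : Fin p => ρ)| ≤ C := by
    intro s a
    have := norm_integral_le_of_norm_le_const
      (μ := (Measure.pi fun _ : Fin p => ρ)) (f := fun x => g (blend s a x)) (C := C)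
      (ae_of_all _ fun x => by simpa [Real.norm_eq_abs] using hgb _)
    simpa [Real.norm_eq_abs, measure_univ] using this
  have hHint : ∀ s : Fin p → Bool, Integrable
      (fun a : unitInterval => ∫ x, g (blend s a x) ∂(Measure.pi fun _ : Fin p => ρ)) ρ := by
    intro s
    exact (integrable_const C).mono' (hHms s).aestronglyMeasurable
      (ae_of_all _ fun a => by simpa [Real.norm_eq_abs] using hHb s a)
  have hF0b : |∫ x, g x ∂(Measure.pi fun _ : Fin p => ρ)| ≤ C := by
    have := norm_integral_le_of_norm_le_const
      (μ := (Measure.pi fun _ : Fin p => ρ)) (f := g) (C := C)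
      (ae_of_all _ fun x => by simpa [Real.norm_eq_abs] using hgb _)
    simpa [Real.norm_eq_abs, measure_univ] using this
  -- pointwise expansion in `a`
  have hstep : ∀ a : unitInterval,
      (∫ x, g x ∂(Measure.pi fun _ : Fin p =>
          ENNReal.ofReal (1 - r) • ρ + ENNReal.ofReal r • Measure.dirac a))
        - (∫ x, g x ∂(Measure.pi fun _ : Fin p => ρ))
      = ∑ s : Fin p → Bool, W s *
          ((∫ x, g (blend s a x) ∂(Measure.pi fun _ : Fin p => ρ))
            - ∫ x, g x ∂(Measure.pi fun _ : Fin p => ρ)) := by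
    intro a
    rw [integral_mix ρ a g hgm C hgb r hr0 hr1]
    simp only [mul_sub]
    rw [Finset.sum_sub_distrib, ← Finset.sum_mul, hsumW, one_mul]
  -- exchange sum and outer integral
  have key : (∫ a, ((∫ x, g x ∂(Measure.pi fun _ : Fin p =>
          ENNReal.ofReal (1 - r) • ρ + ENNReal.ofReal r • Measure.dirac a))
        - ∫ x, g x ∂(Measure.pi fun _ : Fin p => ρ)) ∂ρ)
      = ∑ s : Fin p → Bool, W s *
          ((∫ a, (∫ x, g (blend s a x) ∂(Measure.pi fun _ : Fin p => ρ)) ∂ρ)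
            - ∫ x, g x ∂(Measure.pi fun _ : Fin p => ρ)) := by
    rw [integral_congr_ae (ae_of_all _ hstep)]
    rw [integral_finset_sum Finset.univ
      (f := fun (s : Fin p → Bool) (a : unitInterval) => W s *
        ((∫ x, g (blend s a x) ∂(Measure.pi fun _ : Fin p => ρ))
          - ∫ x, g x ∂(Measure.pi fun _ : Fin p => ρ)))
      (fun s _ => (((hHint s).sub (integrable_const _)).const_mul (W s)))]
    refine Finset.sum_congr rfl fun s _ => ?_
    rw [integral_const_mul, integral_sub (hHint s) (integrable_const _), integral_const,
      probReal_univ, one_smul]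
  rw [key]
  -- per-term bound
  have hterm : ∀ s : Fin p → Bool, |W s *
      ((∫ a, (∫ x, g (blend s a x) ∂(Measure.pi fun _ : Fin p => ρ)) ∂ρ)
        - ∫ x, g x ∂(Measure.pi fun _ : Fin p => ρ))| ≤ 2 * C * r ^ 2 := by
    intro s
    by_cases h0 : ∀ i, s i = false
    · have hb : ∀ (a : unitInterval) (x : Fin p → unitInterval), blend s a x = x := by
        intro a x; funext i; simp [blend, h0 i]
      simp only [hb]
      rw [integral_const, probReal_univ, one_smul]
      simp only [sub_self, mul_zero, abs_zero]
      exact mul_nonneg (mul_nonneg (by norm_num : (0:ℝ) ≤ 2) hC0) hrsq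
    · push_neg at h0
      obtain ⟨i₀, hi₀⟩ := h0
      rw [Bool.ne_false_iff] at hi₀
      by_cases h1 : ∀ i, s i = true → i = i₀
      · -- exactly one selected coordinate: first-order term vanishes
        have hb : ∀ (a : unitInterval) (x : Fin p → unitInterval),
            blend s a x = Function.update x i₀ a := by
          intro a x; funext i
          rcases eq_or_ne i i₀ with hi | hi
          · subst hi; simp [blend, hi₀]
          · have hsf : s i = false := by
              cases h : s i
              · rfl
              · exact absurd (h1 i h) hi
            simp [blend, hsf, Function.update_apply, hi]
        simp only [hb]
        rw [integral_update ρ i₀ g hgm C hgb]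
        simp only [sub_self, mul_zero, abs_zero]
        exact mul_nonneg (mul_nonneg (by norm_num : (0:ℝ) ≤ 2) hC0) hrsq
      · push_neg at h1
        obtain ⟨i₁, hi₁, hne⟩ := h1
        have hWle : W s ≤ r ^ 2 := by
          have hsub : ({i₀, i₁} : Finset (Fin p)) ⊆ Finset.univ := Finset.subset_univ _
          calc W s = (∏ i ∈ Finset.univ \ {i₀, i₁}, if s i then r else 1 - r)
                * ∏ i ∈ ({i₀, i₁} : Finset (Fin p)), if s i then r else 1 - r :=
                (Finset.prod_sdiff hsub).symm
            _ ≤ 1 * ∏ i ∈ ({i₀, i₁} : Finset (Fin p)), if s i then r else 1 - r := by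
                refine mul_le_mul_of_nonneg_right
                  (Finset.prod_le_one (fun i _ => by cases h : s i <;> simp [h, hr0, hr1'])
                    (fun i _ => by cases h : s i <;> simp [h, hr1, sub_le_self _ hr0]))
                  (Finset.prod_nonneg fun i _ => by cases h : s i <;> simp [h, hr0, hr1'])
            _ = r ^ 2 := by
                rw [one_mul, Finset.prod_pair (Ne.symm hne), hi₀, hi₁]
                simp [sq]
        have hD : |(∫ a, (∫ x, g (blend s a x) ∂(Measure.pi fun _ : Fin p => ρ)) ∂ρ)
            - ∫ x, g x ∂(Measure.pi fun _ : Fin p => ρ)| ≤ 2 * C := by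
          have hIb : |∫ a, (∫ x, g (blend s a x) ∂(Measure.pi fun _ : Fin p => ρ)) ∂ρ| ≤ C := by
            have := norm_integral_le_of_norm_le_const (μ := ρ)
              (f := fun a => ∫ x, g (blend s a x) ∂(Measure.pi fun _ : Fin p => ρ)) (C := C)
              (ae_of_all _ fun a => by simpa [Real.norm_eq_abs] using hHb s a)
            simpa [Real.norm_eq_abs, measure_univ] using this
          refine le_trans (abs_sub _ _) ?_
          linarith [hIb, hF0b]
        rw [abs_mul, abs_of_nonneg (hW0 s)]
        refine le_trans (mul_le_mul hWle hD (abs_nonneg _) hrsq) (le_of_eq (by ring))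
  calc |∑ s : Fin p → Bool, W s *
          ((∫ a, (∫ x, g (blend s a x) ∂(Measure.pi fun _ : Fin p => ρ)) ∂ρ)
            - ∫ x, g x ∂(Measure.pi fun _ : Fin p => ρ))|
      ≤ ∑ s : Fin p → Bool, |W s *
          ((∫ a, (∫ x, g (blend s a x) ∂(Measure.pi fun _ : Fin p => ρ)) ∂ρ)
            - ∫ x, g x ∂(Measure.pi fun _ : Fin p => ρ))| := Finset.abs_sum_le_sum_abs _ _
    _ ≤ ∑ _s : Fin p → Bool, 2 * C * r ^ 2 := Finset.sum_le_sum fun s _ => hterm s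
    _ = 2 ^ (p + 1) * C * r ^ 2 := by
        rw [Finset.sum_const, Finset.card_univ]
        simp only [Fintype.card_fun, Fintype.card_bool, Fintype.card_fin, smul_eq_mul]
        rw [pow_succ]
        ring
end

section
/- Let ρ be a probability measure on [0,1], let p ≥ 1 be an integer, let g : [0,1]^p → ℝ be bounded measurable and symmetric, and let r ∈ [0,1]. Then | ∫ g d((1−r)·ρ + r·δ₀)^{⊗p} − ∫ g dρ^{⊗p} | ≤ 2^{p+1}·‖g‖_∞·r, where ‖g‖_∞ is the supremum norm of g. -/
open MeasureTheory Real Set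

/-- Bound from the proof of Lemma 5.1 (immigration part):
`|∫ g d((1−r)ρ + rδ₀)^{⊗p} − ∫ g dρ^{⊗p}| ≤ 2^{p+1} ‖g‖_∞ r`. -/
theorem stmt12 (ρ : Measure unitInterval) [IsProbabilityMeasure ρ]
    (p : ℕ) (hp : 1 ≤ p)
    (g : (Fin p → unitInterval) → ℝ) (hgm : Measurable g)
    (C : ℝ) (hgb : ∀ x, |g x| ≤ C)
    (hsym : ∀ σ : Equiv.Perm (Fin p), ∀ x : Fin p → unitInterval, g (x ∘ σ) = g x)
    (r : ℝ) (hr : r ∈ Icc (0:ℝ) 1) :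
    |(∫ x, g x ∂(Measure.pi fun _ : Fin p =>
          ENNReal.ofReal (1 - r) • ρ + ENNReal.ofReal r • Measure.dirac (0 : unitInterval)))
        - ∫ x, g x ∂(Measure.pi fun _ : Fin p => ρ)|
      ≤ 2 ^ (p + 1) * C * r := by
  obtain ⟨hr0, hr1⟩ := hr
  have h1r : (0:ℝ) ≤ 1 - r := by linarith
  have hC : 0 ≤ C := le_trans (abs_nonneg _) (hgb fun _ => 0)
  set a : Measure unitInterval := ENNReal.ofReal r • Measure.dirac (0 : unitInterval) with ha
  set b : Measure unitInterval := ENNReal.ofReal (1 - r) • ρ with hb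
  haveI hFa : IsFiniteMeasure a := by
    constructor; simp [ha]
  haveI hFb : IsFiniteMeasure b := by
    constructor; simp [hb]
  haveI hPba : IsProbabilityMeasure (b + a) := by
    constructor
    simp only [Measure.add_apply, Measure.smul_apply, measure_univ, smul_eq_mul, mul_one, ha, hb]
    rw [← ENNReal.ofReal_add h1r hr0]
    simp
  have hfactor : ∀ (t : Finset (Fin p)) (i : Fin p),
      IsFiniteMeasure (if i ∈ t then a else b) := by
    intro t i; by_cases h : i ∈ t <;> simp only [h, if_true, if_false] <;> infer_instance
  set ν : Finset (Fin p) → Measure (Fin p → unitInterval) :=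
    fun t => Measure.pi (fun i => if i ∈ t then a else b) with hν
  have hνfin : ∀ t, IsFiniteMeasure (ν t) := by
    intro t
    haveI := hfactor t
    exact MeasureTheory.Measure.pi.instIsFiniteMeasure _
  -- decomposition of the product measure
  have hdec : (Measure.pi fun _ : Fin p => b + a) = ∑ t : Finset (Fin p), ν t := by
    refine Measure.pi_eq fun s hs => ?_
    rw [Measure.finset_sum_apply]
    have hbox : ∀ t : Finset (Fin p), ν t (Set.pi univ s)
        = (∏ i ∈ t, a (s i)) * ∏ i ∈ tᶜ, b (s i) := by
      intro t
      haveI := hfactor t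
      rw [hν, Measure.pi_pi]
      have h : ∀ i, (if i ∈ t then a else b) (s i) = if i ∈ t then a (s i) else b (s i) :=
        fun i => by split <;> rfl
      simp_rw [h]
      rw [Finset.prod_ite]
      simp [Finset.compl_eq_univ_sdiff, Finset.filter_mem_eq_inter, Finset.filter_not]
    simp_rw [hbox]
    rw [← Fintype.prod_add]
    simp [Measure.add_apply, add_comm]
  -- the empty-set term
  have hν₀ : ν ∅ = ENNReal.ofReal ((1 - r) ^ p) • Measure.pi (fun _ : Fin p => ρ) := by
    have he : (fun i : Fin p => if i ∈ (∅ : Finset (Fin p)) then a else b) = fun _ => b := by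
      funext i; simp
    rw [hν]
    simp only []
    rw [he]
    refine Measure.pi_eq fun s hs => ?_
    rw [Measure.smul_apply, Measure.pi_pi]
    simp only [hb, Measure.smul_apply, smul_eq_mul]
    rw [Finset.prod_mul_distrib, Finset.prod_const, ENNReal.ofReal_pow h1r]
    simp [mul_comm]
  -- integrability
  have hint : ∀ (m : Measure (Fin p → unitInterval)) [IsFiniteMeasure m], Integrable g m := by
    intro m hm
    exact ⟨hgm.aestronglyMeasurable, HasFiniteIntegral.of_bounded (C := C)
      (Filter.Eventually.of_forall fun x => by simpa [Real.norm_eq_abs] using hgb x)⟩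
  -- masses
  set m : Finset (Fin p) → ℝ := fun t => (ν t univ).toReal with hm
  have hm0 : ∀ t, 0 ≤ m t := fun t => ENNReal.toReal_nonneg
  have hmsum : ∑ t : Finset (Fin p), m t = 1 := by
    have h1 : (∑ t : Finset (Fin p), ν t) univ = 1 := by
      rw [← hdec]
      haveI : IsProbabilityMeasure (Measure.pi fun _ : Fin p => b + a) :=
        MeasureTheory.Measure.pi.instIsProbabilityMeasure _
      exact measure_univ
    rw [Measure.finset_sum_apply] at h1
    rw [hm, ← ENNReal.toReal_sum (fun t _ => (hνfin t).measure_univ_lt_top.ne)]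
    rw [h1]; simp
  have hmempty : m ∅ = (1 - r) ^ p := by
    show ((ν ∅) univ).toReal = _
    rw [hν₀]
    simp [ENNReal.toReal_ofReal (pow_nonneg h1r p)]
  -- integral identities and bounds
  set I : ℝ := ∫ x, g x ∂(Measure.pi fun _ : Fin p => ρ) with hI
  have hIb : |I| ≤ C := by
    have := norm_integral_le_of_norm_le_const (μ := Measure.pi fun _ : Fin p => ρ)
      (C := C) (f := g) (Filter.Eventually.of_forall fun x => by
        simpa [Real.norm_eq_abs] using hgb x)
    simpa [Real.norm_eq_abs] using this
  have hsplit : (∫ x, g x ∂(Measure.pi fun _ : Fin p => b + a))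
      = ∑ t : Finset (Fin p), ∫ x, g x ∂(ν t) := by
    rw [hdec]
    exact integral_finset_sum_measure (fun t _ => by haveI := hνfin t; exact hint _)
  have hempty : (∫ x, g x ∂(ν ∅)) = (1 - r) ^ p * I := by
    rw [hν₀, integral_smul_measure, ENNReal.toReal_ofReal (pow_nonneg h1r p)]
    rfl
  have ht : ∀ t, |∫ x, g x ∂(ν t)| ≤ C * m t := by
    intro t
    haveI := hνfin t
    have := norm_integral_le_of_norm_le_const (μ := ν t) (C := C) (f := g)
      (Filter.Eventually.of_forall fun x => by simpa [Real.norm_eq_abs] using hgb x)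
    simpa [Real.norm_eq_abs, hm, measureReal_def] using this
  -- combine
  have hsum' : ∑ t : Finset (Fin p), ∫ x, g x ∂(ν t)
      = (1 - r) ^ p * I + ∑ t ∈ Finset.univ.erase ∅, ∫ x, g x ∂(ν t) := by
    rw [← hempty]
    exact (Finset.add_sum_erase _ (fun t => ∫ x, g x ∂(ν t)) (Finset.mem_univ ∅)).symm
  have hmer : ∑ t ∈ Finset.univ.erase ∅, m t = 1 - (1 - r) ^ p := by
    have := Finset.add_sum_erase Finset.univ m (Finset.mem_univ ∅)
    rw [hmsum] at this
    rw [← hmempty]; linarith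
  have hpow1 : (1 - r) ^ p ≤ 1 := pow_le_one₀ h1r (by linarith)
  have hber : 1 - (p : ℝ) * r ≤ (1 - r) ^ p := by
    have := one_add_mul_le_pow (a := -r) (by linarith) p
    have h' : (1 : ℝ) + -r = 1 - r := by ring
    rw [h'] at this
    linarith
  have hS : |∑ t ∈ Finset.univ.erase ∅, ∫ x, g x ∂(ν t)| ≤ C * (1 - (1 - r) ^ p) := by
    calc |∑ t ∈ Finset.univ.erase ∅, ∫ x, g x ∂(ν t)|
        ≤ ∑ t ∈ Finset.univ.erase ∅, |∫ x, g x ∂(ν t)| := Finset.abs_sum_le_sum_abs _ _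
      _ ≤ ∑ t ∈ Finset.univ.erase ∅, C * m t := Finset.sum_le_sum fun t _ => ht t
      _ = C * (1 - (1 - r) ^ p) := by rw [← Finset.mul_sum, hmer]
  have hmain : |(∫ x, g x ∂(Measure.pi fun _ : Fin p => b + a)) - I|
      ≤ 2 * C * (1 - (1 - r) ^ p) := by
    rw [hsplit, hsum']
    have e : (1 - r) ^ p * I + (∑ t ∈ Finset.univ.erase ∅, ∫ x, g x ∂(ν t)) - I
        = ((1 - r) ^ p - 1) * I + ∑ t ∈ Finset.univ.erase ∅, ∫ x, g x ∂(ν t) := by ring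
    rw [e]
    calc |((1 - r) ^ p - 1) * I + ∑ t ∈ Finset.univ.erase ∅, ∫ x, g x ∂(ν t)|
        ≤ |((1 - r) ^ p - 1) * I| + |∑ t ∈ Finset.univ.erase ∅, ∫ x, g x ∂(ν t)| :=
          abs_add_le _ _
      _ ≤ (1 - (1 - r) ^ p) * C + C * (1 - (1 - r) ^ p) := by
          refine add_le_add ?_ hS
          rw [abs_mul]
          have : |(1 - r) ^ p - 1| = 1 - (1 - r) ^ p := by
            rw [abs_sub_comm, abs_of_nonneg (by linarith)]
          rw [this]
          exact mul_le_mul_of_nonneg_left hIb (by linarith)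
      _ = 2 * C * (1 - (1 - r) ^ p) := by ring
  have hp2 : (p : ℝ) ≤ 2 ^ p := by exact_mod_cast (Nat.lt_two_pow_self (n := p)).le
  calc |(∫ x, g x ∂(Measure.pi fun _ : Fin p => b + a)) - I|
      ≤ 2 * C * (1 - (1 - r) ^ p) := hmain
    _ ≤ 2 * C * ((p : ℝ) * r) := by
        apply mul_le_mul_of_nonneg_left _ (by linarith)
        linarith
    _ ≤ 2 ^ (p + 1) * C * r := by
        rw [pow_succ]
        have h1 : 2 * C * ((p : ℝ) * r) = 2 * ((p:ℝ) * (C * r)) := by ring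
        have h2 : (2:ℝ) ^ p * 2 * C * r = 2 * ((2:ℝ)^p * (C * r)) := by ring
        rw [h1, h2]
        have hcr : 0 ≤ C * r := mul_nonneg hC hr0
        nlinarith [mul_le_mul_of_nonneg_right hp2 hcr]
end

section
/- Let Λ₀ and Λ₁ be finite measures on [0,1]. There exists a finite measure Λ on [0,1] satisfying both (A) for all integers n ≥ 2 and all 2 ≤ k ≤ n: ∫₀¹ x^{k−2}(1−x)^{n−k} Λ₁(dx) = ∫₀¹ x^{k−2}(1−x)^{n+1−k} Λ(dx), and (B) for all integers n ≥ 1 and all 1 ≤ k ≤ n: ∫₀¹ x^{k−1}(1−x)^{n−k} Λ₀(dx) = ∫₀¹ x^{k−1}(1−x)^{n−k} Λ(dx), if and only if Λ₁ is the measure with density x ↦ (1−x) with respect to Λ₀ (i.e. Λ₁(dx) = (1−x)Λ₀(dx)); and in that case necessarily Λ = Λ₀. -/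
open MeasureTheory Real Set
open scoped NNReal ENNReal

lemma int_cm (μ : Measure unitInterval) [IsFiniteMeasure μ] (f : C(unitInterval, ℝ)) :
    Integrable (fun x => f x) μ := by
  exact (BoundedContinuousFunction.mkOfCompact f).integrable (μ := μ)

lemma int_mono (μ : Measure unitInterval) [IsFiniteMeasure μ] (a b : ℕ) :
    Integrable (fun x : unitInterval => (x : ℝ) ^ a * (1 - (x : ℝ)) ^ b) μ :=
  int_cm μ ⟨fun x => (x : ℝ) ^ a * (1 - (x : ℝ)) ^ b, by fun_prop⟩

lemma cont_int (μ : Measure unitInterval) [IsFiniteMeasure μ] :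
    Continuous fun f : C(unitInterval, ℝ) => ∫ x, f x ∂μ := by
  have : LipschitzWith (μ Set.univ).toNNReal (fun f : C(unitInterval, ℝ) => ∫ x, f x ∂μ) := by
    apply LipschitzWith.of_dist_le_mul
    intro f g
    rw [dist_eq_norm, ← integral_sub (int_cm μ f) (int_cm μ g)]
    have : ‖∫ x, (f x - g x) ∂μ‖ ≤ dist f g * (μ Set.univ).toReal := by
      apply norm_integral_le_of_norm_le_const
      filter_upwards with x
      rw [Real.norm_eq_abs, ← Real.dist_eq]
      exact ContinuousMap.dist_apply_le_dist x
    calc ‖∫ x, (f x - g x) ∂μ‖ ≤ dist f g * (μ Set.univ).toReal := this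
      _ = ((μ Set.univ).toNNReal : ℝ) * dist f g := by
          rw [ENNReal.coe_toNNReal_eq_toReal]; ring
  exact this.continuous

lemma ext_of_moments (μ ν : Measure unitInterval) [IsFiniteMeasure μ] [IsFiniteMeasure ν]
    (h : ∀ m : ℕ, ∫ x, (x : ℝ) ^ m ∂μ = ∫ x, (x : ℝ) ^ m ∂ν) : μ = ν := by
  have hpoly : ∀ p : Polynomial ℝ, ∫ x, p.eval (x : ℝ) ∂μ = ∫ x, p.eval (x : ℝ) ∂ν := by
    intro p
    have hi : ∀ (κ : Measure unitInterval) (_ : IsFiniteMeasure κ) (i : ℕ),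
        Integrable (fun x : unitInterval => p.coeff i * (x : ℝ) ^ i) κ := by
      intro κ hκ i
      exact (int_cm κ ⟨fun x => (x : ℝ) ^ i, by fun_prop⟩).const_mul _
    simp_rw [Polynomial.eval_eq_sum_range]
    rw [integral_finset_sum _ (fun i _ => hi μ inferInstance i),
        integral_finset_sum _ (fun i _ => hi ν inferInstance i)]
    refine Finset.sum_congr rfl fun i _ => ?_
    rw [integral_const_mul, integral_const_mul, h i]
  have hC : ∀ f : C(unitInterval, ℝ), ∫ x, f x ∂μ = ∫ x, f x ∂ν := by
    intro f
    have hclosed : IsClosed {g : C(unitInterval, ℝ) | ∫ x, g x ∂μ = ∫ x, g x ∂ν} :=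
      isClosed_eq (cont_int μ) (cont_int ν)
    have hsub : (polynomialFunctions unitInterval : Set C(unitInterval, ℝ)) ⊆
        {g : C(unitInterval, ℝ) | ∫ x, g x ∂μ = ∫ x, g x ∂ν} := by
      rw [polynomialFunctions_coe]
      rintro g ⟨p, rfl⟩
      simpa using hpoly p
    have hmem : f ∈ closure (polynomialFunctions unitInterval : Set C(unitInterval, ℝ)) := by
      have := polynomialFunctions.topologicalClosure unitInterval
      have h2 : ((polynomialFunctions unitInterval).topologicalClosure : Set C(unitInterval, ℝ))
          = closure (polynomialFunctions unitInterval : Set C(unitInterval, ℝ)) := rfl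
      rw [this] at h2
      rw [← h2]; trivial
    exact hclosed.closure_subset_iff.mpr hsub hmem
  apply ext_of_forall_lintegral_eq_of_IsFiniteMeasure
  intro f
  have hf := hC ⟨fun x => (f x : ℝ), by fun_prop⟩
  have h1 := BoundedContinuousFunction.toReal_lintegral_coe_eq_integral f μ
  have h2 := BoundedContinuousFunction.toReal_lintegral_coe_eq_integral f ν
  have h3 : (∫⁻ x, f x ∂μ).toReal = (∫⁻ x, f x ∂ν).toReal := by
    rw [h1, h2]; exact hf
  exact (ENNReal.toReal_eq_toReal_iff' (f.lintegral_lt_top_of_nnreal μ).ne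
    (f.lintegral_lt_top_of_nnreal ν).ne).mp h3

lemma wd_int (μ : Measure unitInterval) [IsFiniteMeasure μ] (g : unitInterval → ℝ) :
    ∫ x, g x ∂(μ.withDensity fun x => ENNReal.ofReal (1 - (x : ℝ))) =
      ∫ x, (1 - (x : ℝ)) * g x ∂μ := by
  have hm : Measurable fun x : unitInterval => (1 - (x : ℝ)).toNNReal := by
    measurability
  have heq : (fun x : unitInterval => ENNReal.ofReal (1 - (x : ℝ))) =
      fun x : unitInterval => (((1 - (x : ℝ)).toNNReal : ℝ≥0) : ℝ≥0∞) := rfl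
  rw [heq, integral_withDensity_eq_integral_smul hm]
  refine integral_congr_ae (Filter.Eventually.of_forall fun x => ?_)
  have hx : (0 : ℝ) ≤ 1 - (x : ℝ) := by have := x.2.2; linarith
  simp [NNReal.smul_def, Real.coe_toNNReal _ hx]

lemma fin_wd (μ : Measure unitInterval) [IsFiniteMeasure μ] :
    IsFiniteMeasure (μ.withDensity fun x => ENNReal.ofReal (1 - (x : ℝ))) := by
  constructor
  rw [withDensity_apply _ MeasurableSet.univ, setLIntegral_univ]
  calc ∫⁻ x, ENNReal.ofReal (1 - (x : ℝ)) ∂μ ≤ ∫⁻ _, 1 ∂μ := by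
        refine lintegral_mono fun x => ENNReal.ofReal_le_one.mpr ?_
        have := x.2.1; linarith
    _ = μ Set.univ := lintegral_one
    _ < ⊤ := measure_lt_top μ Set.univ


/-- Lemma 4.1 of the paper (measure-theoretic content): there is a finite measure `Λ` on `[0,1]`
matching the M-coalescent jump rates, i.e. satisfying
(A) `∫ x^{k−2}(1−x)^{n−k} Λ₁(dx) = ∫ x^{k−2}(1−x)^{n+1−k} Λ(dx)` for all `2 ≤ k ≤ n`, and
(B) `∫ x^{k−1}(1−x)^{n−k} Λ₀(dx) = ∫ x^{k−1}(1−x)^{n−k} Λ(dx)` for all `1 ≤ k ≤ n`,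
if and only if `Λ₁(dx) = (1−x)Λ₀(dx)`; and any such `Λ` necessarily equals `Λ₀`. -/
theorem stmt14 (Λ₀ Λ₁ : Measure unitInterval)
    [IsFiniteMeasure Λ₀] [IsFiniteMeasure Λ₁] :
    ((∃ Λ : Measure unitInterval, IsFiniteMeasure Λ ∧
        (∀ n : ℕ, 2 ≤ n → ∀ k : ℕ, 2 ≤ k → k ≤ n →
          ∫ x, ((x : ℝ) ^ (k - 2) * (1 - (x : ℝ)) ^ (n - k)) ∂Λ₁ =
          ∫ x, ((x : ℝ) ^ (k - 2) * (1 - (x : ℝ)) ^ (n + 1 - k)) ∂Λ) ∧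
        (∀ n : ℕ, 1 ≤ n → ∀ k : ℕ, 1 ≤ k → k ≤ n →
          ∫ x, ((x : ℝ) ^ (k - 1) * (1 - (x : ℝ)) ^ (n - k)) ∂Λ₀ =
          ∫ x, ((x : ℝ) ^ (k - 1) * (1 - (x : ℝ)) ^ (n - k)) ∂Λ)) ↔
      Λ₁ = Λ₀.withDensity (fun x => ENNReal.ofReal (1 - (x : ℝ))))
    ∧ (∀ Λ : Measure unitInterval, IsFiniteMeasure Λ →
        (∀ n : ℕ, 2 ≤ n → ∀ k : ℕ, 2 ≤ k → k ≤ n →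
          ∫ x, ((x : ℝ) ^ (k - 2) * (1 - (x : ℝ)) ^ (n - k)) ∂Λ₁ =
          ∫ x, ((x : ℝ) ^ (k - 2) * (1 - (x : ℝ)) ^ (n + 1 - k)) ∂Λ) →
        (∀ n : ℕ, 1 ≤ n → ∀ k : ℕ, 1 ≤ k → k ≤ n →
          ∫ x, ((x : ℝ) ^ (k - 1) * (1 - (x : ℝ)) ^ (n - k)) ∂Λ₀ =
          ∫ x, ((x : ℝ) ^ (k - 1) * (1 - (x : ℝ)) ^ (n - k)) ∂Λ) →
        Λ = Λ₀) := by
  have key : ∀ Λ : Measure unitInterval, IsFiniteMeasure Λ →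
      (∀ n : ℕ, 1 ≤ n → ∀ k : ℕ, 1 ≤ k → k ≤ n →
          ∫ x, ((x : ℝ) ^ (k - 1) * (1 - (x : ℝ)) ^ (n - k)) ∂Λ₀ =
          ∫ x, ((x : ℝ) ^ (k - 1) * (1 - (x : ℝ)) ^ (n - k)) ∂Λ) → Λ = Λ₀ := by
    intro Λ hfin hB
    haveI := hfin
    apply ext_of_moments
    intro m
    have h := hB (m + 1) (by omega) (m + 1) (by omega) le_rfl
    rw [show m + 1 - 1 = m from by omega, show m + 1 - (m + 1) = 0 from by omega] at h
    simp only [pow_zero, mul_one] at h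
    exact h.symm
  constructor
  · constructor
    · rintro ⟨Λ, hfin, hA, hB⟩
      haveI := hfin
      haveI := fin_wd Λ₀
      have hΛ : Λ = Λ₀ := key Λ hfin hB
      apply ext_of_moments
      intro m
      have h := hA (m + 2) (by omega) (m + 2) (by omega) le_rfl
      rw [show m + 2 - 2 = m from by omega, show m + 2 - (m + 2) = 0 from by omega,
        show m + 2 + 1 - (m + 2) = 1 from by omega] at h
      simp only [pow_zero, mul_one, pow_one] at h
      rw [h, hΛ, wd_int]
      refine integral_congr_ae (Filter.Eventually.of_forall fun x => ?_)
      ring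
    · rintro rfl
      haveI := fin_wd Λ₀
      refine ⟨Λ₀, inferInstance, ?_, fun n _ k _ _ => rfl⟩
      intro n hn k hk hkn
      rw [wd_int, show n + 1 - k = (n - k) + 1 from by omega]
      refine integral_congr_ae (Filter.Eventually.of_forall fun x => ?_)
      ring
  · exact fun Λ hfin _ hB => key Λ hfin hB
end
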